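/- arXiv:1106.2424 — 6 statements merged into one kernel-verified Lean document; each statement's English description precedes it below -/
import Mathlib

section
/- Let (W,S) be a Coxeter system and let I be a subset of S. The following three conditions are equivalent: (a) the standard parabolic subgroup W_I generated by I is finite; (b) there exists an element w of W such that l(sw) < l(w) for all s in I; (c) there exists an element w of W such that l(ws) < l(w) for all s in I. -/
namespace CoxAux

open List CoxeterSystem

variable {B W : Type*} [Group W] {M : CoxeterMatrix B} (cs : CoxeterSystem M W)

local prefix:100 "s" => cs.simple
local prefix:100 "π" => cs.wordProd
local prefix:100 "ℓ" => cs.length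

open Classical in
/-- The basic involution of `W × ℤˣ` attached to a simple reflection. -/
noncomputable def sgm (i : B) : Equiv.Perm (W × ℤˣ) :=
  Function.Involutive.toPerm
    (fun x => (s i * x.1 * s i, if x.1 = s i then -x.2 else x.2))
    (by
      rintro ⟨t, ε⟩
      have h1 : s i * (s i * t * s i) * s i = t := by
        have hs := cs.simple_mul_simple_self i
        calc s i * (s i * t * s i) * s i = (s i * s i) * t * (s i * s i) := by group
        _ = t := by rw [hs]; group
      have h2 : (s i * t * s i = s i) ↔ (t = s i) := by
        constructor
        · intro h
          have := congrArg (fun x => s i * x * s i) h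
          simpa [h1, cs.simple_mul_simple_self i] using this
        · rintro rfl
          rw [cs.simple_mul_simple_self i, one_mul]
      simp only [Prod.mk.injEq]
      refine ⟨h1, ?_⟩
      by_cases h : t = s i
      · simp [h, h2.mpr h]
      · simp [h, h2, if_neg])

open Classical in
theorem sgm_apply (i : B) (t : W) (ε : ℤˣ) :
    sgm cs i (t, ε) = (s i * t * s i, if t = s i then -ε else ε) := rfl

open Classical in
theorem prod_map_sgm (ω : List B) (t : W) (ε : ℤˣ) :
    (ω.map (sgm cs)).prod (t, ε) =
      (π ω * t * (π ω)⁻¹, ((-1 : ℤˣ) ^ ((cs.rightInvSeq ω).count t)) * ε) := by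
  induction ω generalizing t ε with
  | nil => simp
  | cons i ω ih =>
    rw [List.map_cons, List.prod_cons, Equiv.Perm.mul_apply, ih, sgm_apply]
    have hfst : s i * (π ω * t * (π ω)⁻¹) * s i = π (i :: ω) * t * (π (i :: ω))⁻¹ := by
      rw [cs.wordProd_cons, mul_inv_rev, cs.inv_simple]
      group
    have hcond : (π ω * t * (π ω)⁻¹ = s i) ↔ (t = (π ω)⁻¹ * s i * π ω) := by
      constructor
      · intro h; rw [← h]; group
      · intro h; rw [h]; group
    have hris : cs.rightInvSeq (i :: ω) = ((π ω)⁻¹ * s i * π ω) :: cs.rightInvSeq ω := rfl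
    rw [hris]
    simp only [Prod.mk.injEq]
    refine ⟨hfst, ?_⟩
    by_cases h : t = (π ω)⁻¹ * s i * π ω
    · rw [if_pos (hcond.mpr h), List.count_cons, if_pos (beq_iff_eq.mpr h.symm), pow_succ,
        mul_neg_one, neg_mul]
    · rw [if_neg (fun hc => h (hcond.mp hc)), List.count_cons,
        if_neg (by simp only [beq_iff_eq]; exact fun he => h he.symm), Nat.add_zero]

/-- The alternating word `[i, j, i, j, ...]` of length `2 * m`. -/
def altw (i j : B) : ℕ → List B
  | 0 => []
  | m + 1 => i :: j :: altw i j m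

private theorem sj_pow (i j : B) (m : ℕ) :
    s j * (s i * s j) ^ m = (s j * s i) ^ m * s j := by
  induction m with
  | zero => simp
  | succ m ih =>
    rw [pow_succ, ← mul_assoc, ih, pow_succ]
    group

theorem wordProd_altw (i j : B) (m : ℕ) : π (altw i j m) = (s i * s j) ^ m := by
  induction m with
  | zero => simp [altw]
  | succ m ih =>
    rw [altw, cs.wordProd_cons, cs.wordProd_cons, ih, pow_succ']
    group

theorem prod_map_sgm_altw (i j : B) (m : ℕ) :
    ((altw i j m).map (sgm cs)).prod = (sgm cs i * sgm cs j) ^ m := by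
  induction m with
  | zero => simp [altw]
  | succ m ih =>
    rw [altw, List.map_cons, List.map_cons, List.prod_cons, List.prod_cons, ih, pow_succ',
      mul_assoc]

theorem ris_altw (i j : B) (m : ℕ) :
    cs.rightInvSeq (altw i j (m + 1)) =
      ((s j * s i) ^ (2 * m + 1) * s j) :: ((s j * s i) ^ (2 * m) * s j) ::
        cs.rightInvSeq (altw i j m) := by
  have hpinv : (π (altw i j m))⁻¹ = (s j * s i) ^ m := by
    rw [wordProd_altw, ← inv_pow, mul_inv_rev, cs.inv_simple, cs.inv_simple]
  have hX : π (j :: altw i j m) = (s j * s i) ^ m * s j := by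
    rw [cs.wordProd_cons, wordProd_altw, sj_pow]
  have hXinv : (π (j :: altw i j m))⁻¹ = s j * (s i * s j) ^ m := by
    rw [hX, mul_inv_rev, cs.inv_simple, ← inv_pow, mul_inv_rev, cs.inv_simple, cs.inv_simple]
  have h2 : cs.rightInvSeq (j :: altw i j m) =
      ((π (altw i j m))⁻¹ * s j * π (altw i j m)) :: cs.rightInvSeq (altw i j m) := rfl
  have h1 : cs.rightInvSeq (i :: j :: altw i j m) =
      ((π (j :: altw i j m))⁻¹ * s i * π (j :: altw i j m)) ::
        cs.rightInvSeq (j :: altw i j m) := rfl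
  show cs.rightInvSeq (i :: j :: altw i j m) = _
  rw [h1, h2]
  congr 1
  · rw [hXinv, hX]
    calc s j * (s i * s j) ^ m * s i * ((s j * s i) ^ m * s j)
        = s j * ((s i * s j) ^ m * s i * (s j * s i) ^ m) * s j := by group
      _ = s j * (s i * ((s j * s i) ^ m * (s j * s i) ^ m)) * s j := by
          rw [← sj_pow cs j i]; group
      _ = (s j * s i) ^ (2 * m + 1) * s j := by
          rw [← pow_add, show m + m = 2 * m from (two_mul m).symm, pow_succ']; group
  · congr 1
    rw [hpinv, wordProd_altw, mul_assoc, sj_pow, ← mul_assoc, ← pow_add,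
      show m + m = 2 * m from (two_mul m).symm]

open Classical in
theorem count_ris_altw (i j : B) (m : ℕ) (t : W) :
    (cs.rightInvSeq (altw i j m)).count t
      = (((List.range (2 * m)).map (fun r => (s j * s i) ^ r * s j)).count t) := by
  induction m with
  | zero => simp [altw]
  | succ m ih =>
    rw [ris_altw, show 2 * (m + 1) = (2 * m + 1) + 1 from by ring, List.range_succ,
      List.range_succ, List.map_append, List.map_append, List.count_append, List.count_append,
      List.count_cons, List.count_cons, ih]
    simp only [List.map_singleton, List.count_singleton]

open Classical in
theorem count_ris_altw_even (i j : B) (t : W) :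
    Even ((cs.rightInvSeq (altw i j (M i j))).count t) := by
  rw [count_ris_altw]
  have hdm : (s j * s i) ^ (M i j) = 1 := cs.simple_mul_simple_pow' i j
  rw [two_mul, List.range_add, List.map_append, List.count_append]
  have : (List.map (fun r => (s j * s i) ^ r * s j) (List.map (fun r => M i j + r)
      (List.range (M i j)))) = List.map (fun r => (s j * s i) ^ r * s j)
        (List.range (M i j)) := by
    rw [List.map_map]
    refine List.map_congr_left fun r _ => ?_
    simp only [Function.comp_apply, pow_add, hdm, one_mul]
  rw [this]
  exact ⟨_, rfl⟩

theorem sgm_liftable : M.IsLiftable (sgm cs) := by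
  intro i j
  rw [← prod_map_sgm_altw cs i j (M i j)]
  apply Equiv.ext
  rintro ⟨t, ε⟩
  rw [prod_map_sgm, wordProd_altw, cs.simple_mul_simple_pow i j,
    (count_ris_altw_even cs i j t).neg_one_pow]
  simp

/-- The permutation representation of `W` on `W × ℤˣ`. -/
noncomputable def rho : W →* Equiv.Perm (W × ℤˣ) := cs.lift ⟨sgm cs, sgm_liftable cs⟩

theorem rho_simple (i : B) : rho cs (s i) = sgm cs i :=
  cs.lift_apply_simple (sgm_liftable cs) i

theorem rho_wordProd (ω : List B) : rho cs (π ω) = (ω.map (sgm cs)).prod := by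
  rw [show π ω = (ω.map cs.simple).prod from rfl, map_list_prod (rho cs), List.map_map]
  exact congrArg _ (List.map_congr_left fun i _ => rho_simple cs i)

/-- The sign cocycle. -/
noncomputable def eta (w t : W) : ℤˣ := ((rho cs w) (t, 1)).2

open Classical in
theorem eta_wordProd (ω : List B) (t : W) :
    eta cs (π ω) t = (-1 : ℤˣ) ^ ((cs.rightInvSeq ω).count t) := by
  unfold eta
  rw [rho_wordProd, prod_map_sgm, mul_one]

theorem rho_apply (w t : W) (ε : ℤˣ) :
    rho cs w (t, ε) = (w * t * w⁻¹, eta cs w t * ε) := by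
  obtain ⟨ω, rfl⟩ := cs.wordProd_surjective w
  classical
  rw [rho_wordProd, prod_map_sgm, eta_wordProd]

theorem eta_mul (a b t : W) : eta cs (a * b) t = eta cs b t * eta cs a (b * t * b⁻¹) := by
  have h : rho cs (a * b) (t, 1) = rho cs a (rho cs b (t, 1)) := by
    rw [map_mul]; rfl
  rw [rho_apply, rho_apply, rho_apply] at h
  have h2 := congrArg Prod.snd h
  simp only [mul_one] at h2
  rw [h2]
  exact mul_comm _ _

open Classical in
theorem eta_simple (i : B) (t : W) :
    eta cs (s i) t = if t = s i then -1 else 1 := by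
  classical
  unfold eta
  rw [rho_simple, sgm_apply]

theorem eta_self {t : W} (ht : cs.IsReflection t) : eta cs t t = -1 := by
  obtain ⟨u, c, rfl⟩ := ht
  obtain ⟨υ, rfl⟩ := cs.wordProd_surjective u
  induction υ with
  | nil => simp [eta_simple]
  | cons d υ ih =>
    set t₀ := π υ * s c * (π υ)⁻¹ with ht₀
    have hform : π (d :: υ) * s c * (π (d :: υ))⁻¹ = s d * t₀ * s d := by
      rw [cs.wordProd_cons, mul_inv_rev, cs.inv_simple, ht₀]
      group
    rw [hform]
    set t := s d * t₀ * s d with htdef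
    have e1 : eta cs t t = eta cs (s d) t * eta cs (s d * t₀) (s d * t * s d) := by
      have : t = (s d * t₀) * s d := by rw [htdef]
      nth_rewrite 1 [this]
      rw [eta_mul]
      congr 2
      rw [cs.inv_simple]
    have hst : s d * t * s d = t₀ := by
      rw [htdef]
      calc s d * (s d * t₀ * s d) * s d = (s d * s d) * t₀ * (s d * s d) := by group
        _ = t₀ := by rw [cs.simple_mul_simple_self]; group
    have e2 : eta cs (s d * t₀) t₀ = eta cs t₀ t₀ * eta cs (s d) t₀ := by
      rw [eta_mul]
      congr 2
      group
    rw [e1, hst, e2, ih]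
    have hiff : (t = s d) ↔ (t₀ = s d) := by
      constructor
      · intro h
        have := congrArg (fun x => s d * x * s d) h
        beta_reduce at this
        rw [hst] at this
        rw [this]
        calc s d * s d * s d = (s d * s d) * s d := by group
          _ = s d := by rw [cs.simple_mul_simple_self]; group
      · intro h
        rw [htdef, h]
        calc s d * s d * s d = (s d * s d) * s d := by group
          _ = s d := by rw [cs.simple_mul_simple_self]; group
    rw [eta_simple, eta_simple]
    by_cases h : t₀ = s d
    · rw [if_pos h, if_pos (hiff.mpr h)]; decide
    · rw [if_neg h, if_neg (fun hc => h (hiff.mp hc))]; decide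

theorem length_mul_lt_of_eta_eq_neg_one {w t : W} (h : eta cs w t = -1) :
    ℓ (w * t) < ℓ w := by
  classical
  obtain ⟨ω, hred, rfl⟩ := cs.exists_reduced_word' w
  rw [eta_wordProd] at h
  have hodd : Odd ((cs.rightInvSeq ω).count t) := by
    by_contra hc
    rw [Nat.not_odd_iff_even] at hc
    rw [hc.neg_one_pow] at h
    exact (by decide : ¬ ((1 : ℤˣ) = -1)) h
  have hmem : t ∈ cs.rightInvSeq ω := by
    rw [← List.count_pos_iff]
    rcases hodd with ⟨k, hk⟩
    omega
  exact (cs.isRightInversion_of_mem_rightInvSeq hred hmem).2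

theorem eta_eq_neg_one_iff {w t : W} (ht : cs.IsReflection t) :
    eta cs w t = -1 ↔ ℓ (w * t) < ℓ w := by
  constructor
  · exact length_mul_lt_of_eta_eq_neg_one cs
  · intro hlt
    rcases Int.units_eq_one_or (eta cs w t) with h | h
    · exfalso
      have hwt : eta cs (w * t) t = -1 := by
        have e : eta cs w t = eta cs t t * eta cs (w * t) (t * t * t⁻¹) := by
          nth_rewrite 1 [show w = (w * t) * t from by rw [mul_assoc, ht.mul_self, mul_one]]
          rw [eta_mul]
        rw [eta_self cs ht, show t * t * t⁻¹ = t from by group, h] at e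
        have := congrArg (fun x => (-1 : ℤˣ) * x) e
        simpa using this.symm
      have := length_mul_lt_of_eta_eq_neg_one cs hwt
      rw [mul_assoc, ht.mul_self, mul_one] at this
      omega
    · exact h

/-- The set of right inversions of `w`. -/
def invSet (w : W) : Set W := {t | cs.IsRightInversion w t}

theorem mem_invSet_iff {w t : W} :
    t ∈ invSet cs w ↔ cs.IsReflection t ∧ ℓ (w * t) < ℓ w := Iff.rfl

theorem mem_invSet_iff_eta {w t : W} (ht : cs.IsReflection t) :
    t ∈ invSet cs w ↔ eta cs w t = -1 := by
  rw [mem_invSet_iff, eta_eq_neg_one_iff cs ht]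
  exact ⟨fun h => h.2, fun h => ⟨ht, h⟩⟩

theorem invSet_one : invSet cs (1 : W) = ∅ := by
  ext t
  simp only [mem_invSet_iff, Set.mem_empty_iff_false, iff_false, not_and]
  intro _
  simp

theorem invSet_finite (w : W) : (invSet cs w).Finite := by
  classical
  obtain ⟨ω, hred, rfl⟩ := cs.exists_reduced_word' w
  apply Set.Finite.subset (List.finite_toSet (cs.rightInvSeq ω))
  intro t ht
  have heta : eta cs (π ω) t = -1 := (mem_invSet_iff_eta cs ht.1).mp ht
  rw [eta_wordProd] at heta
  show t ∈ cs.rightInvSeq ω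
  have hodd : Odd ((cs.rightInvSeq ω).count t) := by
    by_contra hc
    rw [Nat.not_odd_iff_even] at hc
    rw [hc.neg_one_pow] at heta
    exact (by decide : ¬ ((1 : ℤˣ) = -1)) heta
  rw [← List.count_pos_iff]
  rcases hodd with ⟨k, hk⟩
  omega

theorem eta_eq_of_invSet_eq {u v : W} (h : invSet cs u = invSet cs v) {t : W}
    (ht : cs.IsReflection t) : eta cs u t = eta cs v t := by
  rcases Int.units_eq_one_or (eta cs u t) with h1 | h1 <;>
    rcases Int.units_eq_one_or (eta cs v t) with h2 | h2 <;>
      rw [h1, h2]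
  · exfalso
    have : t ∈ invSet cs v := (mem_invSet_iff_eta cs ht).mpr h2
    rw [← h] at this
    rw [(mem_invSet_iff_eta cs ht).mp this] at h1
    exact (by decide : ¬ ((-1 : ℤˣ) = 1)) h1
  · exfalso
    have : t ∈ invSet cs u := (mem_invSet_iff_eta cs ht).mpr h1
    rw [h] at this
    rw [(mem_invSet_iff_eta cs ht).mp this] at h2
    exact (by decide : ¬ ((-1 : ℤˣ) = 1)) h2

theorem eq_of_invSet_eq : ∀ n (u v : W), ℓ u = n → invSet cs u = invSet cs v → u = v := by
  intro n
  induction n using Nat.strong_induction_on with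
  | _ n ih =>
    intro u v hn h
    by_cases hu : u = 1
    · subst hu
      by_contra hv
      obtain ⟨i, hi⟩ := cs.exists_rightDescent_of_ne_one (fun hv1 => hv hv1.symm)
      have : s i ∈ invSet cs v :=
        ⟨cs.isReflection_simple i, hi⟩
      rw [← h, invSet_one] at this
      exact this
    · obtain ⟨i, hi⟩ := cs.exists_rightDescent_of_ne_one hu
      have heq : invSet cs (u * s i) = invSet cs (v * s i) := by
        ext t
        by_cases ht : cs.IsReflection t
        · rw [mem_invSet_iff_eta cs ht, mem_invSet_iff_eta cs ht]
          have hconj : cs.IsReflection (s i * t * (s i)⁻¹) := ht.conj (s i)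
          rw [eta_mul cs u (s i) t, eta_mul cs v (s i) t,
            eta_eq_of_invSet_eq cs h hconj]
        · simp only [mem_invSet_iff]
          exact ⟨fun hc => absurd hc.1 ht, fun hc => absurd hc.1 ht⟩
      have hlt : ℓ (u * s i) < n := by rw [← hn]; exact hi
      have := ih (ℓ (u * s i)) hlt (u * s i) (v * s i) rfl heq
      exact mul_right_cancel this

theorem exchange {ω : List B} (hred : cs.IsReduced ω) {i : B}
    (hd : cs.IsRightDescent (π ω) i) :
    ∃ k, k < ω.length ∧ π ω * s i = π (ω.eraseIdx k) := by
  classical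
  have heta : eta cs (π ω) (s i) = -1 :=
    (eta_eq_neg_one_iff cs (cs.isReflection_simple i)).mpr hd
  rw [eta_wordProd] at heta
  have hodd : Odd ((cs.rightInvSeq ω).count (s i)) := by
    by_contra hc
    rw [Nat.not_odd_iff_even] at hc
    rw [hc.neg_one_pow] at heta
    exact (by decide : ¬ ((1 : ℤˣ) = -1)) heta
  have hmem : s i ∈ cs.rightInvSeq ω := by
    rw [← List.count_pos_iff]
    rcases hodd with ⟨k, hk⟩
    omega
  obtain ⟨k, hk, hval⟩ := List.mem_iff_getElem.mp hmem
  rw [cs.length_rightInvSeq] at hk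
  refine ⟨k, hk, ?_⟩
  have : (cs.rightInvSeq ω).getD k 1 = s i := by
    rw [List.getD_eq_getElem _ _ (by rwa [cs.length_rightInvSeq])]
    exact hval
  rw [← this]
  exact cs.wordProd_mul_getD_rightInvSeq ω k

theorem deletion {ω : List B} (h : ¬ cs.IsReduced ω) :
    ∃ ω' : List B, ω'.length + 2 = ω.length ∧ π ω' = π ω ∧ ∀ b ∈ ω', b ∈ ω := by
  classical
  have hex : ∃ n, ¬ cs.IsReduced (ω.take n) := ⟨ω.length, by simpa [List.take_length] using h⟩
  have hn0 : Nat.find hex ≠ 0 := by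
    intro h0
    have hsp := Nat.find_spec hex
    rw [h0] at hsp
    exact hsp (by simp [CoxeterSystem.IsReduced])
  obtain ⟨j, hj1⟩ : ∃ j, Nat.find hex = j + 1 := ⟨Nat.find hex - 1, by omega⟩
  have hnP : ¬ cs.IsReduced (ω.take (j + 1)) := hj1 ▸ Nat.find_spec hex
  have hj : cs.IsReduced (ω.take j) := by
    by_contra hc
    exact Nat.find_min hex (by rw [hj1]; omega) hc
  have hjlen : j < ω.length := by
    by_contra hc
    push_neg at hc
    rw [List.take_of_length_le (by omega), ← List.take_of_length_le hc] at hnP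
    exact hnP hj
  have htake : ω.take (j + 1) = ω.take j ++ [ω[j]] := by
    rw [List.take_succ, List.getElem?_eq_getElem hjlen]
    rfl
  have hltake : (ω.take j).length = j := by
    rw [List.length_take]
    omega
  have hlen1 : ℓ (π (ω.take j)) = j := by
    have h2 := hj
    unfold CoxeterSystem.IsReduced at h2
    rw [h2, hltake]
  have hdesc : cs.IsRightDescent (π (ω.take j)) ω[j] := by
    rcases cs.length_mul_simple (π (ω.take j)) ω[j] with hc | hc
    · exfalso
      apply hnP
      unfold CoxeterSystem.IsReduced
      rw [htake, cs.wordProd_append, cs.wordProd_singleton, hc, hlen1, List.length_append,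
        hltake]
      simp
    · unfold CoxeterSystem.IsRightDescent
      omega
  obtain ⟨k, hk, hkeq⟩ := exchange cs hj hdesc
  refine ⟨(ω.take j).eraseIdx k ++ ω.drop (j + 1), ?_, ?_, ?_⟩
  · rw [List.length_append, List.length_eraseIdx, hltake, List.length_drop]
    rw [hltake] at hk
    simp only [hk, if_pos]
    omega
  · rw [cs.wordProd_append, ← hkeq, ← cs.wordProd_singleton, mul_assoc,
      ← cs.wordProd_append, ← cs.wordProd_append, ← List.append_assoc, ← htake,
      List.take_append_drop]
  · intro b hb
    rcases List.mem_append.mp hb with hb | hb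
    · exact List.mem_of_mem_take (List.mem_of_mem_eraseIdx hb)
    · exact List.mem_of_mem_drop hb
theorem exists_word_of_mem_closure {I : Set B} {u : W}
    (h : u ∈ Subgroup.closure (cs.simple '' I)) :
    ∃ ω : List B, (∀ b ∈ ω, b ∈ I) ∧ u = π ω := by
  induction h using Subgroup.closure_induction with
  | mem x hx =>
    obtain ⟨i, hi, rfl⟩ := hx
    exact ⟨[i], by simpa using hi, by simp⟩
  | one => exact ⟨[], by simp, by simp⟩
  | mul x y hx hy ihx ihy =>
    obtain ⟨ω₁, h₁, rfl⟩ := ihx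
    obtain ⟨ω₂, h₂, rfl⟩ := ihy
    exact ⟨ω₁ ++ ω₂, fun b hb => (List.mem_append.mp hb).elim (h₁ b) (h₂ b),
      (cs.wordProd_append ω₁ ω₂).symm⟩
  | inv x hx ihx =>
    obtain ⟨ω, h₁, rfl⟩ := ihx
    exact ⟨ω.reverse, fun b hb => h₁ b (List.mem_reverse.mp hb),
      (cs.wordProd_reverse ω).symm⟩

theorem exists_reduced_word_over {I : Set B} {u : W}
    (h : u ∈ Subgroup.closure (cs.simple '' I)) :
    ∃ ω : List B, (∀ b ∈ ω, b ∈ I) ∧ cs.IsReduced ω ∧ u = π ω := by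
  obtain ⟨ω, hmem, rfl⟩ := exists_word_of_mem_closure cs h
  clear h
  suffices hgen : ∀ n (ω : List B), ω.length = n → (∀ b ∈ ω, b ∈ I) →
      ∃ τ : List B, (∀ b ∈ τ, b ∈ I) ∧ cs.IsReduced τ ∧ π ω = π τ by
    exact hgen ω.length ω rfl hmem
  intro n
  induction n using Nat.strong_induction_on with
  | _ n ih =>
    intro ω hn hmem
    by_cases hred : cs.IsReduced ω
    · exact ⟨ω, hmem, hred, rfl⟩
    · obtain ⟨ω', hlen, hprod, hsub⟩ := deletion cs hred
      obtain ⟨τ, h1, h2, h3⟩ := ih ω'.length (by omega) ω' rfl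
        (fun b hb => hmem b (hsub b hb))
      exact ⟨τ, h1, h2, by rw [← hprod]; exact h3⟩

theorem exists_leftDescent_in {I : Set B} {u : W}
    (h : u ∈ Subgroup.closure (cs.simple '' I)) (hne : u ≠ 1) :
    ∃ i ∈ I, cs.IsLeftDescent u i := by
  obtain ⟨ω, hmem, hred, rfl⟩ := exists_reduced_word_over cs h
  match ω, hmem, hred with
  | [], _, _ => exact absurd (cs.wordProd_nil) hne
  | i :: ω', hmem, hred =>
    refine ⟨i, hmem i (by simp), ?_⟩
    unfold CoxeterSystem.IsLeftDescent
    have h1 : s i * π (i :: ω') = π ω' := by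
      rw [cs.wordProd_cons, ← mul_assoc, cs.simple_mul_simple_self, one_mul]
    rw [h1]
    calc ℓ (π ω') ≤ ω'.length := cs.length_wordProd_le ω'
      _ < (i :: ω').length := by simp
      _ = ℓ (π (i :: ω')) := hred.symm

theorem length_mul_of_descents {I : Set B} {w : W}
    (hw : ∀ i ∈ I, cs.IsRightDescent w i) :
    ∀ u ∈ Subgroup.closure (cs.simple '' I), ℓ (w * u) + ℓ u = ℓ w := by
  suffices h : ∀ n, ∀ u ∈ Subgroup.closure (cs.simple '' I), ℓ u = n →
      ℓ (w * u) + ℓ u = ℓ w by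
    exact fun u hu => h (ℓ u) u hu rfl
  intro n
  induction n using Nat.strong_induction_on with
  | _ n ih =>
    intro u hu hn
    by_cases hone : u = 1
    · subst hone; simp
    · obtain ⟨i, hiI, hdesc⟩ := exists_leftDescent_in cs hu hone
      have hdesc' : ℓ (s i * u) < ℓ u := hdesc
      set u₁ := s i * u with hu₁
      have hu₁mem : u₁ ∈ Subgroup.closure (cs.simple '' I) :=
        mul_mem (Subgroup.subset_closure ⟨i, hiI, rfl⟩) hu
      have hlen1 : ℓ u₁ + 1 = ℓ u := by
        rcases cs.length_simple_mul u i with hc | hc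
        · exfalso
          unfold CoxeterSystem.IsLeftDescent at hdesc
          rw [← hu₁] at hc
          omega
        · rw [← hu₁] at hc; exact hc
      have hIH := ih (ℓ u₁) (by omega) u₁ hu₁mem rfl
      set t := u₁⁻¹ * s i * u₁ with htdef
      have htrefl : cs.IsReflection t := ⟨u₁⁻¹, i, by rw [htdef]; group⟩
      have hconj : u₁ * t * u₁⁻¹ = s i := by rw [htdef]; group
      have hetaw : eta cs w (s i) = -1 :=
        (eta_eq_neg_one_iff cs (cs.isReflection_simple i)).mpr (hw i hiI)
      have hut : u₁ * t = u := by
        have h0 : u₁ * t = s i * u₁ := by rw [htdef]; group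
        rw [h0, hu₁, ← mul_assoc, cs.simple_mul_simple_self, one_mul]
      have hetau : eta cs u₁ t = 1 := by
        rcases Int.units_eq_one_or (eta cs u₁ t) with hc | hc
        · exact hc
        · exfalso
          have := length_mul_lt_of_eta_eq_neg_one cs hc
          rw [hut] at this
          omega
      have heta : eta cs (w * u₁) t = -1 := by
        rw [eta_mul, hconj, hetau, hetaw, one_mul]
      have hlt := length_mul_lt_of_eta_eq_neg_one cs heta
      have hwu : w * u₁ * t = w * u := by rw [mul_assoc, hut]
      rw [hwu] at hlt
      have htri : ℓ w ≤ ℓ (w * u) + ℓ u := by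
        have h1 : ℓ (w * u * u⁻¹) ≤ ℓ (w * u) + ℓ u⁻¹ := cs.length_mul_le (w * u) u⁻¹
        rw [cs.length_inv] at h1
        simpa using h1
      omega

theorem invSet_subset_of_descents {I : Set B} {w : W}
    (hw : ∀ i ∈ I, cs.IsRightDescent w i) {u : W}
    (hu : u ∈ Subgroup.closure (cs.simple '' I)) :
    invSet cs u ⊆ invSet cs w := by
  intro t ht
  obtain ⟨htrefl, hlt⟩ := ht
  refine ⟨htrefl, ?_⟩
  have h1 : ℓ (w * u⁻¹) + ℓ u⁻¹ = ℓ w :=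
    length_mul_of_descents cs hw u⁻¹ (inv_mem hu)
  rw [cs.length_inv] at h1
  have h2 : ℓ (w * t) ≤ ℓ (w * u⁻¹) + ℓ (u * t) := by
    have := cs.length_mul_le (w * u⁻¹) (u * t)
    rw [show w * u⁻¹ * (u * t) = w * t from by group] at this
    exact this
  omega

theorem closure_finite_of_descents {I : Set B} {w : W}
    (hw : ∀ i ∈ I, cs.IsRightDescent w i) :
    ((Subgroup.closure (cs.simple '' I) : Subgroup W) : Set W).Finite := by
  apply Set.Finite.of_finite_image (f := invSet cs)
  · apply Set.Finite.subset ((invSet_finite cs w).finite_subsets)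
    rintro A ⟨u, hu, rfl⟩
    exact invSet_subset_of_descents cs hw hu
  · intro u _ v _ h
    exact eq_of_invSet_eq cs (ℓ u) u v rfl h

theorem exists_descents_of_finite {I : Set B}
    (h : ((Subgroup.closure (cs.simple '' I) : Subgroup W) : Set W).Finite) :
    ∃ w : W, ∀ i ∈ I, cs.IsRightDescent w i := by
  obtain ⟨w, hwmem, hwmax⟩ := Set.Finite.exists_maximalFor cs.length _ h
    ⟨1, Subgroup.one_mem _⟩
  refine ⟨w, fun i hi => ?_⟩
  have hmem : w * s i ∈ (Subgroup.closure (cs.simple '' I) : Subgroup W) :=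
    mul_mem hwmem (Subgroup.subset_closure ⟨i, hi, rfl⟩)
  have hne := cs.length_mul_simple_ne w i
  unfold CoxeterSystem.IsRightDescent
  by_contra hc
  push_neg at hc
  exact hne (le_antisymm (hwmax hmem (by omega)) hc)

end CoxAux

/-- Let `(W, S)` be a Coxeter system and `I ⊆ S` (encoded by a set `I` of
indices of simple reflections). The following are equivalent:
(a) the standard parabolic subgroup `W_I` generated by `I` is finite;
(b) there exists `w ∈ W` with `l(s w) < l(w)` for all `s ∈ I`;
(c) there exists `w ∈ W` with `l(w s) < l(w)` for all `s ∈ I`. -/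
theorem stmt_0 {B W : Type*} [Group W] {M : CoxeterMatrix B} (cs : CoxeterSystem M W)
    (I : Set B) :
    ((Subgroup.closure (cs.simple '' I) : Set W).Finite ↔
      ∃ w : W, ∀ i ∈ I, cs.IsLeftDescent w i) ∧
    ((Subgroup.closure (cs.simple '' I) : Set W).Finite ↔
      ∃ w : W, ∀ i ∈ I, cs.IsRightDescent w i) := by
  have hright : (Subgroup.closure (cs.simple '' I) : Set W).Finite ↔
      ∃ w : W, ∀ i ∈ I, cs.IsRightDescent w i :=
    ⟨CoxAux.exists_descents_of_finite cs,
      fun ⟨w, hw⟩ => CoxAux.closure_finite_of_descents cs hw⟩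
  refine ⟨hright.trans ⟨fun ⟨w, hw⟩ => ⟨w⁻¹, fun i hi => ?_⟩,
    fun ⟨w, hw⟩ => ⟨w⁻¹, fun i hi => ?_⟩⟩, hright⟩
  · exact cs.isLeftDescent_inv_iff.mpr (hw i hi)
  · exact cs.isRightDescent_inv_iff.mpr (hw i hi)
end

section
/- For any w, u, v ∈ W, the structure constant f_{w,u,v} is a polynomial in ξ = q^{1/2} − q^{−1/2} with non-negative integer coefficients, its degree as a polynomial in ξ is at most min{l(w), l(u), l(v)}, and f_{w,u,v} = f_{u,v^{-1},w^{-1}} = f_{v^{-1},w,u^{-1}}. -/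
/-!
The Hecke algebra `H` of a Coxeter system `(W, S)` over `A = ℤ[q^{1/2}, q^{-1/2}]`.
We model `A` as `LaurentPolynomial ℤ`, with the Laurent variable `T 1` playing the role
of `q^{1/2}` (so `q = T 2`).  The Hecke algebra is axiomatized as an `A`-algebra `H`
together with an `A`-basis `TT = (T_w)_{w ∈ W}` satisfying the defining relations
`(T_s - q)(T_s + 1) = 0` and `T_w T_u = T_{wu}` whenever `l(wu) = l(w) + l(u)`
(and `T_1 = 1`).
-/

noncomputable section

/-- `q = (q^{1/2})^2` in `A = ℤ[q^{1/2}, q^{-1/2}]`. -/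
def heckeQ : LaurentPolynomial ℤ := LaurentPolynomial.T 2

/-- `ξ = q^{1/2} - q^{-1/2}` in `A = ℤ[q^{1/2}, q^{-1/2}]`. -/
def heckeXi : LaurentPolynomial ℤ := LaurentPolynomial.T 1 - LaurentPolynomial.T (-1)

variable {B W H : Type*} [Group W] [Ring H] [Algebra (LaurentPolynomial ℤ) H]
  {M : CoxeterMatrix B}

/-- The hypothesis that `TT` is the standard basis `(T_w)_{w ∈ W}` of the Hecke algebra `H`
of the Coxeter system `cs`. -/
def IsHeckeBasis (cs : CoxeterSystem M W) (TT : Module.Basis W (LaurentPolynomial ℤ) H) : Prop :=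
  TT 1 = 1 ∧
  (∀ i : B, (TT (cs.simple i) - algebraMap (LaurentPolynomial ℤ) H heckeQ) *
    (TT (cs.simple i) + 1) = 0) ∧
  (∀ w u : W, cs.length (w * u) = cs.length w + cs.length u → TT w * TT u = TT (w * u))

/-- `T̃_w = q^{-l(w)/2} T_w`. -/
def Ttilde (cs : CoxeterSystem M W) (TT : Module.Basis W (LaurentPolynomial ℤ) H) (w : W) : H :=
  (LaurentPolynomial.T (-(cs.length w : ℤ)) : LaurentPolynomial ℤ) • TT w

/-- The structure constants `f_{w,u,v} ∈ A` defined by `T̃_w T̃_u = Σ_v f_{w,u,v} T̃_v`;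
equivalently, `f_{w,u,v}` is `q^{l(v)/2}` times the coordinate of `T̃_w T̃_u` at `T_v`. -/
def heckeF (cs : CoxeterSystem M W) (TT : Module.Basis W (LaurentPolynomial ℤ) H) (w u v : W) :
    LaurentPolynomial ℤ :=
  (LaurentPolynomial.T (cs.length v : ℤ) : LaurentPolynomial ℤ) *
    TT.repr (Ttilde cs TT w * Ttilde cs TT u) v

end


noncomputable section

open LaurentPolynomial in
lemma T_def' (n : ℤ) : (T n : LaurentPolynomial ℤ) = AddMonoidAlgebra.single n 1 := rfl

open LaurentPolynomial in
lemma mul_T_apply (f : LaurentPolynomial ℤ) (n m : ℤ) : ((f * T n : LaurentPolynomial ℤ)).coeff m = f.coeff (m - n) := by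
  rw [T_def', AddMonoidAlgebra.coeff_mul_single_apply, mul_one, sub_eq_add_neg]

lemma xi_pow_apply (k : ℕ) : ∀ m : ℤ, (k : ℤ) ≤ m →
    (heckeXi ^ k).coeff m = if m = (k : ℤ) then 1 else 0 := by
  induction k with
  | zero =>
    intro m hm
    simp only [pow_zero, Nat.cast_zero]
    rw [show (1 : LaurentPolynomial ℤ) = AddMonoidAlgebra.single 0 1 from rfl,
      AddMonoidAlgebra.coeff_single, Finsupp.single_apply]
    simp [eq_comm]
  | succ k ih =>
    intro m hm
    have h1 : (heckeXi ^ (k+1)).coeff m = (heckeXi ^ k).coeff (m - 1) - (heckeXi ^ k).coeff (m + 1) := by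
      rw [pow_succ, heckeXi, mul_sub, AddMonoidAlgebra.coeff_sub, Finsupp.sub_apply, mul_T_apply, mul_T_apply,
        sub_neg_eq_add]
    push_cast at hm ⊢
    rw [h1, ih (m - 1) (by omega), ih (m + 1) (by omega)]
    have h2 : ¬ (m + 1 = (k : ℤ)) := by omega
    simp only [h2, if_false, sub_zero]
    congr 1
    simp only [eq_iff_iff]; omega

lemma algebraMap_int_laurent (c : ℤ) :
    algebraMap ℤ (LaurentPolynomial ℤ) c = LaurentPolynomial.C c := by
  rw [eq_intCast (algebraMap ℤ (LaurentPolynomial ℤ))]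
  exact (map_intCast (LaurentPolynomial.C (R := ℤ)) c).symm

lemma aeval_xi_injective :
    Function.Injective (fun p : Polynomial ℤ => Polynomial.aeval heckeXi p) := by
  have key : ∀ p : Polynomial ℤ, Polynomial.aeval heckeXi p = 0 → p = 0 := by
    intro p hp
    by_contra hp0
    set d := p.natDegree with hd
    have h1 : Polynomial.aeval heckeXi p =
        ∑ k ∈ Finset.range (d + 1), LaurentPolynomial.C (p.coeff k) * heckeXi ^ k := by
      rw [Polynomial.aeval_def, Polynomial.eval₂_eq_sum_range]
      exact Finset.sum_congr rfl fun k _ => by rw [algebraMap_int_laurent]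
    have h2 : (Polynomial.aeval heckeXi p).coeff (d : ℤ) = p.coeff d := by
      rw [h1, AddMonoidAlgebra.coeff_sum, Finsupp.finset_sum_apply]
      rw [Finset.sum_eq_single d]
      · rw [show (LaurentPolynomial.C (p.coeff d)) = AddMonoidAlgebra.single (0:ℤ) (p.coeff d) from rfl,
          AddMonoidAlgebra.coeff_single_zero_mul, xi_pow_apply d (d:ℤ) le_rfl]
        simp
      · intro k hk hkd
        have hkd' : (k:ℤ) < (d:ℤ) := by
          simp only [Finset.mem_range] at hk
          exact_mod_cast Nat.lt_of_le_of_ne (by omega) hkd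
        rw [show (LaurentPolynomial.C (p.coeff k)) = AddMonoidAlgebra.single (0:ℤ) (p.coeff k) from rfl,
          AddMonoidAlgebra.coeff_single_zero_mul, xi_pow_apply k (d:ℤ) hkd'.le]
        simp [hkd'.ne']
      · simp
    rw [hp] at h2
    simp only [AddMonoidAlgebra.coeff_zero, Finsupp.coe_zero, Pi.zero_apply] at h2
    exact hp0 (Polynomial.leadingCoeff_eq_zero.mp h2.symm)
  intro p q hpq
  have h3 : Polynomial.aeval heckeXi (p - q) = 0 := by
    rw [map_sub]
    simpa [sub_eq_zero] using hpq
  exact sub_eq_zero.mp (key _ h3)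

section HeckeWork

open LaurentPolynomial CoxeterSystem

variable {B W H : Type*} [Group W] [Ring H] [Algebra (LaurentPolynomial ℤ) H]
  {M : CoxeterMatrix B}

variable (cs : CoxeterSystem M W) (TT : Module.Basis W (LaurentPolynomial ℤ) H)
  (hT : IsHeckeBasis cs TT)

lemma TT_eq_T_smul (x : W) :
    TT x = (T (cs.length x : ℤ) : LaurentPolynomial ℤ) • Ttilde cs TT x := by
  rw [Ttilde, smul_smul, ← T_add, add_neg_cancel, T_zero, one_smul]

include hT

lemma Ttilde_one : Ttilde cs TT 1 = 1 := by
  rw [Ttilde, cs.length_one, hT.1]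
  norm_num [T_zero]

lemma TT_simple_sq (i : B) :
    TT (cs.simple i) * TT (cs.simple i) =
      heckeQ • TT (cs.simple i) + (heckeQ • (1 : H) - TT (cs.simple i)) := by
  have h0 := hT.2.1 i
  rw [sub_mul, mul_add, mul_add, mul_one, mul_one, sub_eq_zero] at h0
  have h1 : TT (cs.simple i) * TT (cs.simple i) =
      algebraMap (LaurentPolynomial ℤ) H heckeQ * TT (cs.simple i) +
        algebraMap (LaurentPolynomial ℤ) H heckeQ - TT (cs.simple i) := by
    rw [← h0]; abel
  rw [h1, ← Algebra.smul_def]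
  have h2 : algebraMap (LaurentPolynomial ℤ) H heckeQ = heckeQ • (1 : H) := by
    rw [Algebra.smul_def, mul_one]
  rw [h2]; abel

lemma TT_mul_simple_of_descent (w : W) (i : B) (h : cs.IsRightDescent w i) :
    TT w * TT (cs.simple i) =
      heckeQ • TT w + (heckeQ • TT (w * cs.simple i) - TT w) := by
  have hlen := (cs.isRightDescent_iff).mp h
  have hnd : cs.length (w * cs.simple i * cs.simple i) =
      cs.length (w * cs.simple i) + cs.length (cs.simple i) := by
    rw [cs.simple_mul_simple_cancel_right, cs.length_simple]; omega
  have h1 : TT (w * cs.simple i) * TT (cs.simple i) = TT w := by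
    rw [hT.2.2 _ _ hnd, cs.simple_mul_simple_cancel_right]
  calc TT w * TT (cs.simple i)
      = TT (w * cs.simple i) * TT (cs.simple i) * TT (cs.simple i) := by rw [h1]
    _ = TT (w * cs.simple i) * (TT (cs.simple i) * TT (cs.simple i)) := by
        rw [mul_assoc]
    _ = heckeQ • TT w + (heckeQ • TT (w * cs.simple i) - TT w) := by
        rw [TT_simple_sq cs TT hT, mul_add, mul_sub, mul_smul_comm, mul_smul_comm, mul_one, h1]

lemma tilde_mul_simple_of_not_descent (w : W) (i : B) (h : ¬ cs.IsRightDescent w i) :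
    Ttilde cs TT w * Ttilde cs TT (cs.simple i) = Ttilde cs TT (w * cs.simple i) := by
  have hlen := (cs.not_isRightDescent_iff).mp h
  have hTT : TT w * TT (cs.simple i) = TT (w * cs.simple i) :=
    hT.2.2 _ _ (by rw [hlen, cs.length_simple])
  simp only [Ttilde, cs.length_simple, hlen]
  rw [smul_mul_assoc, mul_smul_comm, smul_smul, ← T_add, hTT]
  congr 1
  push_cast
  ring

lemma tilde_mul_simple_of_descent (w : W) (i : B) (h : cs.IsRightDescent w i) :
    Ttilde cs TT w * Ttilde cs TT (cs.simple i) =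
      Ttilde cs TT (w * cs.simple i) + heckeXi • Ttilde cs TT w := by
  have hlen := (cs.isRightDescent_iff).mp h
  have hlen' : (cs.length (w * cs.simple i) : ℤ) = (cs.length w : ℤ) - 1 := by
    push_cast [← hlen]; ring
  simp only [Ttilde, heckeXi, cs.length_simple, hlen']
  rw [smul_mul_assoc, mul_smul_comm, smul_smul, ← T_add,
    TT_mul_simple_of_descent cs TT hT w i h, heckeQ]
  match_scalars
  all_goals (ring_nf; simp only [← T_add]; try ring_nf)

lemma tilde_simple_mul_of_not_descent (w : W) (i : B) (h : ¬ cs.IsLeftDescent w i) :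
    Ttilde cs TT (cs.simple i) * Ttilde cs TT w = Ttilde cs TT (cs.simple i * w) := by
  have hlen := (cs.not_isLeftDescent_iff).mp h
  have hTT : TT (cs.simple i) * TT w = TT (cs.simple i * w) :=
    hT.2.2 _ _ (by rw [hlen, cs.length_simple]; omega)
  simp only [Ttilde, cs.length_simple, hlen]
  rw [smul_mul_assoc, mul_smul_comm, smul_smul, ← T_add, hTT]
  congr 1
  push_cast
  ring

lemma TT_simple_mul_of_descent (w : W) (i : B) (h : cs.IsLeftDescent w i) :
    TT (cs.simple i) * TT w =
      heckeQ • TT w + (heckeQ • TT (cs.simple i * w) - TT w) := by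
  have hlen := (cs.isLeftDescent_iff).mp h
  have hnd : cs.length (cs.simple i * (cs.simple i * w)) =
      cs.length (cs.simple i) + cs.length (cs.simple i * w) := by
    rw [cs.simple_mul_simple_cancel_left, cs.length_simple]; omega
  have h1 : TT (cs.simple i) * TT (cs.simple i * w) = TT w := by
    rw [hT.2.2 _ _ hnd, cs.simple_mul_simple_cancel_left]
  calc TT (cs.simple i) * TT w
      = TT (cs.simple i) * (TT (cs.simple i) * TT (cs.simple i * w)) := by rw [h1]
    _ = TT (cs.simple i) * TT (cs.simple i) * TT (cs.simple i * w) := by rw [mul_assoc]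
    _ = heckeQ • TT w + (heckeQ • TT (cs.simple i * w) - TT w) := by
        rw [TT_simple_sq cs TT hT, add_mul, sub_mul, smul_mul_assoc, smul_mul_assoc,
          one_mul, h1]

lemma tilde_simple_mul_of_descent (w : W) (i : B) (h : cs.IsLeftDescent w i) :
    Ttilde cs TT (cs.simple i) * Ttilde cs TT w =
      Ttilde cs TT (cs.simple i * w) + heckeXi • Ttilde cs TT w := by
  have hlen := (cs.isLeftDescent_iff).mp h
  have hlen' : (cs.length (cs.simple i * w) : ℤ) = (cs.length w : ℤ) - 1 := by
    push_cast [← hlen]; ring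
  simp only [Ttilde, heckeXi, cs.length_simple, hlen']
  rw [smul_mul_assoc, mul_smul_comm, smul_smul, ← T_add,
    TT_simple_mul_of_descent cs TT hT w i h, heckeQ]
  match_scalars
  all_goals (ring_nf; simp only [← T_add]; try ring_nf)

attribute [local instance] Classical.propDecidable

lemma repr_tilde_mul_tilde_one :
    ∀ (n : ℕ) (u w : W), cs.length u = n →
      TT.repr (Ttilde cs TT w * Ttilde cs TT u) 1 = if u = w⁻¹ then 1 else 0 := by
  intro n
  induction n using Nat.strong_induction_on with
  | _ n ih =>
    intro u w hu
    rcases eq_or_ne u 1 with rfl | hu1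
    · rw [Ttilde_one cs TT hT, mul_one, Ttilde, map_smul, Finsupp.smul_apply,
        Module.Basis.repr_self, Finsupp.single_apply]
      rcases eq_or_ne w 1 with rfl | hw1
      · simp [T_zero]
      · have h2 : ¬ ((1:W) = w⁻¹) := fun hh => hw1 (by rw [← inv_inv w, ← hh, inv_one])
        simp [hw1, h2]
    · obtain ⟨i, hi⟩ := cs.exists_leftDescent_of_ne_one hu1
      set u' := cs.simple i * u with hu'def
      have huu : cs.simple i * u' = u := by
        rw [hu'def, cs.simple_mul_simple_cancel_left]
      have hlen : cs.length u' + 1 = cs.length u := cs.isLeftDescent_iff.mp hi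
      have hndes : ¬ cs.IsLeftDescent u' i :=
        cs.isLeftDescent_iff_not_isLeftDescent_mul.mp hi
      have hsplit : Ttilde cs TT u = Ttilde cs TT (cs.simple i) * Ttilde cs TT u' := by
        rw [tilde_simple_mul_of_not_descent cs TT hT u' i hndes, huu]
      have key : Ttilde cs TT w * Ttilde cs TT u
          = (Ttilde cs TT w * Ttilde cs TT (cs.simple i)) * Ttilde cs TT u' := by
        rw [mul_assoc, ← hsplit]
      have hiff : (u' = (w * cs.simple i)⁻¹) ↔ (u = w⁻¹) := by
        rw [mul_inv_rev, eq_inv_mul_iff_mul_eq, huu]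
      by_cases hwd : cs.IsRightDescent w i
      · have hne : u' ≠ w⁻¹ := by
          intro hcon
          have h1 : (w * cs.simple i)⁻¹ = u := by
            rw [mul_inv_rev, cs.inv_simple, ← hcon, huu]
          have h2 : cs.length (w * cs.simple i) = cs.length u := by
            rw [← cs.length_inv, h1]
          have h3 : cs.length w = cs.length u' := by rw [hcon, cs.length_inv]
          have h4 := cs.isRightDescent_iff.mp hwd
          omega
        rw [key, tilde_mul_simple_of_descent cs TT hT w i hwd, add_mul, smul_mul_assoc,
          map_add, map_smul, Finsupp.add_apply, Finsupp.smul_apply,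
          ih (cs.length u') (by omega) u' (w * cs.simple i) rfl,
          ih (cs.length u') (by omega) u' w rfl]
        rw [if_neg hne, if_congr hiff rfl rfl]
        simp
      · rw [key, tilde_mul_simple_of_not_descent cs TT hT w i hwd,
          ih (cs.length u') (by omega) u' (w * cs.simple i) rfl,
          if_congr hiff rfl rfl]

lemma repr_tilde_mul_tilde_one' (w u : W) :
    TT.repr (Ttilde cs TT w * Ttilde cs TT u) 1 = if u = w⁻¹ then 1 else 0 :=
  repr_tilde_mul_tilde_one cs TT hT (cs.length u) u w rfl

lemma repr_TT_mul_tilde_one (x v : W) :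
    TT.repr (TT x * Ttilde cs TT v⁻¹) 1 =
      (T (cs.length v : ℤ) : LaurentPolynomial ℤ) * (if x = v then 1 else 0) := by
  rw [TT_eq_T_smul cs TT x, smul_mul_assoc, map_smul, Finsupp.smul_apply,
    repr_tilde_mul_tilde_one' cs TT hT x v⁻¹]
  by_cases hxv : x = v
  · subst hxv; simp
  · have : ¬ (v⁻¹ = x⁻¹) := fun hh => hxv (inv_injective hh.symm)
    simp [hxv, this]

lemma repr_tilde_mul_TT_one (w x : W) :
    TT.repr (Ttilde cs TT w * TT x) 1 =
      (T (cs.length w : ℤ) : LaurentPolynomial ℤ) * (if x = w⁻¹ then 1 else 0) := by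
  rw [TT_eq_T_smul cs TT x, mul_smul_comm, map_smul, Finsupp.smul_apply,
    repr_tilde_mul_tilde_one' cs TT hT w x]
  by_cases hxw : x = w⁻¹
  · subst hxw; simp [cs.length_inv]
  · simp [hxw]

lemma repr_mul_tilde_inv_apply_one (v : W) (h : H) :
    TT.repr (h * Ttilde cs TT v⁻¹) 1 =
      (T (cs.length v : ℤ) : LaurentPolynomial ℤ) * TT.repr h v := by
  have key : (Finsupp.lapply (1 : W) : (W →₀ LaurentPolynomial ℤ) →ₗ[LaurentPolynomial ℤ]
        LaurentPolynomial ℤ).comp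
      (TT.repr.toLinearMap.comp
        (LinearMap.mulRight (LaurentPolynomial ℤ) (Ttilde cs TT v⁻¹)))
      = (T (cs.length v : ℤ) : LaurentPolynomial ℤ) •
        ((Finsupp.lapply v : (W →₀ LaurentPolynomial ℤ) →ₗ[LaurentPolynomial ℤ]
          LaurentPolynomial ℤ).comp TT.repr.toLinearMap) := by
    apply TT.ext
    intro x
    simp only [LinearMap.comp_apply, LinearMap.mulRight_apply, LinearMap.smul_apply,
      Finsupp.lapply_apply, LinearEquiv.coe_toLinearMap]
    rw [repr_TT_mul_tilde_one cs TT hT x v, Module.Basis.repr_self, Finsupp.single_apply,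
      smul_eq_mul]
  have := LinearMap.congr_fun key h
  simpa only [LinearMap.comp_apply, LinearMap.mulRight_apply, LinearMap.smul_apply,
    Finsupp.lapply_apply, LinearEquiv.coe_toLinearMap, smul_eq_mul] using this

lemma repr_tilde_mul_apply_one (w : W) (h : H) :
    TT.repr (Ttilde cs TT w * h) 1 =
      (T (cs.length w : ℤ) : LaurentPolynomial ℤ) * TT.repr h w⁻¹ := by
  have key : (Finsupp.lapply (1 : W) : (W →₀ LaurentPolynomial ℤ) →ₗ[LaurentPolynomial ℤ]
        LaurentPolynomial ℤ).comp
      (TT.repr.toLinearMap.comp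
        (LinearMap.mulLeft (LaurentPolynomial ℤ) (Ttilde cs TT w)))
      = (T (cs.length w : ℤ) : LaurentPolynomial ℤ) •
        ((Finsupp.lapply w⁻¹ : (W →₀ LaurentPolynomial ℤ) →ₗ[LaurentPolynomial ℤ]
          LaurentPolynomial ℤ).comp TT.repr.toLinearMap) := by
    apply TT.ext
    intro x
    simp only [LinearMap.comp_apply, LinearMap.mulLeft_apply, LinearMap.smul_apply,
      Finsupp.lapply_apply, LinearEquiv.coe_toLinearMap]
    rw [repr_tilde_mul_TT_one cs TT hT w x, Module.Basis.repr_self, Finsupp.single_apply,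
      smul_eq_mul]
  have := LinearMap.congr_fun key h
  simpa only [LinearMap.comp_apply, LinearMap.mulLeft_apply, LinearMap.smul_apply,
    Finsupp.lapply_apply, LinearEquiv.coe_toLinearMap, smul_eq_mul] using this

lemma heckeF_cyc (w u v : W) :
    heckeF cs TT w u v = heckeF cs TT u v⁻¹ w⁻¹ := by
  unfold heckeF
  rw [← repr_mul_tilde_inv_apply_one cs TT hT v (Ttilde cs TT w * Ttilde cs TT u),
    mul_assoc, repr_tilde_mul_apply_one cs TT hT w, cs.length_inv]

lemma repr_tilde_simple_mul_TT (i : B) (v x : W) :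
    TT.repr (Ttilde cs TT (cs.simple i) * TT x) v =
      (T ((cs.length (cs.simple i * v) : ℤ) - (cs.length v : ℤ)) : LaurentPolynomial ℤ) *
        TT.repr (TT x) (cs.simple i * v) +
      (if cs.IsLeftDescent v i then heckeXi else 0) * TT.repr (TT x) v := by
  have hsv : cs.simple i * v ≠ v := fun hc => cs.length_simple_mul_ne v i (by rw [hc])
  by_cases hx : cs.IsLeftDescent x i
  · have hlx : (cs.length (cs.simple i * x) : ℤ) = (cs.length x : ℤ) - 1 := by
      have := cs.isLeftDescent_iff.mp hx; push_cast [← this]; ring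
    rw [TT_eq_T_smul cs TT x, mul_smul_comm, tilde_simple_mul_of_descent cs TT hT x i hx]
    simp only [map_add, map_smul, Finsupp.add_apply, Finsupp.smul_apply, Ttilde,
      Module.Basis.repr_self, Finsupp.single_apply, smul_eq_mul, hlx]
    by_cases hxv : x = v
    · subst hxv
      have h1 : ¬ (cs.simple i * x = x) := hsv
      have h2 : ¬ (x = cs.simple i * x) := fun h => hsv h.symm
      simp only [h1, h2, hx, if_true, if_false, mul_zero, zero_add, mul_one, add_zero]
      ring
    · by_cases hxsv : x = cs.simple i * v
      · subst hxsv
        have h1 : cs.simple i * (cs.simple i * v) = v := cs.simple_mul_simple_cancel_left i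
        have hvd : ¬ cs.IsLeftDescent v i :=
          fun h => (cs.isLeftDescent_iff_not_isLeftDescent_mul.mp h) hx
        have h2 : (cs.length v : ℤ) = (cs.length (cs.simple i * v) : ℤ) - 1 := by
          rw [h1] at hlx; exact hlx
        simp only [h1, hsv, hvd, if_pos rfl, if_false, if_true, mul_zero, mul_one,
          zero_mul, add_zero, zero_add, h2]
        simp only [← T_add]
        ring_nf
      · have h1 : ¬ (cs.simple i * x = v) := by
          intro h; exact hxsv (by rw [← h, cs.simple_mul_simple_cancel_left])
        simp only [h1, hxv, if_false, mul_zero, zero_add, add_zero]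
        simp only [hxsv, if_false, mul_zero]
  · have hlx : (cs.length (cs.simple i * x) : ℤ) = (cs.length x : ℤ) + 1 := by
      have := cs.not_isLeftDescent_iff.mp hx; push_cast [this]; ring
    rw [TT_eq_T_smul cs TT x, mul_smul_comm, tilde_simple_mul_of_not_descent cs TT hT x i hx]
    simp only [map_add, map_smul, Finsupp.add_apply, Finsupp.smul_apply, Ttilde,
      Module.Basis.repr_self, Finsupp.single_apply, smul_eq_mul, hlx]
    by_cases hxv : x = v
    · subst hxv
      have h1 : ¬ (cs.simple i * x = x) := hsv
      have h2 : ¬ (x = cs.simple i * x) := fun h => hsv h.symm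
      simp only [h1, h2, hx, if_true, if_false, mul_zero, zero_add, mul_one, add_zero]
      rw [zero_mul]
    · by_cases hxsv : x = cs.simple i * v
      · subst hxsv
        have h1 : cs.simple i * (cs.simple i * v) = v := cs.simple_mul_simple_cancel_left i
        have hvd : cs.IsLeftDescent v i :=
          cs.isLeftDescent_iff_not_isLeftDescent_mul.mpr hx
        have h2 : (cs.length v : ℤ) = (cs.length (cs.simple i * v) : ℤ) + 1 := by
          rw [h1] at hlx; exact hlx
        simp only [h1, hsv, if_pos rfl, if_false, if_true, mul_zero, mul_one,
          zero_mul, add_zero, zero_add, h2]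
        simp only [← T_add]
        ring_nf
      · have h1 : ¬ (cs.simple i * x = v) := by
          intro h; exact hxsv (by rw [← h, cs.simple_mul_simple_cancel_left])
        simp only [h1, hxv, if_false, mul_zero, zero_add, add_zero]
        simp only [hxsv, if_false, mul_zero]

lemma repr_tilde_simple_mul (i : B) (v : W) (h : H) :
    TT.repr (Ttilde cs TT (cs.simple i) * h) v =
      (T ((cs.length (cs.simple i * v) : ℤ) - (cs.length v : ℤ)) : LaurentPolynomial ℤ) *
        TT.repr h (cs.simple i * v) +
      (if cs.IsLeftDescent v i then heckeXi else 0) * TT.repr h v := by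
  have key : (Finsupp.lapply v : (W →₀ LaurentPolynomial ℤ) →ₗ[LaurentPolynomial ℤ]
        LaurentPolynomial ℤ).comp
      (TT.repr.toLinearMap.comp
        (LinearMap.mulLeft (LaurentPolynomial ℤ) (Ttilde cs TT (cs.simple i))))
      = (T ((cs.length (cs.simple i * v) : ℤ) - (cs.length v : ℤ)) : LaurentPolynomial ℤ) •
          ((Finsupp.lapply (cs.simple i * v) : (W →₀ LaurentPolynomial ℤ)
            →ₗ[LaurentPolynomial ℤ] LaurentPolynomial ℤ).comp TT.repr.toLinearMap)
        + (if cs.IsLeftDescent v i then heckeXi else 0) •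
          ((Finsupp.lapply v : (W →₀ LaurentPolynomial ℤ) →ₗ[LaurentPolynomial ℤ]
            LaurentPolynomial ℤ).comp TT.repr.toLinearMap) := by
    apply TT.ext
    intro x
    simp only [LinearMap.comp_apply, LinearMap.mulLeft_apply, LinearMap.add_apply,
      LinearMap.smul_apply, Finsupp.lapply_apply, LinearEquiv.coe_toLinearMap, smul_eq_mul]
    exact repr_tilde_simple_mul_TT cs TT hT i v x
  have hk := LinearMap.congr_fun key h
  simpa only [LinearMap.comp_apply, LinearMap.mulLeft_apply, LinearMap.add_apply,
    LinearMap.smul_apply, Finsupp.lapply_apply, LinearEquiv.coe_toLinearMap,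
    smul_eq_mul] using hk

lemma heckeF_rec (w u v : W) (i : B) (hi : cs.IsLeftDescent w i) :
    heckeF cs TT w u v = heckeF cs TT (cs.simple i * w) u (cs.simple i * v) +
      (if cs.IsLeftDescent v i then heckeXi else 0) *
        heckeF cs TT (cs.simple i * w) u v := by
  have hndes : ¬ cs.IsLeftDescent (cs.simple i * w) i :=
    cs.isLeftDescent_iff_not_isLeftDescent_mul.mp hi
  have hsplit : Ttilde cs TT w =
      Ttilde cs TT (cs.simple i) * Ttilde cs TT (cs.simple i * w) := by
    rw [tilde_simple_mul_of_not_descent cs TT hT _ i hndes,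
      cs.simple_mul_simple_cancel_left i]
  unfold heckeF
  rw [hsplit, mul_assoc, repr_tilde_simple_mul cs TT hT i v, mul_add]
  congr 1
  · rw [← mul_assoc, ← T_add]
    congr 2
    ring
  · ring

lemma heckeF_one (u v : W) : heckeF cs TT 1 u v = if u = v then 1 else 0 := by
  unfold heckeF
  rw [Ttilde_one cs TT hT, one_mul, Ttilde, map_smul, Finsupp.smul_apply, Module.Basis.repr_self,
    Finsupp.single_apply, smul_eq_mul]
  by_cases huv : u = v
  · subst huv
    rw [if_pos rfl, mul_one, ← T_add, add_neg_cancel, T_zero]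
  · rw [if_neg huv, mul_zero, mul_zero]

lemma heckeF_poly : ∀ (n : ℕ) (w u v : W), cs.length w = n →
    ∃ p : Polynomial ℤ, (∀ j : ℕ, 0 ≤ p.coeff j) ∧ p.natDegree ≤ cs.length w ∧
      Polynomial.aeval heckeXi p = heckeF cs TT w u v := by
  intro n
  induction n using Nat.strong_induction_on with
  | _ n ih =>
    intro w u v hw
    rcases eq_or_ne w 1 with rfl | hw1
    · by_cases huv : u = v
      · refine ⟨1, fun j => ?_, by simp, ?_⟩
        · rw [Polynomial.coeff_one]
          split <;> norm_num
        · rw [map_one, heckeF_one cs TT hT, if_pos huv]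
      · exact ⟨0, fun j => by simp, by simp,
          by rw [map_zero, heckeF_one cs TT hT, if_neg huv]⟩
    · obtain ⟨i, hi⟩ := cs.exists_leftDescent_of_ne_one hw1
      have hlen : cs.length (cs.simple i * w) + 1 = cs.length w := cs.isLeftDescent_iff.mp hi
      obtain ⟨p1, hp1n, hp1d, hp1a⟩ :=
        ih (cs.length (cs.simple i * w)) (by omega) (cs.simple i * w) u (cs.simple i * v) rfl
      obtain ⟨p2, hp2n, hp2d, hp2a⟩ :=
        ih (cs.length (cs.simple i * w)) (by omega) (cs.simple i * w) u v rfl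
      by_cases hvd : cs.IsLeftDescent v i
      · refine ⟨p1 + Polynomial.X * p2, fun j => ?_, ?_, ?_⟩
        · rw [Polynomial.coeff_add]
          refine add_nonneg (hp1n j) ?_
          cases j with
          | zero => simp [Polynomial.mul_coeff_zero]
          | succ j => rw [Polynomial.coeff_X_mul]; exact hp2n j
        · refine (Polynomial.natDegree_add_le _ _).trans
            (max_le (hp1d.trans (by omega)) ?_)
          refine (Polynomial.natDegree_mul_le).trans ?_
          rw [Polynomial.natDegree_X]
          omega
        · rw [map_add, map_mul, Polynomial.aeval_X, hp1a, hp2a,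
            heckeF_rec cs TT hT w u v i hi, if_pos hvd]
      · refine ⟨p1, hp1n, hp1d.trans (by omega), ?_⟩
        rw [hp1a, heckeF_rec cs TT hT w u v i hi, if_neg hvd, zero_mul, add_zero]

lemma heckeF_poly' (w u v : W) :
    ∃ p : Polynomial ℤ, (∀ j : ℕ, 0 ≤ p.coeff j) ∧ p.natDegree ≤ cs.length w ∧
      Polynomial.aeval heckeXi p = heckeF cs TT w u v :=
  heckeF_poly cs TT hT (cs.length w) w u v rfl

end HeckeWork

end

/-- For any `w, u, v ∈ W`, the structure constant `f_{w,u,v}` is a polynomial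
in `ξ = q^{1/2} - q^{-1/2}` with non-negative integer coefficients, of degree at most
`min {l(w), l(u), l(v)}`, and `f_{w,u,v} = f_{u,v⁻¹,w⁻¹} = f_{v⁻¹,w,u⁻¹}`. -/
theorem stmt_2 {B W H : Type*} [Group W] [Ring H] [Algebra (LaurentPolynomial ℤ) H]
    {M : CoxeterMatrix B} (cs : CoxeterSystem M W)
    (TT : Module.Basis W (LaurentPolynomial ℤ) H) (hT : IsHeckeBasis cs TT) (w u v : W) :
    (∃ p : Polynomial ℤ, (∀ i : ℕ, 0 ≤ p.coeff i) ∧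
      p.natDegree ≤ min (cs.length w) (min (cs.length u) (cs.length v)) ∧
      Polynomial.aeval heckeXi p = heckeF cs TT w u v) ∧
    heckeF cs TT w u v = heckeF cs TT u v⁻¹ w⁻¹ ∧
    heckeF cs TT w u v = heckeF cs TT v⁻¹ w u⁻¹ := by
  have hsym1 : heckeF cs TT w u v = heckeF cs TT u v⁻¹ w⁻¹ := heckeF_cyc cs TT hT w u v
  have hsym2 : heckeF cs TT u v⁻¹ w⁻¹ = heckeF cs TT v⁻¹ w u⁻¹ := by
    have h2 := heckeF_cyc cs TT hT u v⁻¹ w⁻¹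
    rwa [inv_inv] at h2
  obtain ⟨p, hpn, hpd, hpa⟩ := heckeF_poly' cs TT hT w u v
  obtain ⟨p', hpn', hpd', hpa'⟩ := heckeF_poly' cs TT hT u v⁻¹ w⁻¹
  obtain ⟨p'', hpn'', hpd'', hpa''⟩ := heckeF_poly' cs TT hT v⁻¹ w u⁻¹
  have e1 : p = p' := aeval_xi_injective (show Polynomial.aeval heckeXi p =
    Polynomial.aeval heckeXi p' by rw [hpa, hpa']; exact hsym1)
  have e2 : p = p'' := aeval_xi_injective (show Polynomial.aeval heckeXi p =
    Polynomial.aeval heckeXi p'' by rw [hpa, hpa'']; exact hsym1.trans hsym2)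
  refine ⟨⟨p, hpn, ?_, hpa⟩, hsym1, hsym1.trans hsym2⟩
  refine le_min hpd (le_min (e1 ▸ hpd') ?_)
  have := e2 ▸ hpd''
  rwa [cs.length_inv] at this
end

section
/- Let (W,S) be a Coxeter system and let r, s, t ∈ S be simple reflections such that the orders of rs, rt and st are all greater than 2 (possibly infinite). Then there is no element w in W for which there exist w₁, w₂ ∈ W with w = w₁ r = w₂ s t and l(w) = l(w₁) + 1 = l(w₂) + 2. -/
namespace Stmt4Aux

open List

attribute [local instance] Classical.propDecidable

variable {B : Type*} {W : Type*} [Group W] {M : CoxeterMatrix B} (cs : CoxeterSystem M W)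

local prefix:100 "σ" => cs.simple
local prefix:100 "π" => cs.wordProd
local prefix:100 "ℒ" => cs.length

/-! ### Counting mod 2 -/

noncomputable def cnt (t : W) (l : List W) : ZMod 2 :=
  (l.map (fun x => if x = t then (1 : ZMod 2) else 0)).sum

omit [Group W] in
lemma cnt_nil (t : W) : cnt t ([] : List W) = 0 := rfl

omit [Group W] in
lemma cnt_cons (t x : W) (l : List W) :
    cnt t (x :: l) = (if x = t then 1 else 0) + cnt t l := by
  simp [cnt]

omit [Group W] in
lemma cnt_append (t : W) (l₁ l₂ : List W) :
    cnt t (l₁ ++ l₂) = cnt t l₁ + cnt t l₂ := by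
  simp [cnt]

omit [Group W] in
lemma cnt_reverse (t : W) (l : List W) : cnt t l.reverse = cnt t l := by
  unfold cnt
  rw [List.map_reverse]
  exact List.sum_reverse _

omit [Group W] in
lemma mem_of_cnt_ne_zero {t : W} {l : List W} (h : cnt t l ≠ 0) : t ∈ l := by
  induction l with
  | nil => exact absurd (cnt_nil t) h
  | cons x l ih =>
    rw [cnt_cons] at h
    by_cases hx : x = t
    · rw [hx]; exact List.mem_cons_self
    · rw [if_neg hx, zero_add] at h
      exact List.mem_cons_of_mem _ (ih h)

/-! ### The permutation representation -/

lemma simple_conj_eq_iff (i : B) (t : W) : σ i * t * σ i = σ i ↔ t = σ i := by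
  constructor
  · intro hh
    calc t = (σ i * σ i) * t * (σ i * σ i) := by rw [cs.simple_mul_simple_self]; group
    _ = σ i * (σ i * t * σ i) * σ i := by group
    _ = σ i * σ i * σ i := by rw [hh]
    _ = σ i := by rw [cs.simple_mul_simple_self, one_mul]
  · rintro rfl
    rw [cs.simple_mul_simple_self, one_mul]

noncomputable def etaFun (i : B) : W × ZMod 2 → W × ZMod 2 :=
  fun x => (σ i * x.1 * σ i, x.2 + if x.1 = σ i then 1 else 0)

lemma etaFun_invol (i : B) : Function.Involutive (etaFun cs i) := by
  rintro ⟨t, ε⟩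
  unfold etaFun
  simp only
  refine Prod.ext ?_ ?_
  · show σ i * (σ i * t * σ i) * σ i = t
    calc σ i * (σ i * t * σ i) * σ i = (σ i * σ i) * t * (σ i * σ i) := by group
    _ = t := by rw [cs.simple_mul_simple_self, one_mul, mul_one]
  · show (ε + (if t = σ i then 1 else 0))
        + (if σ i * t * σ i = σ i then (1 : ZMod 2) else 0) = ε
    rw [if_congr (simple_conj_eq_iff cs i t) rfl rfl]
    by_cases ht : t = σ i
    · rw [if_pos ht, add_assoc, (by decide : (1 : ZMod 2) + 1 = 0), add_zero]
    · rw [if_neg ht, add_zero, add_zero]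

noncomputable def eta (i : B) : Equiv.Perm (W × ZMod 2) := (etaFun_invol cs i).toPerm

lemma eta_apply (i : B) (x : W × ZMod 2) :
    eta cs i x = (σ i * x.1 * σ i, x.2 + if x.1 = σ i then 1 else 0) := rfl

lemma ris_cons (i : B) (ω : List B) :
    cs.rightInvSeq (i :: ω) = ((π ω)⁻¹ * σ i * π ω) :: cs.rightInvSeq ω := rfl

lemma prod_map_eta (ω : List B) (t : W) (ε : ZMod 2) :
    (ω.map (eta cs)).prod (t, ε) = (π ω * t * (π ω)⁻¹, ε + cnt t (cs.rightInvSeq ω)) := by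
  induction ω generalizing t ε with
  | nil =>
    simp only [List.map_nil, List.prod_nil, CoxeterSystem.rightInvSeq_nil, cnt_nil,
      CoxeterSystem.wordProd_nil, Equiv.Perm.one_apply, one_mul, inv_one, mul_one, add_zero]
  | cons i ω ih =>
    rw [List.map_cons, List.prod_cons, Equiv.Perm.mul_apply, ih, eta_apply, ris_cons, cnt_cons,
      cs.wordProd_cons]
    have hiff : (π ω * t * (π ω)⁻¹ = σ i) ↔ ((π ω)⁻¹ * σ i * π ω = t) := by
      constructor <;> intro h <;> rw [← h] <;> group
    refine Prod.ext ?_ ?_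
    · show σ i * (π ω * t * (π ω)⁻¹) * σ i = (σ i * π ω) * t * (σ i * π ω)⁻¹
      rw [mul_inv_rev, cs.inv_simple]
      group
    · show (ε + cnt t (cs.rightInvSeq ω)) + (if π ω * t * (π ω)⁻¹ = σ i then (1:ZMod 2) else 0)
        = ε + ((if (π ω)⁻¹ * σ i * π ω = t then 1 else 0) + cnt t (cs.rightInvSeq ω))
      rw [if_congr hiff rfl rfl]
      ring

/-! ### Dihedral computation of the right inversion sequence -/

lemma sj_pow (i j : B) (a : ℕ) :
    σ j * (σ i * σ j) ^ a = ((σ i * σ j) ^ a)⁻¹ * σ j := by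
  induction a with
  | zero => simp
  | succ a ih =>
    calc σ j * (σ i * σ j) ^ (a + 1)
        = σ j * ((σ i * σ j) * (σ i * σ j) ^ a) := by rw [pow_succ']
      _ = (σ j * σ i) * (σ j * (σ i * σ j) ^ a) := by simp only [mul_assoc]
      _ = (σ j * σ i) * (((σ i * σ j) ^ a)⁻¹ * σ j) := by rw [ih]
      _ = ((σ i * σ j) ^ (a + 1))⁻¹ * σ j := by
          rw [pow_succ, mul_inv_rev, mul_inv_rev]
          simp only [cs.inv_simple, mul_assoc]

lemma head_eq (i j : B) (n : ℕ) :
    (π (CoxeterSystem.alternatingWord i j n))⁻¹ * σ (if Even n then j else i)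
      * π (CoxeterSystem.alternatingWord i j n)
      = σ j * (σ i * σ j) ^ n := by
  rw [cs.prod_alternatingWord_eq_mul_pow]
  rcases Nat.even_or_odd n with he | ho
  · obtain ⟨k, hk⟩ := he
    have hk2 : n / 2 = k := by omega
    rw [if_pos ⟨k, hk⟩, if_pos ⟨k, hk⟩, one_mul, hk2, hk]
    rw [show ((σ i * σ j : W) ^ k)⁻¹ * σ j = σ j * (σ i * σ j) ^ k from (sj_pow cs i j k).symm]
    rw [mul_assoc, ← pow_add]
  · have hne : ¬ Even n := Nat.not_even_iff_odd.mpr ho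
    obtain ⟨k, hk⟩ := ho
    have hk2 : n / 2 = k := by omega
    rw [if_neg hne, if_neg hne, hk2, hk]
    rw [mul_inv_rev, cs.inv_simple]
    rw [show ((σ i * σ j : W) ^ k)⁻¹ * σ j = σ j * (σ i * σ j) ^ k from (sj_pow cs i j k).symm]
    simp only [mul_assoc]
    rw [mul_right_inj]
    rw [show σ i * (σ j * (σ i * σ j : W) ^ k) = (σ i * σ j) ^ (k + 1) from by
      rw [← mul_assoc, ← pow_succ']]
    rw [← pow_add, show k + (k + 1) = 2 * k + 1 from by omega]

lemma ris_alt (i j : B) (n : ℕ) :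
    cs.rightInvSeq (CoxeterSystem.alternatingWord i j n)
      = ((List.range n).reverse).map (fun k => σ j * (σ i * σ j) ^ k) := by
  induction n with
  | zero => simp [CoxeterSystem.alternatingWord]
  | succ n ih =>
    rw [CoxeterSystem.alternatingWord_succ', ris_cons, ih, head_eq,
      List.range_succ, List.reverse_append]
    simp

/-! ### Braid relations for eta -/

lemma pow_eq_prod (i j : B) (m : ℕ) :
    ((eta cs i) * (eta cs j)) ^ m
      = ((CoxeterSystem.alternatingWord i j (2 * m)).map (eta cs)).prod := by
  induction m with
  | zero => simp [CoxeterSystem.alternatingWord]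
  | succ m ih =>
    have h1 : CoxeterSystem.alternatingWord i j (2 * (m + 1))
        = i :: j :: CoxeterSystem.alternatingWord i j (2 * m) := by
      rw [show 2 * (m + 1) = (2 * m + 1) + 1 by ring, CoxeterSystem.alternatingWord_succ',
        CoxeterSystem.alternatingWord_succ']
      have h2 : ¬ Even (2 * m + 1) := by simp [Nat.even_add_one]
      have h3 : Even (2 * m) := even_two_mul m
      rw [if_neg h2, if_pos h3]
    rw [h1, List.map_cons, List.map_cons, List.prod_cons, List.prod_cons, ← ih, pow_succ']
    rw [mul_assoc]

lemma eta_liftable : M.IsLiftable (eta cs) := by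
  intro i j
  apply Equiv.ext
  rintro ⟨t, ε⟩
  rw [pow_eq_prod, prod_map_eta]
  have hπ : π (CoxeterSystem.alternatingWord i j (2 * M.M i j)) = 1 := by
    rw [cs.prod_alternatingWord_eq_mul_pow, if_pos (even_two_mul _),
      Nat.mul_div_cancel_left _ (by norm_num : 0 < 2), one_mul, cs.simple_mul_simple_pow]
  have hcnt : cnt t (cs.rightInvSeq (CoxeterSystem.alternatingWord i j (2 * M.M i j))) = 0 := by
    rw [ris_alt, List.map_reverse, cnt_reverse, two_mul, List.range_add, List.map_append, List.map_map]
    have hfe : ((fun k => σ j * (σ i * σ j) ^ k) ∘ fun x => M.M i j + x)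
        = (fun k => σ j * (σ i * σ j) ^ k) := by
      funext k
      simp only [Function.comp_apply]
      rw [pow_add, cs.simple_mul_simple_pow, one_mul]
    rw [hfe, cnt_append]
    exact (by decide : ∀ x : ZMod 2, x + x = 0) _
  rw [hπ, hcnt]
  simp

/-! ### The homomorphism and the mod-2 inversion count -/

noncomputable def phi : W →* Equiv.Perm (W × ZMod 2) := cs.lift ⟨eta cs, eta_liftable cs⟩

lemma phi_simple (i : B) : phi cs (σ i) = eta cs i := cs.lift_apply_simple (eta_liftable cs) i

lemma phi_wordProd (ω : List B) : phi cs (π ω) = (ω.map (eta cs)).prod := by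
  induction ω with
  | nil => simp [CoxeterSystem.wordProd_nil]
  | cons i ω ih =>
    rw [cs.wordProd_cons, map_mul, phi_simple, ih, List.map_cons, List.prod_cons]

noncomputable def nn (w t : W) : ZMod 2 := (phi cs w (t, 0)).2

lemma nn_wordProd (ω : List B) (t : W) : nn cs (π ω) t = cnt t (cs.rightInvSeq ω) := by
  show (phi cs (π ω) (t, 0)).2 = _
  rw [phi_wordProd, prod_map_eta]
  exact zero_add _

lemma phi_apply (w t : W) (ε : ZMod 2) : phi cs w (t, ε) = (w * t * w⁻¹, ε + nn cs w t) := by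
  obtain ⟨ω, rfl⟩ := cs.wordProd_surjective w
  rw [phi_wordProd, prod_map_eta, nn_wordProd]

lemma nn_one (t : W) : nn cs 1 t = 0 := by
  show ((phi cs) 1 (t, 0)).2 = 0
  rw [map_one]
  rfl

lemma nn_mul (u v t : W) : nn cs (u * v) t = nn cs v t + nn cs u (v * t * v⁻¹) := by
  have h2 : nn cs (u * v) t = (phi cs u (phi cs v (t, 0))).2 := by
    show ((phi cs) (u * v) (t, 0)).2 = _
    rw [map_mul]
    rfl
  rw [h2, phi_apply, phi_apply]
  simp

lemma nn_simple (i : B) (t : W) : nn cs (σ i) t = if t = σ i then 1 else 0 := by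
  show ((phi cs) (σ i) (t, 0)).2 = _
  rw [phi_simple, eta_apply]
  exact zero_add _

/-! ### nn detects right descents -/

lemma length_mul_simple_of_lt {w : W} {i : B} (h : ℒ (w * σ i) < ℒ w) :
    ℒ (w * σ i) + 1 = ℒ w := by
  rcases cs.length_mul_simple w i with h' | h' <;> omega

lemma length_lt_of_nn_one : ∀ n : ℕ, ∀ w t : W, ℒ w ≤ n → nn cs w t = 1 → ℒ (w * t) < ℒ w := by
  intro n
  induction n with
  | zero =>
    intro w t hw h1
    have hw1 : w = 1 := cs.length_eq_zero_iff.mp (Nat.le_zero.mp hw)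
    rw [hw1, nn_one] at h1
    exact absurd h1 (by decide)
  | succ n ih =>
    intro w t hw h1
    by_cases hw1 : w = 1
    · rw [hw1, nn_one] at h1
      exact absurd h1 (by decide)
    · obtain ⟨i, hi⟩ := cs.exists_rightDescent_of_ne_one hw1
      have hi' : ℒ (w * σ i) < ℒ w := hi
      have hi'' : ℒ (w * σ i) + 1 = ℒ w := length_mul_simple_of_lt cs hi'
      have hwv : w = (w * σ i) * σ i := by rw [cs.simple_mul_simple_cancel_right]
      have hnn : nn cs w t
          = (if t = σ i then 1 else 0) + nn cs (w * σ i) (σ i * t * σ i) := by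
        nth_rewrite 1 [hwv]
        rw [nn_mul, nn_simple, cs.inv_simple]
      by_cases ht : t = σ i
      · rw [ht]; exact hi'
      · rw [hnn, if_neg ht, zero_add] at h1
        have h3 := ih (w * σ i) (σ i * t * σ i) (by omega) h1
        have h4 : w * t = ((w * σ i) * (σ i * t * σ i)) * σ i := by
          simp [mul_assoc, cs.simple_mul_simple_cancel_left]
        rcases cs.length_mul_simple ((w * σ i) * (σ i * t * σ i)) i with h5 | h5 <;>
          rw [h4] <;> omega

lemma nn_eq_one_of_descent {w : W} {i : B} (h : ℒ (w * σ i) < ℒ w) : nn cs w (σ i) = 1 := by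
  by_contra hne
  have h0 : nn cs w (σ i) = 0 := by
    rcases (by decide : ∀ x : ZMod 2, x = 0 ∨ x = 1) (nn cs w (σ i)) with h' | h'
    · exact h'
    · exact absurd h' hne
  have h1 : nn cs (w * σ i) (σ i) = 1 := by
    rw [nn_mul, nn_simple, if_pos rfl, cs.inv_simple, cs.simple_mul_simple_cancel_right, h0,
      add_zero]
  have h2 := length_lt_of_nn_one cs (ℒ (w * σ i)) (w * σ i) (σ i) le_rfl h1
  rw [cs.simple_mul_simple_cancel_right] at h2
  omega

/-! ### The exchange property -/

lemma exchange {ω : List B} (hred : cs.IsReduced ω) {i : B} (h : ℒ (π ω * σ i) < ℒ (π ω)) :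
    ∃ j < ω.length, π ω * σ i = π (ω.eraseIdx j) := by
  have h1 : nn cs (π ω) (σ i) = 1 := nn_eq_one_of_descent cs h
  rw [nn_wordProd] at h1
  have h3 : σ i ∈ cs.rightInvSeq ω := mem_of_cnt_ne_zero (by rw [h1]; decide)
  obtain ⟨j, hj, hjt⟩ := List.mem_iff_getElem.mp h3
  have hj' : j < ω.length := by
    rw [cs.length_rightInvSeq] at hj
    exact hj
  refine ⟨j, hj', ?_⟩
  have h4 : (cs.rightInvSeq ω).getD j 1 = σ i := by
    rw [List.getD_eq_getElem _ _ hj, hjt]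
  rw [← h4, cs.wordProd_mul_getD_rightInvSeq]

/-! ### Dihedral descent lemmas -/

lemma lemA {w : W} (a b : B) (hab : σ a ≠ σ b)
    (ha : ℒ (w * σ a) < ℒ w) (hb : ℒ (w * σ b) < ℒ w) :
    ℒ (w * σ b * σ a) + 2 = ℒ w := by
  have ha' : ℒ (w * σ a) + 1 = ℒ w := length_mul_simple_of_lt cs ha
  have hb' : ℒ (w * σ b) + 1 = ℒ w := length_mul_simple_of_lt cs hb
  obtain ⟨ω₁, hr₁, he₁⟩ := cs.exists_reduced_word' (w * σ a)
  have hlen₁ : ω₁.length = ℒ (w * σ a) := by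
    have h : ℒ (π ω₁) = ω₁.length := hr₁
    rw [← he₁] at h
    exact h.symm
  have hπ : π (ω₁ ++ [a]) = w := by
    rw [cs.wordProd_append, ← he₁, cs.wordProd_singleton, cs.simple_mul_simple_cancel_right]
  have hredω : cs.IsReduced (ω₁ ++ [a]) := by
    have : ℒ (π (ω₁ ++ [a])) = (ω₁ ++ [a]).length := by
      rw [hπ, List.length_append, List.length_singleton]
      omega
    exact this
  obtain ⟨j, hj, hjeq⟩ := exchange cs hredω (i := b) (by rw [hπ]; exact hb)
  rw [hπ] at hjeq
  rw [List.length_append, List.length_singleton] at hj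
  rcases Nat.lt_or_ge j ω₁.length with hlt | hge
  · rw [List.eraseIdx_append_of_lt_length hlt] at hjeq
    rw [cs.wordProd_append, cs.wordProd_singleton] at hjeq
    have h5 : w * σ b * σ a = π (ω₁.eraseIdx j) := by
      rw [hjeq, cs.simple_mul_simple_cancel_right]
    have h6 : ℒ (w * σ b * σ a) ≤ (ω₁.eraseIdx j).length := by
      rw [h5]; exact cs.length_wordProd_le _
    have h7 := List.length_eraseIdx_add_one hlt
    rcases cs.length_mul_simple (w * σ b) a with h8 | h8 <;> omega
  · have hj_eq : j = ω₁.length := by omega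
    rw [hj_eq, List.eraseIdx_append_of_length_le le_rfl, Nat.sub_self] at hjeq
    rw [show ([a] : List B).eraseIdx 0 = [] from rfl, List.append_nil, ← he₁] at hjeq
    exact absurd (mul_left_cancel hjeq).symm hab

lemma prod_pair (a b : B) : π [a, b] = σ a * σ b := by
  rw [show ([a, b] : List B) = [a] ++ [b] from rfl, cs.wordProd_append,
    cs.wordProd_singleton, cs.wordProd_singleton]

lemma lemB {w : W} (a b : B) (hab : σ a ≠ σ b) (hab2 : (σ a * σ b) * (σ a * σ b) ≠ 1)
    (ha : ℒ (w * σ a) < ℒ w) (hb : ℒ (w * σ b) < ℒ w) :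
    ℒ (w * σ a * σ b * σ a) + 3 = ℒ w := by
  have ha' : ℒ (w * σ a) + 1 = ℒ w := length_mul_simple_of_lt cs ha
  have hA : ℒ (w * σ b * σ a) + 2 = ℒ w := lemA cs a b hab ha hb
  obtain ⟨μ, hrμ, heμ⟩ := cs.exists_reduced_word' (w * σ b * σ a)
  have hlenμ : μ.length = ℒ (w * σ b * σ a) := by
    have h : ℒ (π μ) = μ.length := hrμ
    rw [← heμ] at h
    exact h.symm
  have hπ : π (μ ++ [a, b]) = w := by
    rw [cs.wordProd_append, ← heμ, prod_pair]
    simp [mul_assoc, cs.simple_mul_simple_cancel_left, cs.simple_mul_simple_cancel_right]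
  have hredω : cs.IsReduced (μ ++ [a, b]) := by
    have : ℒ (π (μ ++ [a, b])) = (μ ++ [a, b]).length := by
      rw [hπ, List.length_append]
      show ℒ w = μ.length + 2
      omega
    exact this
  obtain ⟨j, hj, hjeq⟩ := exchange cs hredω (i := a) (by rw [hπ]; exact ha)
  rw [hπ] at hjeq
  rw [List.length_append] at hj
  rcases Nat.lt_or_ge j μ.length with hlt | hge
  · rw [List.eraseIdx_append_of_lt_length hlt] at hjeq
    rw [cs.wordProd_append, prod_pair] at hjeq
    have h5 : w * σ a * σ b * σ a = π (μ.eraseIdx j) := by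
      rw [show w * σ a * σ b * σ a = w * σ a * (σ b * σ a) from by group]
      rw [show w * σ a = π (μ.eraseIdx j) * (σ a * σ b) from hjeq]
      simp [mul_assoc, cs.simple_mul_simple_cancel_left, cs.simple_mul_simple_cancel_right]
    have h6 : ℒ (w * σ a * σ b * σ a) ≤ (μ.eraseIdx j).length := by
      rw [h5]; exact cs.length_wordProd_le _
    have h7 := List.length_eraseIdx_add_one hlt
    rcases cs.length_mul_simple (w * σ a) b with h8 | h8 <;>
      rcases cs.length_mul_simple (w * σ a * σ b) a with h9 | h9 <;> omega
  · have hcase : j - μ.length = 0 ∨ j - μ.length = 1 := by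
      have : j < μ.length + 2 := by simpa using hj
      omega
    rw [List.eraseIdx_append_of_length_le hge] at hjeq
    rcases hcase with h0 | h0 <;> rw [h0] at hjeq
    · rw [show ([a, b] : List B).eraseIdx 0 = [b] from rfl] at hjeq
      rw [cs.wordProd_append, cs.wordProd_singleton, ← heμ] at hjeq
      -- hjeq : w * σ a = w * σ b * σ a * σ b
      have h10 : σ a = σ b * σ a * σ b := by
        rw [show w * σ b * σ a * σ b = w * (σ b * σ a * σ b) from by group] at hjeq
        exact mul_left_cancel hjeq
      have h11 : (σ a * σ b) * (σ a * σ b) = 1 := by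
        nth_rewrite 1 [h10]
        simp [mul_assoc, cs.simple_mul_simple_cancel_left]
      exact absurd h11 hab2
    · rw [show ([a, b] : List B).eraseIdx 1 = [a] from rfl] at hjeq
      rw [cs.wordProd_append, cs.wordProd_singleton, ← heμ,
        cs.simple_mul_simple_cancel_right] at hjeq
      exact absurd (mul_left_cancel hjeq) hab

lemma swap_sq {i j : B} (h : (σ i * σ j) * (σ i * σ j) = 1) :
    (σ j * σ i) * (σ j * σ i) = 1 := by
  have h2 : ((σ i * σ j) * (σ i * σ j))⁻¹ = 1 := by rw [h, inv_one]
  calc (σ j * σ i) * (σ j * σ i)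
      = ((σ i * σ j) * (σ i * σ j))⁻¹ := by
        simp only [mul_inv_rev, cs.inv_simple, mul_assoc]
    _ = 1 := h2

/-! ### The main recursion -/

lemma key : ∀ n : ℕ, ∀ w : W, ∀ a b c : B,
    (σ a ≠ σ b) → ((σ a * σ b) * (σ a * σ b) ≠ 1) →
    (σ a ≠ σ c) → ((σ a * σ c) * (σ a * σ c) ≠ 1) →
    (σ b ≠ σ c) → ((σ b * σ c) * (σ b * σ c) ≠ 1) →
    ℒ w ≤ n →
    ℒ (w * σ a) < ℒ w → ℒ (w * σ b) < ℒ w → ℒ (w * σ b * σ c) < ℒ (w * σ b) → False := by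
  intro n
  induction n with
  | zero =>
    intro w a b c _ _ _ _ _ _ hw ha _ _
    omega
  | succ n ih =>
    intro w a b c hab hab2 hac hac2 hbc hbc2 hw ha hb hc
    have hb' : ℒ (w * σ b) + 1 = ℒ w := length_mul_simple_of_lt cs hb
    have hA1 : ℒ (w * σ b * σ a) + 2 = ℒ w := lemA cs a b hab ha hb
    have hva : ℒ (w * σ b * σ a) < ℒ (w * σ b) := by omega
    have h5 : ℒ (w * σ b * σ a * σ c) + 2 = ℒ (w * σ b) :=
      lemA cs c a (fun h => hac h.symm) hc hva
    have h4 : ℒ (w * σ b * σ a * σ b) + 3 = ℒ w :=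
      lemB cs b a (fun h => hab h.symm) (fun h => hab2 (swap_sq cs h)) hb ha
    have h6 : ℒ (w * σ b * σ a * σ c * σ a) + 4 = ℒ w := by
      have := lemB cs a c hac hac2 hva hc
      omega
    exact ih (w * σ b * σ a) b c a hbc hbc2
      (fun h => hab h.symm) (fun h => hab2 (swap_sq cs h))
      (fun h => hac h.symm) (fun h => hac2 (swap_sq cs h))
      (by omega) (by omega) (by omega) (by omega)

lemma of_order {x : W} (h : orderOf x = 0 ∨ 2 < orderOf x) : x ≠ 1 ∧ x * x ≠ 1 := by
  constructor
  · rintro rfl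
    rw [orderOf_one] at h
    omega
  · intro hx
    have h2 : orderOf x ∣ 2 := orderOf_dvd_of_pow_eq_one (by rw [pow_two]; exact hx)
    rcases h with h0 | hgt
    · rw [h0] at h2
      exact absurd (zero_dvd_iff.mp h2) (by norm_num)
    · have := Nat.le_of_dvd (by norm_num) h2
      omega

end Stmt4Aux

/-- Let `(W, S)` be a Coxeter system and `r, s, t ∈ S` simple reflections such
that the orders of `rs`, `rt`, `st` are all greater than `2` (possibly infinite; in Mathlib
`orderOf x = 0` means infinite order).  Then there is no `w ∈ W` with `w = w₁ r = w₂ s t` and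
`l(w) = l(w₁) + 1 = l(w₂) + 2` for some `w₁, w₂ ∈ W`. -/
theorem stmt_4 {B W : Type*} [Group W] {M : CoxeterMatrix B} (cs : CoxeterSystem M W)
    (r s t : B)
    (hrs : orderOf (cs.simple r * cs.simple s) = 0 ∨ 2 < orderOf (cs.simple r * cs.simple s))
    (hrt : orderOf (cs.simple r * cs.simple t) = 0 ∨ 2 < orderOf (cs.simple r * cs.simple t))
    (hst : orderOf (cs.simple s * cs.simple t) = 0 ∨ 2 < orderOf (cs.simple s * cs.simple t)) :
    ¬ ∃ (w w₁ w₂ : W), w = w₁ * cs.simple r ∧ w = w₂ * cs.simple s * cs.simple t ∧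
      cs.length w = cs.length w₁ + 1 ∧ cs.length w = cs.length w₂ + 2 := by
  rintro ⟨w, w₁, w₂, hw1, hw2, hl1, hl2⟩
  obtain ⟨hrs1, hrs2⟩ := Stmt4Aux.of_order hrs
  obtain ⟨hrt1, hrt2⟩ := Stmt4Aux.of_order hrt
  obtain ⟨hst1, hst2⟩ := Stmt4Aux.of_order hst
  have hne_rs : cs.simple r ≠ cs.simple s := by
    intro h; exact hrs1 (by rw [h, cs.simple_mul_simple_self])
  have hne_rt : cs.simple r ≠ cs.simple t := by
    intro h; exact hrt1 (by rw [h, cs.simple_mul_simple_self])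
  have hne_st : cs.simple s ≠ cs.simple t := by
    intro h; exact hst1 (by rw [h, cs.simple_mul_simple_self])
  have hwr : w * cs.simple r = w₁ := by
    rw [hw1, cs.simple_mul_simple_cancel_right]
  have hdr : cs.length (w * cs.simple r) < cs.length w := by
    rw [hwr]
    omega
  have hwt : w * cs.simple t = w₂ * cs.simple s := by
    rw [hw2, cs.simple_mul_simple_cancel_right]
  have hdt : cs.length (w * cs.simple t) < cs.length w := by
    rw [hwt]
    rcases cs.length_mul_simple w₂ s with h | h <;> omega
  have hwts : w * cs.simple t * cs.simple s = w₂ := by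
    rw [hwt, cs.simple_mul_simple_cancel_right]
  have hdts : cs.length (w * cs.simple t * cs.simple s) < cs.length (w * cs.simple t) := by
    rw [hwts]
    rcases cs.length_mul_simple w t with h | h <;> omega
  exact Stmt4Aux.key cs (cs.length w) w r t s
    hne_rt hrt2 hne_rs hrs2
    hne_st.symm
    (fun h => hst2 (Stmt4Aux.swap_sq cs h))
    le_rfl hdr hdt hdts
end

section
/- Let P = W_I be a finite standard parabolic subgroup of W generated by a set I of two simple reflections, and let w, u ∈ P. Then for every v ∈ P the degree of f_{w,u,v} as a polynomial in ξ is at most l(v), and f_{w,u,v} = 0 for every v ∈ W with v ∉ P. -/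
noncomputable section
namespace HeckeAux

open LaurentPolynomial

attribute [local instance] Classical.propDecidable

variable {B W H : Type*} [Group W] [Ring H] [Algebra (LaurentPolynomial ℤ) H]
  {M : CoxeterMatrix B} (cs : CoxeterSystem M W) (TT : Module.Basis W (LaurentPolynomial ℤ) H)

local notation "A" => LaurentPolynomial ℤ

/-- The `T̃`-coordinate functional `c_v`. -/
def cmap (v : W) : H →ₗ[A] A :=
  (LaurentPolynomial.T (cs.length v : ℤ) : A) • (TT.coord v)

lemma cmap_apply (v : W) (X : H) :
    cmap cs TT v X = (LaurentPolynomial.T (cs.length v : ℤ) : A) * TT.repr X v := by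
  simp [cmap, Module.Basis.coord_apply, smul_eq_mul]

lemma heckeF_eq_cmap (w u v : W) :
    heckeF cs TT w u v = cmap cs TT v (Ttilde cs TT w * Ttilde cs TT u) := by
  rw [heckeF, cmap_apply]

lemma TT_eq_smul_Ttilde (x : W) :
    TT x = (LaurentPolynomial.T (cs.length x : ℤ) : A) • Ttilde cs TT x := by
  rw [Ttilde, smul_smul, ← T_add]
  simp

lemma cmap_Ttilde (v z : W) :
    cmap cs TT v (Ttilde cs TT z) = if z = v then 1 else 0 := by
  rw [cmap_apply, Ttilde, map_smul]
  rw [Module.Basis.repr_self, Finsupp.smul_apply, smul_eq_mul]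
  rcases eq_or_ne z v with rfl | h
  · rw [Finsupp.single_eq_same, if_pos rfl, mul_one, ← T_add]
    norm_num
  · rw [Finsupp.single_eq_of_ne h.symm, if_neg h, mul_zero, mul_zero]

lemma cmap_TT (v x : W) :
    cmap cs TT v (TT x) = if x = v then (LaurentPolynomial.T (cs.length x : ℤ) : A) else 0 := by
  rw [TT_eq_smul_Ttilde cs TT x, map_smul, cmap_Ttilde, smul_eq_mul, mul_ite, mul_one, mul_zero]

lemma Ttilde_one (hT : IsHeckeBasis cs TT) : Ttilde cs TT 1 = 1 := by
  rw [Ttilde, hT.1]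
  simp


lemma Ts_sq (hT : IsHeckeBasis cs TT) (b : B) :
    TT (cs.simple b) * TT (cs.simple b) =
      heckeQ • TT (cs.simple b) - TT (cs.simple b) + heckeQ • (1 : H) := by
  have h := hT.2.1 b
  rw [sub_mul, mul_add, mul_add, mul_one, mul_one] at h
  rw [sub_eq_zero] at h
  have h3 : TT (cs.simple b) * TT (cs.simple b)
      = algebraMap A H heckeQ * TT (cs.simple b) + algebraMap A H heckeQ
        - TT (cs.simple b) := eq_sub_of_add_eq h
  rw [h3, Algebra.smul_def, Algebra.smul_def, mul_one]
  abel

/-- Left multiplication rule, ascent case. -/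
lemma TL1 (hT : IsHeckeBasis cs TT) (b : B) (x : W)
    (h : cs.length (cs.simple b * x) = cs.length x + 1) :
    Ttilde cs TT (cs.simple b) * Ttilde cs TT x = Ttilde cs TT (cs.simple b * x) := by
  have hmul := hT.2.2 (cs.simple b) x (by rw [h, cs.length_simple]; ring)
  rw [Ttilde, Ttilde, Ttilde, smul_mul_assoc, mul_smul_comm, hmul, smul_smul, ← T_add]
  congr 2
  rw [h, cs.length_simple]
  push_cast
  ring

/-- Left multiplication rule, descent case (primed form). -/
lemma TL2' (hT : IsHeckeBasis cs TT) (b : B) (y : W)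
    (hly : cs.length (cs.simple b * y) = cs.length y + 1) :
    Ttilde cs TT (cs.simple b) * Ttilde cs TT (cs.simple b * y)
      = Ttilde cs TT y + heckeXi • Ttilde cs TT (cs.simple b * y) := by
  have hTx : TT (cs.simple b * y) = TT (cs.simple b) * TT y :=
    (hT.2.2 (cs.simple b) y (by rw [hly, cs.length_simple]; ring)).symm
  have key : TT (cs.simple b) * TT (cs.simple b * y)
      = heckeQ • TT y - TT (cs.simple b * y) + heckeQ • TT (cs.simple b * y) := by
    calc TT (cs.simple b) * TT (cs.simple b * y)
        = (TT (cs.simple b) * TT (cs.simple b)) * TT y := by rw [hTx, mul_assoc]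
      _ = (heckeQ • TT (cs.simple b) - TT (cs.simple b) + heckeQ • (1:H)) * TT y := by
          rw [Ts_sq cs TT hT b]
      _ = heckeQ • (TT (cs.simple b) * TT y) - TT (cs.simple b) * TT y
            + heckeQ • TT y := by
          rw [add_mul, sub_mul, smul_mul_assoc, smul_mul_assoc, one_mul]
      _ = heckeQ • TT y - TT (cs.simple b * y) + heckeQ • TT (cs.simple b * y) := by
          rw [← hTx]; abel
  have hpz : (cs.length (cs.simple b * y) : ℤ) = (cs.length y : ℤ) + 1 := by
    exact_mod_cast hly
  simp only [Ttilde, cs.length_simple]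
  rw [smul_mul_assoc, mul_smul_comm, smul_smul, ← T_add, key]
  rw [smul_add, smul_sub, smul_smul, smul_smul, smul_smul]
  have e1 : (T (-1 + -(cs.length (cs.simple b * y) : ℤ)) : A) * heckeQ
      = (T (-(cs.length y : ℤ)) : A) := by
    rw [heckeQ, ← T_add,
      show (-1 + -(cs.length (cs.simple b * y) : ℤ) + 2) = -(cs.length y : ℤ) by omega]
  have e3 : heckeXi * (T (-(cs.length (cs.simple b * y) : ℤ)) : A)
      = (T (-(cs.length y : ℤ)) : A) - T (-1 + -(cs.length (cs.simple b * y) : ℤ)) := by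
    rw [heckeXi, sub_mul, ← T_add, ← T_add,
      show (1 + -(cs.length (cs.simple b * y) : ℤ)) = -(cs.length y : ℤ) by omega]
  push_cast
  rw [e1, e3, sub_smul]
  abel

/-- Left multiplication rule, descent case. -/
lemma TL2 (hT : IsHeckeBasis cs TT) (b : B) (x : W)
    (h : cs.length (cs.simple b * x) + 1 = cs.length x) :
    Ttilde cs TT (cs.simple b) * Ttilde cs TT x
      = Ttilde cs TT (cs.simple b * x) + heckeXi • Ttilde cs TT x := by
  have hc : cs.simple b * (cs.simple b * x) = x := cs.simple_mul_simple_cancel_left b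
  have h2 := TL2' cs TT hT b (cs.simple b * x) (by rw [hc]; omega)
  rw [hc] at h2
  exact h2

/-- Right multiplication rule, ascent case. -/
lemma TR1 (hT : IsHeckeBasis cs TT) (b : B) (x : W)
    (h : cs.length (x * cs.simple b) = cs.length x + 1) :
    Ttilde cs TT x * Ttilde cs TT (cs.simple b) = Ttilde cs TT (x * cs.simple b) := by
  have hmul := hT.2.2 x (cs.simple b) (by rw [h, cs.length_simple])
  rw [Ttilde, Ttilde, Ttilde, smul_mul_assoc, mul_smul_comm, hmul, smul_smul, ← T_add]
  congr 2
  rw [h, cs.length_simple]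
  push_cast
  ring

/-- Right multiplication rule, descent case (primed form). -/
lemma TR2' (hT : IsHeckeBasis cs TT) (b : B) (y : W)
    (hly : cs.length (y * cs.simple b) = cs.length y + 1) :
    Ttilde cs TT (y * cs.simple b) * Ttilde cs TT (cs.simple b)
      = Ttilde cs TT y + heckeXi • Ttilde cs TT (y * cs.simple b) := by
  have hTx : TT (y * cs.simple b) = TT y * TT (cs.simple b) :=
    (hT.2.2 y (cs.simple b) (by rw [hly, cs.length_simple])).symm
  have key : TT (y * cs.simple b) * TT (cs.simple b)
      = heckeQ • TT y - TT (y * cs.simple b) + heckeQ • TT (y * cs.simple b) := by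
    calc TT (y * cs.simple b) * TT (cs.simple b)
        = TT y * (TT (cs.simple b) * TT (cs.simple b)) := by rw [hTx, mul_assoc]
      _ = TT y * (heckeQ • TT (cs.simple b) - TT (cs.simple b) + heckeQ • (1:H)) := by
          rw [Ts_sq cs TT hT b]
      _ = heckeQ • (TT y * TT (cs.simple b)) - TT y * TT (cs.simple b)
            + heckeQ • TT y := by
          rw [mul_add, mul_sub, mul_smul_comm, mul_smul_comm, mul_one]
      _ = heckeQ • TT y - TT (y * cs.simple b) + heckeQ • TT (y * cs.simple b) := by
          rw [← hTx]; abel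
  have hpz : (cs.length (y * cs.simple b) : ℤ) = (cs.length y : ℤ) + 1 := by
    exact_mod_cast hly
  simp only [Ttilde, cs.length_simple]
  rw [smul_mul_assoc, mul_smul_comm, smul_smul, ← T_add, key]
  rw [smul_add, smul_sub, smul_smul, smul_smul, smul_smul]
  have e1 : (T (-(cs.length (y * cs.simple b) : ℤ) + -1) : A) * heckeQ
      = (T (-(cs.length y : ℤ)) : A) := by
    rw [heckeQ, ← T_add,
      show (-(cs.length (y * cs.simple b) : ℤ) + -1 + 2) = -(cs.length y : ℤ) by omega]
  have e3 : heckeXi * (T (-(cs.length (y * cs.simple b) : ℤ)) : A)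
      = (T (-(cs.length y : ℤ)) : A) - T (-(cs.length (y * cs.simple b) : ℤ) + -1) := by
    rw [heckeXi, sub_mul, ← T_add, ← T_add,
      show (1 + -(cs.length (y * cs.simple b) : ℤ)) = -(cs.length y : ℤ) by omega,
      show (-1 + -(cs.length (y * cs.simple b) : ℤ))
        = -(cs.length (y * cs.simple b) : ℤ) + -1 by omega]
  push_cast
  rw [e1, e3, sub_smul]
  abel

/-- Right multiplication rule, descent case. -/
lemma TR2 (hT : IsHeckeBasis cs TT) (b : B) (x : W)
    (h : cs.length (x * cs.simple b) + 1 = cs.length x) :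
    Ttilde cs TT x * Ttilde cs TT (cs.simple b)
      = Ttilde cs TT (x * cs.simple b) + heckeXi • Ttilde cs TT x := by
  have hc : (x * cs.simple b) * cs.simple b = x := cs.simple_mul_simple_cancel_right b
  have h2 := TR2' cs TT hT b (x * cs.simple b) (by rw [hc]; omega)
  rw [hc] at h2
  exact h2

/-- The trace property: `τ(T̃_x T̃_y) = δ_{y, x⁻¹}`. -/
lemma trace_eq (hT : IsHeckeBasis cs TT) :
    ∀ y x : W, cmap cs TT 1 (Ttilde cs TT x * Ttilde cs TT y)
      = if y = x⁻¹ then 1 else 0 := by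
  intro y
  induction' hn : cs.length y using Nat.strong_induction_on with n ih generalizing y
  intro x
  rcases eq_or_ne y 1 with rfl | hy
  · rw [Ttilde_one cs TT hT, mul_one, cmap_Ttilde]
    congr 1
    simp [eq_comm, inv_eq_one]
  · obtain ⟨b, hb⟩ := cs.exists_leftDescent_of_ne_one hy
    rw [cs.isLeftDescent_iff] at hb
    have hc : cs.simple b * (cs.simple b * y) = y := cs.simple_mul_simple_cancel_left b
    have hasc : cs.length (cs.simple b * (cs.simple b * y))
        = cs.length (cs.simple b * y) + 1 := by rw [hc]; omega
    have hyy : Ttilde cs TT y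
        = Ttilde cs TT (cs.simple b) * Ttilde cs TT (cs.simple b * y) := by
      rw [TL1 cs TT hT b (cs.simple b * y) hasc, hc]
    have hlt : cs.length (cs.simple b * y) < n := by omega
    rw [hyy, ← mul_assoc]
    rcases cs.length_mul_simple x b with hxb | hxb
    · -- ascent for x
      rw [TR1 cs TT hT b x hxb,
        ih (cs.length (cs.simple b * y)) hlt (cs.simple b * y) rfl (x * cs.simple b)]
      congr 1
      rw [mul_inv_rev, cs.inv_simple, eq_iff_iff]
      exact mul_right_inj _
    · -- descent for x
      rw [TR2 cs TT hT b x hxb, add_mul, smul_mul_assoc, map_add, map_smul,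
        ih (cs.length (cs.simple b * y)) hlt (cs.simple b * y) rfl (x * cs.simple b),
        ih (cs.length (cs.simple b * y)) hlt (cs.simple b * y) rfl x]
      have hne : cs.simple b * y ≠ x⁻¹ := by
        intro h2
        have h3 : y = cs.simple b * x⁻¹ := by
          rw [← hc, h2]
        have h4 : y = (x * cs.simple b)⁻¹ := by
          rw [mul_inv_rev, cs.inv_simple, ← h3]
        have h5 : cs.length y = cs.length (x * cs.simple b) := by
          rw [h4, cs.length_inv]
        have h6 : cs.length (cs.simple b * y) = cs.length x⁻¹ := by rw [h2]
        rw [cs.length_inv] at h6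
        omega
      rw [if_neg hne, smul_zero, add_zero]
      congr 1
      rw [mul_inv_rev, cs.inv_simple, eq_iff_iff]
      exact mul_right_inj _

lemma cmap_eq_trace (hT : IsHeckeBasis cs TT) (v : W) :
    cmap cs TT v
      = (cmap cs TT 1).comp (LinearMap.mulRight (LaurentPolynomial ℤ) (Ttilde cs TT v⁻¹)) :=
  Module.Basis.ext TT fun x => by
    simp only [LinearMap.comp_apply, LinearMap.mulRight_apply]
    rw [cmap_TT, TT_eq_smul_Ttilde cs TT x, smul_mul_assoc, map_smul,
      trace_eq cs TT hT v⁻¹ x, smul_eq_mul]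
    rcases eq_or_ne x v with rfl | h
    · rw [if_pos rfl, if_pos rfl, mul_one]
    · rw [if_neg h, if_neg (fun h2 => h (inv_injective h2).symm), mul_zero]

lemma cmap_eq_trace' (hT : IsHeckeBasis cs TT) (v : W) (X : H) :
    cmap cs TT v X = cmap cs TT 1 (X * Ttilde cs TT v⁻¹) :=
  LinearMap.congr_fun (cmap_eq_trace cs TT hT v) X

lemma tau_comm (hT : IsHeckeBasis cs TT) (a c : H) :
    cmap cs TT 1 (a * c) = cmap cs TT 1 (c * a) := by
  have h1 : ∀ x : W, (cmap cs TT 1).comp (LinearMap.mulLeft (LaurentPolynomial ℤ) (TT x))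
      = (cmap cs TT 1).comp (LinearMap.mulRight (LaurentPolynomial ℤ) (TT x)) := by
    intro x
    refine Module.Basis.ext TT fun y => ?_
    simp only [LinearMap.comp_apply, LinearMap.mulLeft_apply, LinearMap.mulRight_apply]
    rw [TT_eq_smul_Ttilde cs TT x, TT_eq_smul_Ttilde cs TT y, smul_mul_assoc, mul_smul_comm,
      smul_mul_assoc, mul_smul_comm, map_smul, map_smul, map_smul, map_smul,
      trace_eq cs TT hT y x, trace_eq cs TT hT x y, smul_smul, smul_smul]
    rcases eq_or_ne y x⁻¹ with rfl | h
    · rw [if_pos rfl, if_pos (by rw [inv_inv]), mul_comm]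
    · rw [if_neg h, if_neg (fun h2 => h (by rw [h2, inv_inv])), smul_zero, smul_zero]
  have h2 : (cmap cs TT 1).comp (LinearMap.mulRight (LaurentPolynomial ℤ) c)
      = (cmap cs TT 1).comp (LinearMap.mulLeft (LaurentPolynomial ℤ) c) := by
    refine Module.Basis.ext TT fun x => ?_
    simpa only [LinearMap.comp_apply, LinearMap.mulLeft_apply, LinearMap.mulRight_apply]
      using (LinearMap.congr_fun (h1 x) c)
  exact LinearMap.congr_fun h2 a

/-- Cyclic symmetry of the structure constants: `f_{w,u,v} = f_{v⁻¹,w,u⁻¹}`. -/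
lemma heckeF_cyclic (hT : IsHeckeBasis cs TT) (w u v : W) :
    heckeF cs TT w u v = heckeF cs TT v⁻¹ w u⁻¹ := by
  rw [heckeF_eq_cmap, heckeF_eq_cmap, cmap_eq_trace' cs TT hT v, cmap_eq_trace' cs TT hT u⁻¹,
    inv_inv, tau_comm cs TT hT, mul_assoc]

lemma simple_mul_eq_iff (b : B) (x v : W) :
    cs.simple b * x = v ↔ x = cs.simple b * v := by
  constructor
  · intro h
    rw [← h, cs.simple_mul_simple_cancel_left]
  · intro h
    rw [h, cs.simple_mul_simple_cancel_left]

/-- Left recursion for coordinates, ascent case. -/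
lemma rec1 (hT : IsHeckeBasis cs TT) (b : B) (v : W)
    (hv : cs.length (cs.simple b * v) = cs.length v + 1) (X : H) :
    cmap cs TT v (Ttilde cs TT (cs.simple b) * X) = cmap cs TT (cs.simple b * v) X := by
  have key : (cmap cs TT v).comp
        (LinearMap.mulLeft (LaurentPolynomial ℤ) (Ttilde cs TT (cs.simple b)))
      = cmap cs TT (cs.simple b * v) := by
    refine Module.Basis.ext TT fun x => ?_
    simp only [LinearMap.comp_apply, LinearMap.mulLeft_apply]
    rw [TT_eq_smul_Ttilde cs TT x, mul_smul_comm, map_smul, map_smul, cmap_Ttilde]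
    rcases cs.length_simple_mul x b with hxb | hxb
    · rw [TL1 cs TT hT b x hxb, cmap_Ttilde, simple_mul_eq_iff]
    · rw [TL2 cs TT hT b x hxb, map_add, map_smul, cmap_Ttilde, cmap_Ttilde, simple_mul_eq_iff]
      have hxv : x ≠ v := by
        intro h2
        subst h2
        omega
      rw [if_neg hxv, smul_zero, add_zero]
  exact LinearMap.congr_fun key X

/-- Left recursion for coordinates, descent case. -/
lemma rec2 (hT : IsHeckeBasis cs TT) (b : B) (v : W)
    (hv : cs.length (cs.simple b * v) + 1 = cs.length v) (X : H) :
    cmap cs TT v (Ttilde cs TT (cs.simple b) * X)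
      = cmap cs TT (cs.simple b * v) X + heckeXi * cmap cs TT v X := by
  have key : (cmap cs TT v).comp
        (LinearMap.mulLeft (LaurentPolynomial ℤ) (Ttilde cs TT (cs.simple b)))
      = cmap cs TT (cs.simple b * v) + heckeXi • cmap cs TT v := by
    refine Module.Basis.ext TT fun x => ?_
    simp only [LinearMap.comp_apply, LinearMap.mulLeft_apply, LinearMap.add_apply,
      LinearMap.smul_apply]
    rw [TT_eq_smul_Ttilde cs TT x, mul_smul_comm, map_smul, map_smul, map_smul, cmap_Ttilde,
      cmap_Ttilde]
    rcases cs.length_simple_mul x b with hxb | hxb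
    · rw [TL1 cs TT hT b x hxb, cmap_Ttilde, simple_mul_eq_iff]
      have hxv : x ≠ v := by
        intro h2
        subst h2
        omega
      rw [if_neg hxv]
      simp
    · rw [TL2 cs TT hT b x hxb, map_add, map_smul, cmap_Ttilde, cmap_Ttilde, simple_mul_eq_iff,
        smul_add, smul_smul, smul_smul, mul_comm heckeXi]
  have h2 := LinearMap.congr_fun key X
  simpa only [LinearMap.comp_apply, LinearMap.mulLeft_apply, LinearMap.add_apply,
    LinearMap.smul_apply, smul_eq_mul] using h2

/-- The easy degree bound: `f_{w,u,v}` is a polynomial in `ξ` of degree at most `l(w)`. -/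
lemma deg_bound (hT : IsHeckeBasis cs TT) :
    ∀ w u v : W, ∃ p : Polynomial ℤ, p.natDegree ≤ cs.length w ∧
      Polynomial.aeval heckeXi p = heckeF cs TT w u v := by
  intro w
  induction' hn : cs.length w using Nat.strong_induction_on with n ih generalizing w
  intro u v
  rcases eq_or_ne w 1 with rfl | hw
  · refine ⟨if u = v then 1 else 0, ?_, ?_⟩
    · split <;> simp
    · rw [heckeF_eq_cmap, Ttilde_one cs TT hT, one_mul, cmap_Ttilde]
      split <;> simp
  · obtain ⟨b, hb⟩ := cs.exists_leftDescent_of_ne_one hw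
    rw [cs.isLeftDescent_iff] at hb
    have hc : cs.simple b * (cs.simple b * w) = w := cs.simple_mul_simple_cancel_left b
    have hasc : cs.length (cs.simple b * (cs.simple b * w))
        = cs.length (cs.simple b * w) + 1 := by rw [hc]; omega
    have hyy : Ttilde cs TT w
        = Ttilde cs TT (cs.simple b) * Ttilde cs TT (cs.simple b * w) := by
      rw [TL1 cs TT hT b (cs.simple b * w) hasc, hc]
    have hlt : cs.length (cs.simple b * w) < n := by omega
    rw [heckeF_eq_cmap, hyy, mul_assoc]
    rcases cs.length_simple_mul v b with hvb | hvb
    · rw [rec1 cs TT hT b v hvb, ← heckeF_eq_cmap]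
      obtain ⟨p, hp1, hp2⟩ := ih _ hlt (cs.simple b * w) rfl u (cs.simple b * v)
      exact ⟨p, by omega, hp2⟩
    · rw [rec2 cs TT hT b v hvb, ← heckeF_eq_cmap, ← heckeF_eq_cmap]
      obtain ⟨p₁, hp11, hp12⟩ := ih _ hlt (cs.simple b * w) rfl u (cs.simple b * v)
      obtain ⟨p₂, hp21, hp22⟩ := ih _ hlt (cs.simple b * w) rfl u v
      refine ⟨p₁ + Polynomial.X * p₂, ?_, ?_⟩
      · apply le_trans (Polynomial.natDegree_add_le _ _)
        apply max_le (by omega)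
        apply le_trans (Polynomial.natDegree_mul_le)
        have := Polynomial.natDegree_X_le (R := ℤ)
        omega
      · rw [map_add, map_mul, Polynomial.aeval_X, hp12, hp22]

section Part2

lemma TT_mem_span (P : Subgroup W) {z : W} (hz : z ∈ P) :
    TT z ∈ Submodule.span (LaurentPolynomial ℤ) (TT '' (P : Set W)) :=
  Submodule.subset_span ⟨z, hz, rfl⟩

lemma Ttilde_mem_span (P : Subgroup W) {z : W} (hz : z ∈ P) :
    Ttilde cs TT z ∈ Submodule.span (LaurentPolynomial ℤ) (TT '' (P : Set W)) :=
  Submodule.smul_mem _ _ (TT_mem_span TT P hz)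

lemma simple_mul_span_mem (hT : IsHeckeBasis cs TT) (P : Subgroup W) (b : B)
    (hb : cs.simple b ∈ P) (m : H)
    (hm : m ∈ Submodule.span (LaurentPolynomial ℤ) (TT '' (P : Set W))) :
    Ttilde cs TT (cs.simple b) * m
      ∈ Submodule.span (LaurentPolynomial ℤ) (TT '' (P : Set W)) := by
  have key : Submodule.map (LinearMap.mulLeft (LaurentPolynomial ℤ)
        (Ttilde cs TT (cs.simple b)))
        (Submodule.span (LaurentPolynomial ℤ) (TT '' (P : Set W)))
      ≤ Submodule.span (LaurentPolynomial ℤ) (TT '' (P : Set W)) := by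
    rw [Submodule.map_span_le]
    rintro _ ⟨x, hx, rfl⟩
    simp only [LinearMap.mulLeft_apply]
    rw [TT_eq_smul_Ttilde cs TT x, mul_smul_comm]
    apply Submodule.smul_mem
    rcases cs.length_simple_mul x b with hxb | hxb
    · rw [TL1 cs TT hT b x hxb]
      exact Ttilde_mem_span cs TT P (mul_mem hb hx)
    · rw [TL2 cs TT hT b x hxb]
      exact add_mem (Ttilde_mem_span cs TT P (mul_mem hb hx))
        (Submodule.smul_mem _ _ (Ttilde_mem_span cs TT P hx))
  exact key ⟨m, hm, rfl⟩

lemma prod_mem_span (hT : IsHeckeBasis cs TT) (i j : B) :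
    ∀ ω : List B, (∀ b ∈ ω, b = i ∨ b = j) →
      ∀ u ∈ Subgroup.closure {cs.simple i, cs.simple j},
        Ttilde cs TT (cs.wordProd ω) * Ttilde cs TT u
          ∈ Submodule.span (LaurentPolynomial ℤ)
              (TT '' ((Subgroup.closure {cs.simple i, cs.simple j} : Subgroup W) : Set W)) := by
  intro ω
  induction ω with
  | nil =>
    intro _ u hu
    rw [cs.wordProd_nil, Ttilde_one cs TT hT, one_mul]
    exact Ttilde_mem_span cs TT _ hu
  | cons b ω' ihw =>
    intro hletters u hu
    have hb : cs.simple b ∈ Subgroup.closure {cs.simple i, cs.simple j} := by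
      apply Subgroup.subset_closure
      rcases hletters b List.mem_cons_self with rfl | rfl
      · exact Set.mem_insert _ _
      · exact Set.mem_insert_iff.mpr (Or.inr rfl)
    have hw2 := ihw (fun c hc => hletters c (List.mem_cons_of_mem _ hc)) u hu
    rw [cs.wordProd_cons]
    rcases cs.length_simple_mul (cs.wordProd ω') b with h | h
    · rw [← TL1 cs TT hT b _ h, mul_assoc]
      exact simple_mul_span_mem cs TT hT _ b hb _ hw2
    · have h3 : Ttilde cs TT (cs.simple b * cs.wordProd ω')
          = Ttilde cs TT (cs.simple b) * Ttilde cs TT (cs.wordProd ω')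
            - heckeXi • Ttilde cs TT (cs.wordProd ω') := by
        rw [eq_sub_iff_add_eq, ← TL2 cs TT hT b _ h]
      rw [h3, sub_mul, smul_mul_assoc, mul_assoc]
      exact sub_mem (simple_mul_span_mem cs TT hT _ b hb _ hw2)
        (Submodule.smul_mem _ _ hw2)

lemma exists_word (i j : B) {w : W}
    (hw : w ∈ Subgroup.closure {cs.simple i, cs.simple j}) :
    ∃ ω : List B, (∀ b ∈ ω, b = i ∨ b = j) ∧ cs.wordProd ω = w := by
  induction hw using Subgroup.closure_induction with
  | mem x hx =>
    rcases hx with rfl | rfl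
    · exact ⟨[i], by simp, by simp⟩
    · exact ⟨[j], by simp, by simp⟩
  | one => exact ⟨[], by simp, by simp⟩
  | mul x y hx hy ihx ihy =>
    obtain ⟨ω₁, h₁, rfl⟩ := ihx
    obtain ⟨ω₂, h₂, rfl⟩ := ihy
    exact ⟨ω₁ ++ ω₂, by
      intro b hb
      rcases List.mem_append.mp hb with h | h
      · exact h₁ b h
      · exact h₂ b h, by rw [cs.wordProd_append]⟩
  | inv x hx ihx =>
    obtain ⟨ω₁, h₁, rfl⟩ := ihx
    exact ⟨ω₁.reverse, fun b hb => h₁ b (List.mem_reverse.mp hb), by rw [cs.wordProd_reverse]⟩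

end Part2

end HeckeAux
end

/-- Let `P` be a finite standard parabolic subgroup of `W` generated by two
simple reflections `s_i, s_j` (`i ≠ j`), and let `w, u ∈ P`.  Then for every `v ∈ P` the degree
of `f_{w,u,v}` as a polynomial in `ξ` is at most `l(v)`, and `f_{w,u,v} = 0` for `v ∉ P`. -/
theorem stmt_10 {B W H : Type*} [Group W] [Ring H] [Algebra (LaurentPolynomial ℤ) H]
    {M : CoxeterMatrix B} (cs : CoxeterSystem M W)
    (TT : Module.Basis W (LaurentPolynomial ℤ) H) (hT : IsHeckeBasis cs TT)
    (i j : B) (hij : i ≠ j)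
    (hfin : (Subgroup.closure {cs.simple i, cs.simple j} : Set W).Finite)
    (w u : W) (hw : w ∈ Subgroup.closure {cs.simple i, cs.simple j})
    (hu : u ∈ Subgroup.closure {cs.simple i, cs.simple j}) :
    (∀ v ∈ Subgroup.closure {cs.simple i, cs.simple j},
      ∃ p : Polynomial ℤ, p.natDegree ≤ cs.length v ∧
        Polynomial.aeval heckeXi p = heckeF cs TT w u v) ∧
    (∀ v : W, v ∉ Subgroup.closure {cs.simple i, cs.simple j} → heckeF cs TT w u v = 0) := by
  constructor
  · intro v _
    obtain ⟨p, hp1, hp2⟩ := HeckeAux.deg_bound cs TT hT v⁻¹ w u⁻¹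
    rw [cs.length_inv] at hp1
    refine ⟨p, hp1, ?_⟩
    rw [HeckeAux.heckeF_cyclic cs TT hT w u v]
    exact hp2
  · intro v hv
    obtain ⟨ω, hω, hπ⟩ := HeckeAux.exists_word cs i j hw
    have hmem := HeckeAux.prod_mem_span cs TT hT i j ω hω u hu
    rw [hπ] at hmem
    have hsupp := (Module.Basis.mem_span_image TT).mp hmem
    have hzero : TT.repr (Ttilde cs TT w * Ttilde cs TT u) v = 0 := by
      by_contra hne
      exact hv (hsupp (Finsupp.mem_support_iff.mpr hne))
    rw [heckeF, hzero, mul_zero]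
end

section
/- Let I ⊆ S be such that the standard parabolic subgroup W_I is finite, and let w_I be the longest element of W_I. Then the structure constant f_{w_I, w_I, w_I}, as a polynomial in ξ, has degree exactly l(w_I). -/
namespace StmtAux

open scoped Classical

variable {B W : Type*} [Group W] {M : CoxeterMatrix B} (cs : CoxeterSystem M W)

/-- The sign-flipping involution attached to a simple reflection. -/
noncomputable def mu (i : B) : W × ℤˣ → W × ℤˣ := fun p =>
  (cs.simple i * p.1 * cs.simple i, if p.1 = cs.simple i then -p.2 else p.2)

lemma mu_involutive (i : B) : Function.Involutive (mu cs i) := by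
  rintro ⟨t, e⟩
  simp only [mu]
  have hs := cs.simple_mul_simple_self i
  have h1 : cs.simple i * (cs.simple i * t * cs.simple i) * cs.simple i = t := by
    rw [show cs.simple i * (cs.simple i * t * cs.simple i) * cs.simple i
        = (cs.simple i * cs.simple i) * t * (cs.simple i * cs.simple i) by group,
      hs, one_mul, mul_one]
  have h2 : (cs.simple i * t * cs.simple i = cs.simple i) ↔ t = cs.simple i := by
    constructor
    · intro h
      rw [h] at h1
      rw [← h1, hs, one_mul]
    · rintro rfl
      rw [hs, one_mul]
  rw [Prod.ext_iff]
  refine ⟨h1, ?_⟩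
  simp only [h2]
  by_cases h : t = cs.simple i <;> simp [h]


/-- The permutation attached to a simple reflection. -/
noncomputable def eperm (i : B) : Equiv.Perm (W × ℤˣ) := (mu_involutive cs i).toPerm

@[simp] lemma eperm_apply (i : B) (p : W × ℤˣ) : eperm cs i p = mu cs i p := rfl

lemma conj_eq_iff {c t y : W} : c * t * c⁻¹ = y ↔ t = c⁻¹ * y * c :=
  ⟨fun h => by rw [← h]; group, fun h => by rw [h]; group⟩

section GrpAux

variable {G : Type*} [Group G] {x y : G}

lemma inv_pow_mul_invol (hx : x * x = 1) (hy : y * y = 1) (k : ℕ) :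
    ((x * y) ^ k)⁻¹ * y = y * (x * y) ^ k := by
  induction k with
  | zero => simp
  | succ k ih =>
    calc ((x * y) ^ (k+1))⁻¹ * y
        = (x * y)⁻¹ * (((x * y) ^ k)⁻¹ * y) := by rw [pow_succ, mul_inv_rev, mul_assoc]
      _ = (x * y)⁻¹ * (y * (x * y) ^ k) := by rw [ih]
      _ = ((y⁻¹ * x⁻¹) * y) * (x * y) ^ k := by rw [mul_inv_rev, ← mul_assoc]
      _ = ((y * x) * y) * (x * y) ^ k := by
          rw [inv_eq_of_mul_eq_one_right hx, inv_eq_of_mul_eq_one_right hy]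
      _ = y * ((x * y) * (x * y) ^ k) := by simp only [mul_assoc]
      _ = y * (x * y) ^ (k+1) := by rw [← pow_succ']

lemma cond1_iff (hx : x * x = 1) (hy : y * y = 1) (k : ℕ) (t : G) :
    ((x * y) ^ k * t * ((x * y) ^ k)⁻¹ = y) ↔ t = y * (x * y) ^ (2 * k) := by
  rw [conj_eq_iff, inv_pow_mul_invol hx hy k, mul_assoc, ← pow_add, ← two_mul]

lemma cond2_iff (hx : x * x = 1) (hy : y * y = 1) (k : ℕ) (t : G) :
    (y * ((x * y) ^ k * t * ((x * y) ^ k)⁻¹) * y = x) ↔ t = y * (x * y) ^ (2 * k + 1) := by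
  have h1 : ∀ u : G, (y * u * y = x) ↔ (u = y * x * y) := by
    intro u
    constructor
    · intro h
      have h' := congrArg (fun z => y * z * y) h
      rw [show y * (y * u * y) * y = (y * y) * u * (y * y) by simp only [mul_assoc], hy, one_mul, mul_one] at h'
      exact h'
    · rintro rfl
      rw [show y * (y * x * y) * y = (y * y) * x * (y * y) by simp only [mul_assoc], hy, one_mul, mul_one]
  rw [h1, conj_eq_iff,
    show ((x * y) ^ k)⁻¹ * (y * x * y) * (x * y) ^ k
      = (((x * y) ^ k)⁻¹ * y) * (x * (y * (x * y) ^ k)) by simp only [mul_assoc],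
    inv_pow_mul_invol hx hy k,
    show y * (x * y) ^ k * (x * (y * (x * y) ^ k)) = y * ((x * y) ^ k * (x * y) * (x * y) ^ k)
      by simp only [mul_assoc],
    ← pow_succ, ← pow_add, show k + 1 + k = 2 * k + 1 by ring]

lemma conj_conj (hx : x * x = 1) (hy : y * y = 1) (k : ℕ) (t : G) :
    x * (y * ((x * y) ^ k * t * ((x * y) ^ k)⁻¹) * y) * x
      = (x * y) ^ (k+1) * t * ((x * y) ^ (k+1))⁻¹ := by
  calc x * (y * ((x * y) ^ k * t * ((x * y) ^ k)⁻¹) * y) * x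
      = ((x * y) * (x * y) ^ k) * t * (((x * y) ^ k)⁻¹ * (y⁻¹ * x⁻¹)) := by
        rw [inv_eq_of_mul_eq_one_right hx, inv_eq_of_mul_eq_one_right hy]
        group
    _ = ((x * y) * (x * y) ^ k) * t * (((x * y) * (x * y) ^ k))⁻¹ := by
        rw [mul_inv_rev ((x*y)) ((x*y)^k), ← mul_inv_rev x y]
    _ = (x * y) ^ (k+1) * t * ((x * y) ^ (k+1))⁻¹ := by rw [← pow_succ']

end GrpAux

lemma eperm_mul_pow (i i' : B) (k : ℕ) (t : W) (e : ℤˣ) :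
    ((eperm cs i * eperm cs i') ^ k) (t, e)
      = ((cs.simple i * cs.simple i') ^ k * t * ((cs.simple i * cs.simple i') ^ k)⁻¹,
         e * ∏ j ∈ Finset.range (2 * k),
           (if t = cs.simple i' * (cs.simple i * cs.simple i') ^ j then (-1 : ℤˣ) else 1)) := by
  have hx := cs.simple_mul_simple_self i
  have hy := cs.simple_mul_simple_self i'
  induction k with
  | zero => simp
  | succ k ih =>
    rw [pow_succ', Equiv.Perm.mul_apply, ih]
    rw [show 2 * (k + 1) = (2 * k + 1) + 1 by ring, Finset.prod_range_succ,
      Finset.prod_range_succ]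
    rw [Equiv.Perm.mul_apply, eperm_apply, eperm_apply]
    simp only [mu]
    refine Prod.ext ?_ ?_
    · exact conj_conj hx hy k t
    · simp only [cond1_iff hx hy k t, cond2_iff hx hy k t]
      by_cases h1 : t = cs.simple i' * (cs.simple i * cs.simple i') ^ (2 * k) <;>
        by_cases h2 : t = cs.simple i' * (cs.simple i * cs.simple i') ^ (2 * k + 1) <;>
        simp [h1, h2] <;> ring_nf

lemma eperm_liftable : M.IsLiftable (eperm cs) := by
  intro i i'
  ext ⟨t, e⟩
  · rw [eperm_mul_pow cs i i' (M i i') t e]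
    rw [cs.simple_mul_simple_pow i i']
    simp
  · rw [eperm_mul_pow cs i i' (M i i') t e]
    simp only [Equiv.Perm.one_apply]
    rw [two_mul, Finset.prod_range_add]
    have hf : ∀ j, (if t = cs.simple i' * (cs.simple i * cs.simple i') ^ (M i i' + j)
        then (-1 : ℤˣ) else 1)
        = (if t = cs.simple i' * (cs.simple i * cs.simple i') ^ j then (-1 : ℤˣ) else 1) := by
      intro j
      rw [pow_add, cs.simple_mul_simple_pow i i', one_mul]
    simp only [hf]
    rw [Int.units_mul_self, mul_one]

/-- The sign homomorphism `W →* Perm (W × ℤˣ)`. -/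
noncomputable def phi : W →* Equiv.Perm (W × ℤˣ) :=
  CoxeterSystem.lift cs ⟨eperm cs, eperm_liftable cs⟩

/-- The sign of a word at a reflection-candidate `t`. -/
noncomputable def sgn (ω : List B) (t : W) : ℤˣ :=
  ((cs.rightInvSeq ω).map (fun r => if t = r then (-1 : ℤˣ) else 1)).prod

lemma phi_wordProd (ω : List B) (t : W) (e : ℤˣ) :
    phi cs (cs.wordProd ω) (t, e)
      = (cs.wordProd ω * t * (cs.wordProd ω)⁻¹, e * sgn cs ω t) := by
  induction ω generalizing e with
  | nil => simp [sgn]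
  | cons i ω ih =>
    rw [cs.wordProd_cons, map_mul, Equiv.Perm.mul_apply, ih]
    rw [show phi cs (cs.simple i) = eperm cs i from cs.lift_apply_simple (eperm_liftable cs) i]
    rw [eperm_apply]
    simp only [mu]
    have hris : cs.rightInvSeq (i :: ω)
        = (cs.wordProd ω)⁻¹ * (cs.simple i) * (cs.wordProd ω) :: cs.rightInvSeq ω := rfl
    have hsgn : sgn cs (i :: ω) t
        = (if t = (cs.wordProd ω)⁻¹ * (cs.simple i) * (cs.wordProd ω) then (-1 : ℤˣ) else 1)
            * sgn cs ω t := by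
      rw [sgn, hris, List.map_cons, List.prod_cons, sgn]
    refine Prod.ext ?_ ?_
    · show cs.simple i * (cs.wordProd ω * t * (cs.wordProd ω)⁻¹) * cs.simple i = _
      rw [mul_inv_rev, cs.inv_simple]
      simp only [mul_assoc]
    · show (if cs.wordProd ω * t * (cs.wordProd ω)⁻¹ = cs.simple i
          then -(e * sgn cs ω t) else e * sgn cs ω t) = e * sgn cs (i :: ω) t
      rw [hsgn, conj_eq_iff]
      by_cases h : t = (cs.wordProd ω)⁻¹ * cs.simple i * cs.wordProd ω <;> simp [h] <;> ring_nf

lemma sgn_eq_of_wordProd_eq {ω ω' : List B} (h : cs.wordProd ω = cs.wordProd ω') (t : W) :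
    sgn cs ω t = sgn cs ω' t := by
  have h1 := phi_wordProd cs ω t 1
  have h2 := phi_wordProd cs ω' t 1
  rw [h] at h1
  rw [h1] at h2
  have := congrArg Prod.snd h2
  simpa using this

lemma mem_rightInvSeq_of_sgn_ne_one {ω : List B} {t : W} (h : sgn cs ω t ≠ 1) :
    t ∈ cs.rightInvSeq ω := by
  by_contra hmem
  apply h
  rw [sgn]
  apply List.prod_eq_one
  intro u hu
  rw [List.mem_map] at hu
  obtain ⟨r, hr, rfl⟩ := hu
  rw [if_neg]
  intro heq
  exact hmem (heq ▸ hr)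

lemma sgn_eq_neg_one_of_nodup {l : List W} {t : W} (hmem : t ∈ l) (hnd : l.Nodup) :
    (l.map (fun r => if t = r then (-1 : ℤˣ) else 1)).prod = -1 := by
  induction l with
  | nil => cases hmem
  | cons a l ih =>
    rw [List.nodup_cons] at hnd
    rw [List.map_cons, List.prod_cons]
    rcases List.mem_cons.mp hmem with heq | hmem'
    · subst heq
      rw [if_pos rfl]
      have : (l.map (fun r => if t = r then (-1 : ℤˣ) else 1)).prod = 1 := by
        apply List.prod_eq_one
        intro u hu
        rw [List.mem_map] at hu
        obtain ⟨r, hr, rfl⟩ := hu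
        rw [if_neg]
        intro heq
        exact hnd.1 (heq ▸ hr)
      rw [this, mul_one]
    · have hne : t ≠ a := fun heq => hnd.1 (heq ▸ hmem')
      rw [if_neg hne, one_mul]
      exact ih hmem' hnd.2

/-- Exchange property for simple reflections, for arbitrary words. -/
lemma simple_mem_rightInvSeq {ω : List B} {i : B}
    (h : cs.length (cs.wordProd ω * cs.simple i) < cs.length (cs.wordProd ω)) :
    cs.simple i ∈ cs.rightInvSeq ω := by
  obtain ⟨τ, hτred, hτprod⟩ := cs.exists_reduced_word' (cs.wordProd ω * cs.simple i)
  have hωτ : cs.wordProd ω = cs.wordProd (τ.concat i) := by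
    rw [cs.wordProd_concat, ← hτprod, cs.simple_mul_simple_cancel_right]
  have hlen : cs.length (cs.wordProd ω) = cs.length (cs.wordProd ω * cs.simple i) + 1 := by
    rcases cs.length_mul_simple (cs.wordProd ω) i with h' | h' <;> omega
  have hred : cs.IsReduced (τ.concat i) := by
    unfold CoxeterSystem.IsReduced
    rw [← hωτ, List.length_concat, ← hτred, ← hτprod]
    exact hlen
  have hmem : cs.simple i ∈ cs.rightInvSeq (τ.concat i) := by
    rw [cs.rightInvSeq_concat, List.concat_eq_append]
    exact List.mem_append_right _ (List.mem_singleton.mpr rfl)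
  have hsgn : sgn cs (τ.concat i) (cs.simple i) = -1 :=
    sgn_eq_neg_one_of_nodup hmem hred.nodup_rightInvSeq
  have hsgn' : sgn cs ω (cs.simple i) = -1 := by
    rw [sgn_eq_of_wordProd_eq cs hωτ, hsgn]
  exact mem_rightInvSeq_of_sgn_ne_one cs (by rw [hsgn']; decide)

lemma exists_eraseIdx_of_descent {ω : List B} {i : B}
    (h : cs.length (cs.wordProd ω * cs.simple i) < cs.length (cs.wordProd ω)) :
    ∃ j, j < ω.length ∧ cs.wordProd ω * cs.simple i = cs.wordProd (ω.eraseIdx j) := by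
  have hmem := simple_mem_rightInvSeq cs h
  obtain ⟨j, hj, hgetj⟩ := List.mem_iff_getElem.mp hmem
  rw [cs.length_rightInvSeq] at hj
  refine ⟨j, hj, ?_⟩
  have := cs.wordProd_mul_getD_rightInvSeq ω j
  rwa [List.getD_eq_getElem _ 1 (by rw [cs.length_rightInvSeq]; exact hj), hgetj] at this

/-- Every word has a reduced word with the same product, using only letters of itself. -/
lemma exists_reduced_word_sub (ω : List B) :
    ∃ ω' : List B, cs.IsReduced ω' ∧ cs.wordProd ω' = cs.wordProd ω ∧ ∀ i ∈ ω', i ∈ ω := by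
  induction ω using List.reverseRecOn with
  | nil => exact ⟨[], by simp [CoxeterSystem.IsReduced], rfl, by simp⟩
  | append_singleton ω₀ i ih =>
    obtain ⟨τ, hτred, hτprod, hτsub⟩ := ih
    rcases cs.length_mul_simple (cs.wordProd τ) i with hup | hdown
    · refine ⟨τ.concat i, ?_, ?_, ?_⟩
      · unfold CoxeterSystem.IsReduced
        rw [cs.wordProd_concat, List.length_concat, hup, hτred]
      · rw [cs.wordProd_concat, hτprod, cs.wordProd_append]
        simp
      · intro j hj
        rw [List.concat_eq_append, List.mem_append] at hj
        rcases hj with hj' | hj'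
        · exact List.mem_append_left _ (hτsub j hj')
        · exact List.mem_append_right _ hj'
    · have hlt : cs.length (cs.wordProd τ * cs.simple i) < cs.length (cs.wordProd τ) := by
        omega
      obtain ⟨j, hj, hjprod⟩ := exists_eraseIdx_of_descent cs hlt
      refine ⟨τ.eraseIdx j, ?_, ?_, ?_⟩
      · unfold CoxeterSystem.IsReduced
        have hlen2 : (τ.eraseIdx j).length + 1 = τ.length := List.length_eraseIdx_add_one hj
        rw [← hjprod]
        rw [hτred] at hdown
        omega
      · rw [← hjprod, hτprod, cs.wordProd_append]
        simp
      · intro l hl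
        exact List.mem_append_left _ (hτsub l ((List.eraseIdx_sublist τ j).mem hl))

/-- Every element of a standard parabolic subgroup is the product of a word with letters
in the generating set. -/
lemma exists_word_of_mem_closure {I : Set B} {w : W}
    (h : w ∈ Subgroup.closure (cs.simple '' I)) :
    ∃ ω : List B, (∀ i ∈ ω, i ∈ I) ∧ cs.wordProd ω = w := by
  induction h using Subgroup.closure_induction with
  | mem z hz =>
    obtain ⟨i, hi, rfl⟩ := hz
    exact ⟨[i], by simpa using hi, cs.wordProd_singleton i⟩
  | one => exact ⟨[], by simp, cs.wordProd_nil⟩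
  | mul z z' _ _ ihz ihz' =>
    obtain ⟨ω, hω, rfl⟩ := ihz
    obtain ⟨ω', hω', rfl⟩ := ihz'
    refine ⟨ω ++ ω', ?_, cs.wordProd_append ω ω'⟩
    intro l hl
    rcases List.mem_append.mp hl with h | h
    · exact hω l h
    · exact hω' l h
  | inv z _ ihz =>
    obtain ⟨ω, hω, rfl⟩ := ihz
    exact ⟨ω.reverse, fun l hl => hω l (List.mem_reverse.mp hl), cs.wordProd_reverse ω⟩

/-- Every element of a standard parabolic subgroup has a reduced word with letters in `I`. -/
lemma exists_reduced_word_of_mem_closure {I : Set B} {w : W}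
    (h : w ∈ Subgroup.closure (cs.simple '' I)) :
    ∃ ω : List B, (∀ i ∈ ω, i ∈ I) ∧ cs.IsReduced ω ∧ cs.wordProd ω = w := by
  obtain ⟨ω, hω, rfl⟩ := exists_word_of_mem_closure cs h
  obtain ⟨ω', hred, hprod, hsub⟩ := exists_reduced_word_sub cs ω
  exact ⟨ω', fun l hl => hω l (hsub l hl), hred, hprod⟩


section Hecke

open LaurentPolynomial

variable {B W H : Type*} [Group W] [Ring H] [Algebra (LaurentPolynomial ℤ) H]
  {M : CoxeterMatrix B} (cs : CoxeterSystem M W)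
  (TT : Module.Basis W (LaurentPolynomial ℤ) H)

lemma TT_simple_sq (hT : IsHeckeBasis cs TT) (i : B) :
    TT (cs.simple i) * TT (cs.simple i)
      = algebraMap (LaurentPolynomial ℤ) H (heckeQ - 1) * TT (cs.simple i)
          + algebraMap (LaurentPolynomial ℤ) H heckeQ := by
  have h := hT.2.1 i
  have key : TT (cs.simple i) * TT (cs.simple i)
      = (TT (cs.simple i) - algebraMap (LaurentPolynomial ℤ) H heckeQ) * (TT (cs.simple i) + 1)
        + algebraMap (LaurentPolynomial ℤ) H heckeQ * TT (cs.simple i)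
        - TT (cs.simple i) + algebraMap (LaurentPolynomial ℤ) H heckeQ := by
    noncomm_ring
  rw [key, h, zero_add, map_sub, map_one, sub_mul, one_mul]

lemma TT_mul_simple_asc (hT : IsHeckeBasis cs TT) {u : W} {i : B} (h : cs.length (u * cs.simple i) = cs.length u + 1) :
    TT u * TT (cs.simple i) = TT (u * cs.simple i) := by
  apply hT.2.2
  rw [cs.length_simple, h]

lemma TT_mul_simple_desc (hT : IsHeckeBasis cs TT) {u : W} {i : B} (h : cs.length (u * cs.simple i) < cs.length u) :
    TT u * TT (cs.simple i)
      = algebraMap (LaurentPolynomial ℤ) H (heckeQ - 1) * TT u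
          + algebraMap (LaurentPolynomial ℤ) H heckeQ * TT (u * cs.simple i) := by
  have hu' : (u * cs.simple i) * cs.simple i = u := cs.simple_mul_simple_cancel_right i
  have hlen : cs.length ((u * cs.simple i) * cs.simple i) = cs.length (u * cs.simple i) + 1 := by
    rw [hu']
    rcases cs.length_mul_simple u i with h' | h' <;> omega
  have h1 : TT (u * cs.simple i) * TT (cs.simple i) = TT u := by
    rw [TT_mul_simple_asc cs TT hT hlen, hu']
  calc TT u * TT (cs.simple i)
      = TT (u * cs.simple i) * (TT (cs.simple i) * TT (cs.simple i)) := by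
        rw [← mul_assoc, h1]
    _ = _ := by
        rw [TT_simple_sq cs TT hT i, mul_add, ← mul_assoc,
          ← Algebra.commutes (heckeQ - 1) (TT (u * cs.simple i)), mul_assoc, h1,
          ← Algebra.commutes heckeQ (TT (u * cs.simple i))]

lemma TT_mul_simple_desc' (hT : IsHeckeBasis cs TT) {u : W} {i : B}
    (h : cs.length (u * cs.simple i) < cs.length u) :
    TT u * TT (cs.simple i)
      = (heckeQ - 1) • TT u + heckeQ • TT (u * cs.simple i) := by
  rw [TT_mul_simple_desc cs TT hT h, Algebra.smul_def, Algebra.smul_def]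

lemma Ttilde_simple (i : B) :
    Ttilde cs TT (cs.simple i) = (T (-1) : LaurentPolynomial ℤ) • TT (cs.simple i) := by
  rw [Ttilde, cs.length_simple, Nat.cast_one]

lemma xi_eq : (T (-1) : LaurentPolynomial ℤ) * (heckeQ - 1) = heckeXi := by
  rw [mul_sub, mul_one, heckeQ, heckeXi, ← T_add]
  norm_num

lemma Tneg_mul_Q : (T (-1) : LaurentPolynomial ℤ) * heckeQ = T 1 := by
  rw [heckeQ, ← T_add]
  norm_num

lemma Q_mul_Tneg : heckeQ * (T (-1) : LaurentPolynomial ℤ) = T 1 := by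
  rw [mul_comm]
  exact Tneg_mul_Q

lemma xi_eq' : (heckeQ - 1) * (T (-1) : LaurentPolynomial ℤ) = heckeXi := by
  rw [mul_comm]
  exact xi_eq

/-- The key recursion for coefficients under right multiplication by `T̃_s`. -/
lemma repr_mul_Ttilde_simple (hT : IsHeckeBasis cs TT) (x : H) (w : W) (i : B) :
    TT.repr (x * Ttilde cs TT (cs.simple i)) w
      = (if cs.length (w * cs.simple i) < cs.length w then (T (-1) : LaurentPolynomial ℤ)
            else T 1) * TT.repr x (w * cs.simple i)
        + (if cs.length (w * cs.simple i) < cs.length w then heckeXi else 0) * TT.repr x w := by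
  set c₁ : LaurentPolynomial ℤ :=
    if cs.length (w * cs.simple i) < cs.length w then (T (-1) : LaurentPolynomial ℤ) else T 1
    with hc₁
  set c₂ : LaurentPolynomial ℤ :=
    if cs.length (w * cs.simple i) < cs.length w then heckeXi else 0 with hc₂
  have hbase : ∀ u : W, TT.repr (TT u * Ttilde cs TT (cs.simple i)) w
      = c₁ * TT.repr (TT u) (w * cs.simple i) + c₂ * TT.repr (TT u) w := by
    intro u
    rw [Ttilde_simple cs TT i, mul_smul_comm, map_smul, Module.Basis.repr_self]
    rcases cs.length_mul_simple u i with hasc | hdesc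
    · -- ascending for u
      rw [TT_mul_simple_asc cs TT hT hasc, Module.Basis.repr_self]
      by_cases h2 : u * cs.simple i = w
      · subst h2
        rw [cs.simple_mul_simple_cancel_right]
        have hne : u ≠ u * cs.simple i * cs.simple i * cs.simple i := by
          rw [cs.simple_mul_simple_cancel_right]
          intro heq
          rw [← heq] at hasc
          omega
        rw [cs.simple_mul_simple_cancel_right] at hne
        have hcond : cs.length (u * cs.simple i * cs.simple i)
            < cs.length (u * cs.simple i) := by
          rw [cs.simple_mul_simple_cancel_right]
          omega
        rw [hc₁, hc₂, if_pos hcond, if_pos hcond]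
        rw [Finsupp.smul_apply, Finsupp.single_apply, if_pos rfl,
          Finsupp.single_apply, if_pos rfl, Finsupp.single_apply, if_neg hne]
        simp
      · by_cases h1 : u = w
        · subst h1
          have hcond : ¬ cs.length (u * cs.simple i) < cs.length u := by omega
          rw [hc₁, hc₂, if_neg hcond, if_neg hcond]
          have hne : u ≠ u * cs.simple i := by
            intro heq
            rw [← heq] at hasc
            omega
          rw [Finsupp.smul_apply, Finsupp.single_apply, if_neg h2,
            Finsupp.single_apply, if_neg hne, Finsupp.single_apply, if_pos rfl]
          simp
        · have hne : u ≠ w * cs.simple i := by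
            intro heq
            apply h2
            rw [heq, cs.simple_mul_simple_cancel_right]
          rw [Finsupp.smul_apply, Finsupp.single_apply, if_neg h2,
            Finsupp.single_apply, if_neg hne, Finsupp.single_apply, if_neg h1]
          simp
    · -- descending for u
      have hdesc' : cs.length (u * cs.simple i) < cs.length u := by omega
      rw [TT_mul_simple_desc' cs TT hT hdesc', map_add, map_smul, map_smul,
        Module.Basis.repr_self, Module.Basis.repr_self]
      by_cases h2 : u * cs.simple i = w
      · subst h2
        rw [cs.simple_mul_simple_cancel_right]
        have hcond : ¬ cs.length (u * cs.simple i * cs.simple i)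
            < cs.length (u * cs.simple i) := by
          rw [cs.simple_mul_simple_cancel_right]
          omega
        rw [hc₁, hc₂, if_neg hcond, if_neg hcond]
        have hne : u ≠ u * cs.simple i := by
          intro heq
          rw [← heq] at hdesc'
          omega
        have hne2 : u * cs.simple i ≠ u := fun heq => hne heq.symm
        simp [Finsupp.smul_apply, Finsupp.add_apply, Finsupp.single_apply, hne, hne2,
          smul_eq_mul, Tneg_mul_Q, Q_mul_Tneg]
      · by_cases h1 : u = w
        · subst h1
          have hcond : cs.length (u * cs.simple i) < cs.length u := hdesc'
          rw [hc₁, hc₂, if_pos hcond, if_pos hcond]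
          have hne : u ≠ u * cs.simple i := by
            intro heq
            rw [← heq] at hdesc'
            omega
          simp [Finsupp.smul_apply, Finsupp.add_apply, Finsupp.single_apply, hne, h2,
            smul_eq_mul, xi_eq, xi_eq']
        · have hne : u ≠ w * cs.simple i := by
            intro heq
            apply h2
            rw [heq, cs.simple_mul_simple_cancel_right]
          simp [Finsupp.smul_apply, Finsupp.add_apply, Finsupp.single_apply, hne, h1, h2]
  -- extend by linearity
  let L1 : H →ₗ[LaurentPolynomial ℤ] LaurentPolynomial ℤ :=
    (Finsupp.lapply w) ∘ₗ (TT.repr : H ≃ₗ[LaurentPolynomial ℤ] (W →₀ LaurentPolynomial ℤ)).toLinearMap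
      ∘ₗ (LinearMap.mulRight (LaurentPolynomial ℤ) (Ttilde cs TT (cs.simple i)))
  let L2 : H →ₗ[LaurentPolynomial ℤ] LaurentPolynomial ℤ :=
    c₁ • ((Finsupp.lapply (w * cs.simple i)) ∘ₗ
      (TT.repr : H ≃ₗ[LaurentPolynomial ℤ] (W →₀ LaurentPolynomial ℤ)).toLinearMap)
    + c₂ • ((Finsupp.lapply w) ∘ₗ
      (TT.repr : H ≃ₗ[LaurentPolynomial ℤ] (W →₀ LaurentPolynomial ℤ)).toLinearMap)
  have hL : L1 = L2 := by
    apply TT.ext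
    intro u
    have := hbase u
    simp only [L1, L2, LinearMap.comp_apply, LinearMap.mulRight_apply,
      LinearEquiv.coe_toLinearMap, Finsupp.lapply_apply, LinearMap.add_apply,
      LinearMap.smul_apply, smul_eq_mul]
    exact this
  have := congrArg (fun f => f x) hL
  simpa only [L1, L2, LinearMap.comp_apply, LinearMap.mulRight_apply,
    LinearEquiv.coe_toLinearMap, Finsupp.lapply_apply, LinearMap.add_apply,
    LinearMap.smul_apply, smul_eq_mul] using this

lemma Ttilde_mul_simple (hT : IsHeckeBasis cs TT) {v : W} {i : B}
    (hvs : cs.length (v * cs.simple i) = cs.length v + 1) :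
    Ttilde cs TT (v * cs.simple i) = Ttilde cs TT v * Ttilde cs TT (cs.simple i) := by
  rw [Ttilde_simple cs TT i, Ttilde, Ttilde, smul_mul_smul_comm,
    TT_mul_simple_asc cs TT hT hvs, ← T_add]
  congr 1
  rw [hvs]
  push_cast
  ring

lemma heckeF_one (hT : IsHeckeBasis cs TT) (wI w : W) :
    heckeF cs TT wI 1 w = if w = wI then 1 else 0 := by
  have h1 : Ttilde cs TT 1 = 1 := by
    rw [Ttilde, cs.length_one, Nat.cast_zero, neg_zero, T_zero, one_smul, hT.1]
  rw [heckeF, h1, mul_one, Ttilde, map_smul, Module.Basis.repr_self, Finsupp.smul_apply,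
    Finsupp.single_apply, smul_eq_mul]
  by_cases hw : w = wI
  · subst hw
    rw [if_pos rfl, mul_one, ← T_add, add_neg_cancel, T_zero]
  · rw [if_neg (fun h => hw h.symm), if_neg hw, mul_zero, mul_zero]

lemma heckeF_rec (hT : IsHeckeBasis cs TT) (wI : W) {v : W} {i : B}
    (hvs : cs.length (v * cs.simple i) = cs.length v + 1) (w : W) :
    heckeF cs TT wI (v * cs.simple i) w
      = heckeF cs TT wI v (w * cs.simple i)
        + (if cs.length (w * cs.simple i) < cs.length w
            then heckeXi * heckeF cs TT wI v w else 0) := by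
  rw [heckeF, Ttilde_mul_simple cs TT hT hvs, ← mul_assoc,
    repr_mul_Ttilde_simple cs TT hT _ w i, heckeF, heckeF]
  by_cases hD : cs.length (w * cs.simple i) < cs.length w
  · rw [if_pos hD, if_pos hD, if_pos hD]
    have hws : (cs.length (w * cs.simple i) : ℤ) = (cs.length w : ℤ) + (-1) := by
      rcases cs.length_mul_simple w i with h' | h' <;> [omega; skip]
      push_cast
      omega
    rw [hws, T_add]
    ring
  · rw [if_neg hD, if_neg hD, if_neg hD]
    have hws : (cs.length (w * cs.simple i) : ℤ) = (cs.length w : ℤ) + 1 := by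
      rcases cs.length_mul_simple w i with h' | h' <;> [skip; omega]
      push_cast
      omega
    rw [hws, T_add]
    ring

/-- Main induction: degree bounds for `f_{w_I, πω, w}` along reduced words all of whose
letters are right descents of `w_I`. -/
lemma heckeF_deg (hT : IsHeckeBasis cs TT) (wI : W) :
    ∀ ω : List B, cs.IsReduced ω →
      (∀ i ∈ ω, cs.length (wI * cs.simple i) < cs.length wI) →
      ∀ w : W, ∃ p : Polynomial ℤ,
        Polynomial.aeval heckeXi p = heckeF cs TT wI (cs.wordProd ω) w ∧
        p.degree ≤ (ω.length : WithBot ℕ) ∧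
        (w = wI → ∃ r : Polynomial ℤ, p = Polynomial.X ^ ω.length + r ∧
          r.degree < (ω.length : WithBot ℕ)) := by
  intro ω
  induction ω using List.reverseRecOn with
  | nil =>
    intro _ _ w
    rw [cs.wordProd_nil, heckeF_one cs TT hT wI w]
    by_cases hw : w = wI
    · refine ⟨1, ?_, ?_, ?_⟩
      · rw [map_one, if_pos hw]
      · rw [Polynomial.degree_one]
        simp
      · intro _
        refine ⟨0, by simp, ?_⟩
        rw [Polynomial.degree_zero]
        simp [WithBot.bot_lt_coe]
    · refine ⟨0, ?_, ?_, fun h => absurd h hw⟩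
      · rw [map_zero, if_neg hw]
      · rw [Polynomial.degree_zero]
        simp
  | append_singleton ω i ih =>
    intro hred hdes w
    have hredω : cs.IsReduced ω := by
      have h := hred.take ω.length
      rwa [List.take_left] at h
    have hprod : cs.wordProd (ω ++ [i]) = cs.wordProd ω * cs.simple i := by
      rw [cs.wordProd_append, cs.wordProd_singleton]
    have hlv : cs.length (cs.wordProd ω) = ω.length := hredω
    have hasc : cs.length (cs.wordProd ω * cs.simple i) = cs.length (cs.wordProd ω) + 1 := by
      have h2 : cs.length (cs.wordProd (ω ++ [i])) = (ω ++ [i]).length := hred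
      rw [hprod, List.length_append, List.length_singleton] at h2
      rw [h2, hlv]
    have hdes' : ∀ j ∈ ω, cs.length (wI * cs.simple j) < cs.length wI :=
      fun j hj => hdes j (List.mem_append_left _ hj)
    obtain ⟨p₁, hp₁a, hp₁d, _⟩ := ih hredω hdes' (w * cs.simple i)
    obtain ⟨p₂, hp₂a, hp₂d, hp₂m⟩ := ih hredω hdes' w
    rw [hprod, heckeF_rec cs TT hT wI hasc w]
    simp only [List.length_append, List.length_singleton]
    by_cases hD : cs.length (w * cs.simple i) < cs.length w
    · refine ⟨p₁ + Polynomial.X * p₂, ?_, ?_, ?_⟩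
      · rw [map_add, map_mul, Polynomial.aeval_X, hp₁a, hp₂a, if_pos hD]
      · refine le_trans (Polynomial.degree_add_le _ _) (max_le ?_ ?_)
        · exact le_trans hp₁d (by exact_mod_cast Nat.cast_le.mpr (Nat.le_succ _))
        · refine le_trans (Polynomial.degree_mul_le _ _) ?_
          rw [Polynomial.degree_X]
          calc (1 : WithBot ℕ) + p₂.degree ≤ 1 + (ω.length : WithBot ℕ) :=
                add_le_add_right hp₂d 1
            _ = ((ω.length + 1 : ℕ) : WithBot ℕ) := by
                rw [add_comm]
                exact_mod_cast (Nat.cast_add_one ω.length).symm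
      · intro hw
        obtain ⟨r₂, hp₂eq, hr₂⟩ := hp₂m hw
        refine ⟨p₁ + Polynomial.X * r₂, by rw [hp₂eq]; ring, ?_⟩
        refine lt_of_le_of_lt (Polynomial.degree_add_le _ _) (max_lt ?_ ?_)
        · exact lt_of_le_of_lt hp₁d (by exact_mod_cast Nat.lt_succ_self _)
        · refine lt_of_le_of_lt (Polynomial.degree_mul_le _ _) ?_
          rw [Polynomial.degree_X]
          calc (1 : WithBot ℕ) + r₂.degree < 1 + (ω.length : WithBot ℕ) := by
                refine WithBot.add_lt_add_left ?_ hr₂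
                simp
            _ = ((ω.length + 1 : ℕ) : WithBot ℕ) := by
                rw [add_comm]
                exact_mod_cast (Nat.cast_add_one ω.length).symm
    · refine ⟨p₁, ?_, ?_, ?_⟩
      · rw [hp₁a, if_neg hD, add_zero]
      · exact le_trans hp₁d (by exact_mod_cast Nat.cast_le.mpr (Nat.le_succ _))
      · intro hw
        exact absurd (hdes i (List.mem_append_right _ (List.mem_singleton.mpr rfl)))
          (hw ▸ hD)

end Hecke

end StmtAux

/-- Let `I ⊆ S` be such that the standard parabolic subgroup `W_I` is finite,
and let `w_I` be the longest element of `W_I`.  Then `f_{w_I, w_I, w_I}`, as a polynomial in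
`ξ`, has degree exactly `l(w_I)`. -/
theorem stmt_13 {B W H : Type*} [Group W] [Ring H] [Algebra (LaurentPolynomial ℤ) H]
    {M : CoxeterMatrix B} (cs : CoxeterSystem M W)
    (TT : Module.Basis W (LaurentPolynomial ℤ) H) (hT : IsHeckeBasis cs TT)
    (I : Set B) (hfin : (Subgroup.closure (cs.simple '' I) : Set W).Finite)
    (wI : W) (hmem : wI ∈ Subgroup.closure (cs.simple '' I))
    (hmax : ∀ u ∈ Subgroup.closure (cs.simple '' I), cs.length u ≤ cs.length wI) :
    ∃ p : Polynomial ℤ, p.degree = (cs.length wI : WithBot ℕ) ∧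
      Polynomial.aeval heckeXi p = heckeF cs TT wI wI wI := by
  obtain ⟨ω, hωI, hred, hprod⟩ := StmtAux.exists_reduced_word_of_mem_closure cs hmem
  have hlen : ω.length = cs.length wI := by
    have h : cs.length (cs.wordProd ω) = ω.length := hred
    rw [hprod] at h
    exact h.symm
  have hdes : ∀ i ∈ ω, cs.length (wI * cs.simple i) < cs.length wI := by
    intro i hi
    have hin : cs.simple i ∈ Subgroup.closure (cs.simple '' I) :=
      Subgroup.subset_closure ⟨i, hωI i hi, rfl⟩
    have hle := hmax _ (mul_mem hmem hin)
    have hne := cs.length_mul_simple_ne wI i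
    omega
  obtain ⟨p, hpa, _, hpm⟩ := StmtAux.heckeF_deg cs TT hT wI ω hred hdes wI
  obtain ⟨r, hpeq, hr⟩ := hpm rfl
  refine ⟨p, ?_, by rw [hpa, hprod]⟩
  rw [hpeq, ← hlen]
  have hdlt : r.degree < (Polynomial.X ^ ω.length : Polynomial ℤ).degree := by
    rw [Polynomial.degree_X_pow]
    exact hr
  rw [Polynomial.degree_add_eq_left_of_degree_lt hdlt, Polynomial.degree_X_pow]
end

section
/- Let w₀ be the longest element of a finite standard parabolic subgroup P of W, and assume that the degree of f_{w,u,v} as a polynomial in ξ is at most l(w₀) for all w, u, v ∈ W. Then for every x ∈ W with l(x w₀) = l(x) − l(w₀), the polynomial f_{x^{-1}, x, w₀} has degree exactly l(w₀) in ξ; in particular f_{x^{-1}, x, w₀} ≠ 0. -/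
open List
open scoped Classical

namespace Stmt14Aux

variable {B W : Type*} [Group W] {M : CoxeterMatrix B} (cs : CoxeterSystem M W)

/-- Tits' sign permutation attached to a simple reflection. -/
noncomputable def eta (i : B) : Equiv.Perm (W × ℤˣ) :=
  Function.Involutive.toPerm
    (fun p => (cs.simple i * p.1 * cs.simple i, if p.1 = cs.simple i then -p.2 else p.2))
    (by
      rintro ⟨w, ε⟩
      have hpos : cs.simple i * (cs.simple i * w * cs.simple i) * cs.simple i = w := by
        simp [← mul_assoc, cs.simple_mul_simple_self, cs.simple_mul_simple_cancel_right]
      have hcond : (cs.simple i * w * cs.simple i = cs.simple i) ↔ w = cs.simple i := by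
        constructor
        · intro h
          have := congrArg (fun z => cs.simple i * z * cs.simple i) h
          simpa [hpos, cs.simple_mul_simple_self, mul_assoc] using this
        · rintro rfl
          simp [cs.simple_mul_simple_self]
      simp only [hcond]
      by_cases hw : w = cs.simple i <;> simp [hw, hpos])

@[simp] theorem eta_apply (i : B) (w : W) (ε : ℤˣ) :
    eta cs i (w, ε) = (cs.simple i * w * cs.simple i,
      if w = cs.simple i then -ε else ε) := rfl

theorem eta_liftable : M.IsLiftable (eta cs) := by
  intro i i'
  set d : W := cs.simple i' * cs.simple i with hd
  have hdm : d ^ M i i' = 1 := cs.simple_mul_simple_pow' i i'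
  set t : ℕ → W := fun k => d ^ k * cs.simple i' with ht
  set h : W → ℕ → ℤˣ := fun w k => if w = t k then -1 else 1 with hh
  have hdinv : d⁻¹ = cs.simple i * cs.simple i' := by
    rw [hd, mul_inv_rev, cs.inv_simple, cs.inv_simple]
  have hsd : cs.simple i' * d⁻¹ = d * cs.simple i' := by
    rw [hdinv, hd, mul_assoc]
  have htconj : ∀ k : ℕ, d * t k * d⁻¹ = t (k + 2) := by
    intro k
    rw [ht]
    simp only
    have e1 : d * (d ^ k * cs.simple i') * d⁻¹ = d * d ^ k * (cs.simple i' * d⁻¹) := by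
      group
    rw [e1, hsd, ← mul_assoc, ← pow_succ', ← pow_succ]
  have htshift : ∀ (w : W) (k : ℕ), (d⁻¹ * w * d = t k) ↔ (w = t (k + 2)) := by
    intro w k
    constructor
    · intro hyp
      have := congrArg (fun z => d * z * d⁻¹) hyp
      rw [← htconj k, ← this]
      group
    · intro hyp
      rw [← htconj k] at hyp
      have := congrArg (fun z => d⁻¹ * z * d) hyp
      rw [this]
      group
  have pstep : ∀ (w : W) (ε : ℤˣ),
      (eta cs i * eta cs i') (w, ε) = (d⁻¹ * w * d, ε * h w 0 * h w 1) := by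
    intro w ε
    have hcond1 : (cs.simple i' * w * cs.simple i' = cs.simple i) ↔ (w = t 1) := by
      have ht1 : t 1 = cs.simple i' * cs.simple i * cs.simple i' := by
        rw [ht]; simp only [pow_one, hd, mul_assoc]
      rw [ht1]
      constructor
      · intro hyp
        have := congrArg (fun z => cs.simple i' * z * cs.simple i') hyp
        rw [← this]
        simp [← mul_assoc, cs.simple_mul_simple_self, cs.simple_mul_simple_cancel_right,
          cs.simple_mul_simple_cancel_left]
      · intro hyp
        rw [hyp]
        simp [← mul_assoc, cs.simple_mul_simple_self, cs.simple_mul_simple_cancel_right,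
          cs.simple_mul_simple_cancel_left]
    have hcond0 : (w = cs.simple i') ↔ (w = t 0) := by
      rw [ht]; simp
    have happ : (eta cs i * eta cs i') (w, ε)
        = (cs.simple i * (cs.simple i' * w * cs.simple i') * cs.simple i,
            if cs.simple i' * w * cs.simple i' = cs.simple i
              then -(if w = cs.simple i' then -ε else ε)
              else (if w = cs.simple i' then -ε else ε)) := by
      rw [Equiv.Perm.mul_apply]
      simp
    rw [happ]
    have hpos : cs.simple i * (cs.simple i' * w * cs.simple i') * cs.simple i
        = d⁻¹ * w * d := by
      rw [hdinv, hd]; group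
    rw [hpos]
    simp only [hcond0, hcond1, hh]
    by_cases h1 : w = t 1 <;> by_cases h0 : w = t 0 <;>
      simp [h0, h1, mul_comm, mul_assoc]
  have key : ∀ (r : ℕ) (w : W) (ε : ℤˣ),
      ((eta cs i * eta cs i') ^ r) (w, ε)
        = (d⁻¹ ^ r * w * d ^ r, ε * ∏ k ∈ Finset.range (2 * r), h w k) := by
    intro r
    induction r with
    | zero => intro w ε; simp
    | succ r ih =>
      intro w ε
      rw [pow_succ, Equiv.Perm.mul_apply, pstep, ih]
      have hshift : ∀ k, h (d⁻¹ * w * d) k = h w (k + 2) := by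
        intro k
        rw [hh]
        simp only [htshift w k]
      rw [Prod.mk.injEq]
      refine ⟨?_, ?_⟩
      · show d⁻¹ ^ r * (d⁻¹ * w * d) * d ^ r = d⁻¹ ^ (r + 1) * w * d ^ (r + 1)
        rw [pow_succ d, pow_succ' d⁻¹]
        group
      · show ε * h w 0 * h w 1 * ∏ k ∈ Finset.range (2 * r), h (d⁻¹ * w * d) k
            = ε * ∏ k ∈ Finset.range (2 * (r + 1)), h w k
        have h2r : 2 * (r + 1) = 2 + 2 * r := by ring
        rw [h2r, Finset.prod_range_add]
        simp only [hshift]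
        have : ∏ x ∈ Finset.range 2, h w x = h w 0 * h w 1 := by
          rw [Finset.prod_range_succ, Finset.prod_range_one]
        rw [this]
        have : ∀ x, h w (2 + x) = h w (x + 2) := fun x => by rw [Nat.add_comm]
        simp only [this]
        rw [mul_assoc, mul_assoc, mul_assoc]
  refine Equiv.ext ?_
  rintro ⟨w, ε⟩
  rw [show ((1 : Equiv.Perm (W × ℤˣ)) (w, ε)) = (w, ε) from rfl, key, Prod.mk.injEq]
  refine ⟨by simp [inv_pow, hdm], ?_⟩
  have h2m : 2 * M i i' = M i i' + M i i' := by ring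
  have hper : ∀ k, h w (M i i' + k) = h w k := by
    intro k
    rw [hh]
    simp only [ht]
    rw [pow_add, hdm, one_mul]
  rw [h2m, Finset.prod_range_add]
  simp only [hper]
  simp [Int.units_mul_self]

/-- The sign representation of the Coxeter group. -/
noncomputable def lam : W →* Equiv.Perm (W × ℤˣ) := cs.lift ⟨eta cs, eta_liftable cs⟩

@[simp] theorem lam_simple (i : B) : lam cs (cs.simple i) = eta cs i :=
  cs.lift_apply_simple (eta_liftable cs) i

/-- The product of signs attached to a word and a group element. -/
noncomputable def signOf (ω : List B) (w : W) : ℤˣ :=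
  ((cs.rightInvSeq ω).map (fun t => if w = t then (-1 : ℤˣ) else 1)).prod

theorem lam_wordProd (ω : List B) (w : W) (ε : ℤˣ) :
    lam cs (cs.wordProd ω) (w, ε)
      = (cs.wordProd ω * w * (cs.wordProd ω)⁻¹, ε * signOf cs ω w) := by
  induction ω with
  | nil => simp [signOf, CoxeterSystem.rightInvSeq]
  | cons i ω ih =>
    have hris : cs.rightInvSeq (i :: ω)
        = ((cs.wordProd ω)⁻¹ * cs.simple i * cs.wordProd ω) :: cs.rightInvSeq ω := rfl
    rw [cs.wordProd_cons, map_mul, Equiv.Perm.mul_apply, ih, lam_simple, eta_apply]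
    rw [Prod.mk.injEq]
    constructor
    · rw [mul_inv_rev, cs.inv_simple]
      group
    · have hcond : (cs.wordProd ω * w * (cs.wordProd ω)⁻¹ = cs.simple i)
          ↔ (w = (cs.wordProd ω)⁻¹ * cs.simple i * cs.wordProd ω) := by
        constructor
        · intro hyp
          rw [← hyp]; group
        · intro hyp
          rw [hyp]; group
      rw [hcond]
      simp only [signOf, hris, List.map_cons, List.prod_cons]
      by_cases hc : w = (cs.wordProd ω)⁻¹ * cs.simple i * cs.wordProd ω <;>
        simp [hc, mul_comm, mul_assoc]

theorem signOf_eq_of_wordProd_eq {ω ω' : List B} (hp : cs.wordProd ω = cs.wordProd ω')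
    (w : W) : signOf cs ω w = signOf cs ω' w := by
  have h1 := lam_wordProd cs ω w 1
  have h2 := lam_wordProd cs ω' w 1
  rw [hp] at h1
  rw [h1] at h2
  have := congrArg Prod.snd h2
  simpa using this

theorem signOf_eq_one_of_not_mem {ω : List B} {w : W} (hw : w ∉ cs.rightInvSeq ω) :
    signOf cs ω w = 1 := by
  apply List.prod_eq_one
  intro x hx
  obtain ⟨t, ht, rfl⟩ := List.mem_map.mp hx
  have : w ≠ t := fun hh => hw (hh ▸ ht)
  simp [this]

/-- The (right) exchange property. -/
theorem exchange {u : W} {i : B} (hdesc : cs.length (u * cs.simple i) < cs.length u)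
    {κ : List B} (hred : cs.IsReduced κ) (hπ : cs.wordProd κ = u) :
    ∃ j < κ.length, cs.wordProd (κ.eraseIdx j) = u * cs.simple i := by
  obtain ⟨κ', hκ'red, hκ'⟩ := cs.exists_reduced_word' (u * cs.simple i)
  have hnm : cs.simple i ∉ cs.rightInvSeq κ' := by
    intro hmem
    have h2 := (cs.isRightInversion_of_mem_rightInvSeq hκ'red hmem).2
    rw [← hκ', cs.simple_mul_simple_cancel_right] at h2
    omega
  have hsign' : signOf cs κ' (cs.simple i) = 1 := signOf_eq_one_of_not_mem cs hnm
  have hword : cs.wordProd (κ'.concat i) = u := by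
    rw [cs.wordProd_concat, ← hκ', cs.simple_mul_simple_cancel_right]
  have hsignconcat : signOf cs (κ'.concat i) (cs.simple i) = -1 := by
    rw [signOf, cs.rightInvSeq_concat, List.concat_eq_append, List.map_append,
      List.prod_append, List.map_map]
    have hmapeq : ((fun t => if cs.simple i = t then (-1 : ℤˣ) else 1) ∘
        (MulAut.conj (cs.simple i))) = (fun t => if cs.simple i = t then (-1 : ℤˣ) else 1) := by
      funext t
      simp only [Function.comp_apply, MulAut.conj_apply, cs.inv_simple]
      have : (cs.simple i = cs.simple i * t * cs.simple i) ↔ (cs.simple i = t) := by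
        constructor
        · intro hyp
          have h2 : t = cs.simple i := by
            have := congrArg (fun z => cs.simple i * z * cs.simple i) hyp.symm
            simpa [← mul_assoc, cs.simple_mul_simple_cancel_left,
              cs.simple_mul_simple_cancel_right, cs.simple_mul_simple_self] using this
          exact h2.symm
        · rintro rfl
          simp [cs.simple_mul_simple_self]
      simp only [this]
    rw [hmapeq]
    have : signOf cs κ' (cs.simple i) = 1 := hsign'
    rw [signOf] at this
    rw [this]
    simp
  have hsame : signOf cs κ (cs.simple i) = -1 := by
    rw [signOf_eq_of_wordProd_eq cs (show cs.wordProd κ = cs.wordProd (κ'.concat i) by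
      rw [hπ, hword])]
    exact hsignconcat
  have hmem : cs.simple i ∈ cs.rightInvSeq κ := by
    by_contra hnmem
    rw [signOf_eq_one_of_not_mem cs hnmem] at hsame
    exact absurd hsame (by decide)
  obtain ⟨j, hj, hget⟩ := List.mem_iff_getElem.mp hmem
  have hjlen : j < κ.length := by
    rw [cs.length_rightInvSeq] at hj
    exact hj
  refine ⟨j, hjlen, ?_⟩
  have hkey := cs.wordProd_mul_getD_rightInvSeq κ j
  rw [List.getD_eq_getElem _ _ hj, hget, hπ] at hkey
  exact hkey.symm

theorem exists_reduced_I_word (I : Set B) :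
    ∀ (n : ℕ) (L : List B), L.length ≤ n → (∀ i ∈ L, i ∈ I) →
      ∃ K : List B, (∀ i ∈ K, i ∈ I) ∧ cs.IsReduced K ∧ cs.wordProd K = cs.wordProd L := by
  intro n
  induction n with
  | zero =>
    intro L hlen _
    have : L = [] := List.length_eq_zero_iff.mp (Nat.le_zero.mp hlen)
    subst this
    exact ⟨[], by simp, by simp [CoxeterSystem.IsReduced], rfl⟩
  | succ n ih =>
    intro L hlen hI
    by_cases hred : cs.IsReduced L
    · exact ⟨L, hI, hred, rfl⟩
    · have hex : ∃ j, ¬ cs.IsReduced (L.take j) := ⟨L.length, by rwa [List.take_length]⟩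
      set j₀ := Nat.find hex with hj₀
      have hj₀spec : ¬ cs.IsReduced (L.take j₀) := Nat.find_spec hex
      have hj₀pos : j₀ ≠ 0 := by
        intro h0
        rw [h0] at hj₀spec
        exact hj₀spec (by simp [CoxeterSystem.IsReduced])
      obtain ⟨k, hk⟩ := Nat.exists_eq_succ_of_ne_zero hj₀pos
      have hkred : cs.IsReduced (L.take k) := by
        have := Nat.find_min hex (show k < j₀ by omega)
        exact not_not.mp this
      have hj₀le : j₀ ≤ L.length := Nat.find_min' hex (by rwa [List.take_length])
      have hklt : k < L.length := by omega
      have htake : L.take (k + 1) = L.take k ++ [L[k]] := by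
        rw [List.take_succ, List.getElem?_eq_getElem hklt]
        rfl
      have hlenk : cs.length (cs.wordProd (L.take k)) = k := by
        have := hkred
        rw [CoxeterSystem.IsReduced] at this
        rw [this, List.length_take]
        omega
      have hprod : cs.wordProd (L.take (k + 1))
          = cs.wordProd (L.take k) * cs.simple (L[k]) := by
        rw [htake, cs.wordProd_append, cs.wordProd_singleton]
      have hnred1 : cs.length (cs.wordProd (L.take k) * cs.simple (L[k])) ≠ k + 1 := by
        intro hcontra
        apply hj₀spec
        rw [hk, CoxeterSystem.IsReduced, hprod, hcontra, List.length_take]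
        omega
      have hle : cs.length (cs.wordProd (L.take k) * cs.simple (L[k])) ≤ k + 1 := by
        calc cs.length (cs.wordProd (L.take k) * cs.simple (L[k]))
            ≤ cs.length (cs.wordProd (L.take k)) + cs.length (cs.simple (L[k])) :=
              cs.length_mul_le _ _
          _ = k + 1 := by rw [hlenk, cs.length_simple]
      have hne : cs.length (cs.wordProd (L.take k) * cs.simple (L[k])) ≠ k := by
        have := cs.length_mul_simple_ne (cs.wordProd (L.take k)) (L[k])
        rwa [hlenk] at this
      have hdesc : cs.length (cs.wordProd (L.take k) * cs.simple (L[k]))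
          < cs.length (cs.wordProd (L.take k)) := by
        rw [hlenk]; omega
      obtain ⟨j, hjlt, hjprod⟩ := exchange cs hdesc hkred rfl
      set L' : List B := (L.take k).eraseIdx j ++ L.drop (k + 1) with hL'
      have hL'prod : cs.wordProd L' = cs.wordProd L := by
        rw [hL', cs.wordProd_append, hjprod, ← hprod, ← cs.wordProd_append,
          List.take_append_drop]
      have hL'len : L'.length ≤ n := by
        rw [hL', List.length_append, List.length_eraseIdx]
        have hjk : j < k := by
          have h1 := hjlt
          rwa [List.length_take, min_eq_left hklt.le] at h1
        rw [if_pos hjlt, List.length_take, List.length_drop, min_eq_left hklt.le]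
        omega
      have hL'I : ∀ i ∈ L', i ∈ I := by
        intro i hi
        rcases List.mem_append.mp hi with h | h
        · exact hI i (List.take_subset _ _ ((List.eraseIdx_sublist _ j).subset h))
        · exact hI i (List.drop_subset _ _ h)
      obtain ⟨K, hKI, hKred, hKprod⟩ := ih L' hL'len hL'I
      exact ⟨K, hKI, hKred, by rw [hKprod, hL'prod]⟩

theorem exists_reduced_I_word_of_mem (I : Set B) {u : W}
    (hu : u ∈ Subgroup.closure (cs.simple '' I)) :
    ∃ K : List B, (∀ i ∈ K, i ∈ I) ∧ cs.IsReduced K ∧ cs.wordProd K = u := by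
  have hword : ∃ L : List B, (∀ i ∈ L, i ∈ I) ∧ cs.wordProd L = u := by
    induction hu using Subgroup.closure_induction with
    | mem x hx =>
      obtain ⟨i, hi, rfl⟩ := hx
      exact ⟨[i], by simpa using hi, by simp⟩
    | one => exact ⟨[], by simp, by simp⟩
    | mul x y hx hy ihx ihy =>
      obtain ⟨L1, h1, hp1⟩ := ihx
      obtain ⟨L2, h2, hp2⟩ := ihy
      refine ⟨L1 ++ L2, ?_, by rw [cs.wordProd_append, hp1, hp2]⟩
      intro i hi
      rcases List.mem_append.mp hi with h | h
      · exact h1 i h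
      · exact h2 i h
    | inv x hx ihx =>
      obtain ⟨L, h, hp⟩ := ihx
      exact ⟨L.reverse, fun i hi => h i (List.mem_reverse.mp hi),
        by rw [cs.wordProd_reverse, hp]⟩
  obtain ⟨L, hI, hL⟩ := hword
  obtain ⟨K, h1, h2, h3⟩ := exists_reduced_I_word cs I L.length L le_rfl hI
  exact ⟨K, h1, h2, by rw [h3, hL]⟩

end Stmt14Aux

namespace Stmt14Aux

section Hecke

open LaurentPolynomial Polynomial

variable {B W H : Type*} [Group W] [Ring H] [Algebra (LaurentPolynomial ℤ) H]
  {M : CoxeterMatrix B} (cs : CoxeterSystem M W) (TT : Module.Basis W (LaurentPolynomial ℤ) H)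

theorem repr_Ttilde (w v : W) :
    TT.repr (Ttilde cs TT w) v
      = if v = w then LaurentPolynomial.T (-(cs.length w : ℤ)) else 0 := by
  rw [Ttilde, map_smul, Finsupp.smul_apply, TT.repr_self, Finsupp.single_apply]
  by_cases h : v = w
  · simp [h]
  · simp [h, Ne.symm h]

theorem Ttilde_one (hT : IsHeckeBasis cs TT) : Ttilde cs TT 1 = 1 := by
  rw [Ttilde, cs.length_one, hT.1]
  simp

theorem Ttilde_mul (hT : IsHeckeBasis cs TT) {w u : W}
    (h : cs.length (w * u) = cs.length w + cs.length u) :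
    Ttilde cs TT w * Ttilde cs TT u = Ttilde cs TT (w * u) := by
  rw [Ttilde, Ttilde, Ttilde, smul_mul_assoc, mul_smul_comm, smul_smul, hT.2.2 w u h, h]
  congr 1
  rw [← LaurentPolynomial.T_add]
  congr 1
  push_cast
  ring

theorem Ttilde_simple_sq (hT : IsHeckeBasis cs TT) (i : B) :
    Ttilde cs TT (cs.simple i) * Ttilde cs TT (cs.simple i)
      = 1 + heckeXi • Ttilde cs TT (cs.simple i) := by
  have hq := hT.2.1 i
  rw [sub_mul, mul_add, mul_add, mul_one, mul_one, sub_eq_zero] at hq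
  have hsq : TT (cs.simple i) * TT (cs.simple i)
      = heckeQ • TT (cs.simple i) + heckeQ • (1 : H) - TT (cs.simple i) := by
    have h2 : TT (cs.simple i) * TT (cs.simple i)
        = algebraMap (LaurentPolynomial ℤ) H heckeQ * TT (cs.simple i)
          + algebraMap (LaurentPolynomial ℤ) H heckeQ - TT (cs.simple i) := by
      rw [← hq]
      abel
    rw [h2, Algebra.smul_def, Algebra.smul_def, mul_one]
  rw [Ttilde, cs.length_simple, smul_mul_assoc, mul_smul_comm, smul_smul, hsq]
  rw [smul_sub, smul_add, smul_smul, smul_smul]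
  simp only [Nat.cast_one]
  have hT2 : (LaurentPolynomial.T (-(1 : ℤ)) * LaurentPolynomial.T (-(1 : ℤ))
      : LaurentPolynomial ℤ) = LaurentPolynomial.T (-2) := by
    rw [← LaurentPolynomial.T_add]; norm_num
  have hq2 : (LaurentPolynomial.T (-(1:ℤ)) * LaurentPolynomial.T (-(1:ℤ)) * heckeQ
      : LaurentPolynomial ℤ) = 1 := by
    rw [hT2, heckeQ, ← LaurentPolynomial.T_add]
    norm_num
  rw [hq2, one_smul]
  have hxi : heckeXi • ((LaurentPolynomial.T (-(1:ℤ)) : LaurentPolynomial ℤ) • TT (cs.simple i))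
      = TT (cs.simple i) - (LaurentPolynomial.T (-(1:ℤ)) * LaurentPolynomial.T (-(1:ℤ))
          : LaurentPolynomial ℤ) • TT (cs.simple i) := by
    rw [smul_smul, heckeXi, sub_mul, sub_smul, ← LaurentPolynomial.T_add]
    norm_num
  rw [hxi]
  abel_nf
  simp
  abel

theorem Ttilde_mul_simple (hT : IsHeckeBasis cs TT) (w : W) (i : B) :
    Ttilde cs TT w * Ttilde cs TT (cs.simple i)
      = if cs.length (w * cs.simple i) = cs.length w + 1
          then Ttilde cs TT (w * cs.simple i)
          else Ttilde cs TT (w * cs.simple i) + heckeXi • Ttilde cs TT w := by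
  rcases cs.length_mul_simple w i with hasc | hdesc
  · rw [if_pos hasc]
    exact Ttilde_mul cs TT hT (by rw [hasc, cs.length_simple])
  · have hne : cs.length (w * cs.simple i) ≠ cs.length w + 1 := by
      have := cs.length_mul_simple_ne w i
      omega
    rw [if_neg hne]
    have hws : Ttilde cs TT (w * cs.simple i) * Ttilde cs TT (cs.simple i) = Ttilde cs TT w := by
      have h := Ttilde_mul cs TT hT (w := w * cs.simple i) (u := cs.simple i)
        (by rw [cs.simple_mul_simple_cancel_right, cs.length_simple]; omega)
      rwa [cs.simple_mul_simple_cancel_right] at h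
    rw [← hws, mul_assoc, Ttilde_simple_sq cs TT hT, mul_add, mul_one, mul_smul_comm, hws]

/-- The key coefficient recurrence for right multiplication by a simple generator. -/
theorem repr_mul_simple (hT : IsHeckeBasis cs TT) (h : H) (v : W) (i : B) :
    LaurentPolynomial.T (cs.length v : ℤ)
        * TT.repr (h * Ttilde cs TT (cs.simple i)) v
      = LaurentPolynomial.T (cs.length (v * cs.simple i) : ℤ)
          * TT.repr h (v * cs.simple i)
        + (if cs.length (v * cs.simple i) < cs.length v
            then heckeXi * (LaurentPolynomial.T (cs.length v : ℤ) * TT.repr h v) else 0) := by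
  have hmem : h ∈ Submodule.span (LaurentPolynomial ℤ) (Set.range TT) := by
    rw [TT.span_eq]; trivial
  induction hmem using Submodule.span_induction with
  | zero => simp
  | add x y hx hy ihx ihy =>
    rw [add_mul, map_add, map_add, Finsupp.add_apply, Finsupp.add_apply, Finsupp.add_apply]
    split_ifs at ihx ihy ⊢ with hcond
    · ring_nf
      ring_nf at ihx ihy
      linear_combination ihx + ihy
    · ring_nf
      ring_nf at ihx ihy
      linear_combination ihx + ihy
  | smul a x hx ihx =>
    rw [smul_mul_assoc, map_smul, map_smul, Finsupp.smul_apply, Finsupp.smul_apply,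
      Finsupp.smul_apply, smul_eq_mul, smul_eq_mul, smul_eq_mul]
    split_ifs at ihx ⊢ with hcond
    · linear_combination a * ihx
    · linear_combination a * ihx
  | mem x hx =>
    obtain ⟨w, rfl⟩ := hx
    have hTTE : (TT w : H) = (LaurentPolynomial.T (cs.length w : ℤ) : LaurentPolynomial ℤ) • Ttilde cs TT w := by
      rw [Ttilde, smul_smul, ← LaurentPolynomial.T_add]
      simp
    rw [hTTE, smul_mul_assoc, map_smul, map_smul, Finsupp.smul_apply, Finsupp.smul_apply,
      Finsupp.smul_apply, smul_eq_mul, smul_eq_mul, smul_eq_mul]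
    have hmain :
        LaurentPolynomial.T (cs.length v : ℤ)
            * TT.repr (Ttilde cs TT w * Ttilde cs TT (cs.simple i)) v
          = LaurentPolynomial.T (cs.length (v * cs.simple i) : ℤ)
              * TT.repr (Ttilde cs TT w) (v * cs.simple i)
            + (if cs.length (v * cs.simple i) < cs.length v
                then heckeXi * (LaurentPolynomial.T (cs.length v : ℤ)
                  * TT.repr (Ttilde cs TT w) v) else 0) := by
      have hwsw : w * cs.simple i ≠ w := by
        intro hcontra
        exact cs.length_mul_simple_ne w i (congrArg cs.length hcontra)
      have hvsw : (v = w * cs.simple i) ↔ (v * cs.simple i = w) := by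
        constructor
        · rintro rfl; rw [cs.simple_mul_simple_cancel_right]
        · rintro rfl; rw [cs.simple_mul_simple_cancel_right]
      rw [Ttilde_mul_simple cs TT hT w i]
      rcases cs.length_mul_simple w i with hasc | hdesc
      · have hcond : cs.length (w * cs.simple i) = cs.length w + 1 := hasc
        rw [if_pos hcond]
        rw [repr_Ttilde, repr_Ttilde, repr_Ttilde]
        by_cases hv : v = w * cs.simple i
        · rw [if_pos hv, if_pos (hvsw.mp hv)]
          have hvw : v ≠ w := by
            rw [hv]; exact hwsw
          rw [if_neg hvw]
          subst hv
          rw [cs.simple_mul_simple_cancel_right, ← LaurentPolynomial.T_add,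
            ← LaurentPolynomial.T_add]
          rw [hasc]
          push_cast
          ring_nf
          simp
        · rw [if_neg hv, if_neg (fun hh => hv (hvsw.mpr hh)), mul_zero, mul_zero]
          by_cases hvw : v = w
          · rw [if_pos hvw]
            have : ¬ cs.length (v * cs.simple i) < cs.length v := by
              subst hvw; omega
            rw [if_neg this]
            simp
          · rw [if_neg hvw]
            simp
      · have hcond : ¬ cs.length (w * cs.simple i) = cs.length w + 1 := by omega
        rw [if_neg hcond]
        rw [map_add, Finsupp.add_apply, map_smul, Finsupp.smul_apply, smul_eq_mul]
        rw [repr_Ttilde, repr_Ttilde, repr_Ttilde]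
        by_cases hv : v = w * cs.simple i
        · subst hv
          have h1 : w * cs.simple i * cs.simple i = w :=
            cs.simple_mul_simple_cancel_right i
          have hnlt : ¬ cs.length (w * cs.simple i * cs.simple i)
              < cs.length (w * cs.simple i) := by rw [h1]; omega
          simp only [if_pos rfl, h1, if_neg hwsw, if_neg hnlt, mul_zero, add_zero]
          simp only [if_true, ite_self, add_zero]
          rw [← LaurentPolynomial.T_add, ← LaurentPolynomial.T_add]
          simp
        · by_cases hvw : v = w
          · subst hvw
            have hne2 : v * cs.simple i ≠ v := fun hh =>
              cs.length_mul_simple_ne v i (congrArg cs.length hh)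
            have hlt : cs.length (v * cs.simple i) < cs.length v := by omega
            have hne3 : ¬ v = v * cs.simple i := fun hh => hne2 hh.symm
            simp only [if_neg hne3, if_neg hne2, if_pos rfl, if_pos hlt, mul_zero,
              zero_add]
            ring
          · simp only [if_neg hv, if_neg (fun hh => hv (hvsw.mpr hh)), if_neg hvw,
              mul_zero, add_zero, zero_add]
            split_ifs <;> simp
    split_ifs at hmain ⊢ with hcond
    · linear_combination LaurentPolynomial.T (cs.length w : ℤ) * hmain
    · linear_combination LaurentPolynomial.T (cs.length w : ℤ) * hmain

theorem coeff_X_mul_nonneg {p : Polynomial ℤ} (hp : ∀ m, 0 ≤ p.coeff m) :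
    ∀ m, 0 ≤ (Polynomial.X * p).coeff m
  | 0 => by simp [Polynomial.mul_coeff_zero]
  | (m + 1) => by rw [Polynomial.coeff_X_mul]; exact hp m

/-- Structure constants have nonnegative-coefficient representations in `ξ`. -/
theorem heckeF_nonneg (hT : IsHeckeBasis cs TT) :
    ∀ (n : ℕ) (b : W), cs.length b ≤ n → ∀ (a v : W),
      ∃ p : Polynomial ℤ, (∀ m, 0 ≤ p.coeff m) ∧
        Polynomial.aeval heckeXi p
          = LaurentPolynomial.T (cs.length v : ℤ)
              * TT.repr (Ttilde cs TT a * Ttilde cs TT b) v := by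
  intro n
  induction n with
  | zero =>
    intro b hb a v
    have hb1 : b = 1 := cs.length_eq_zero_iff.mp (Nat.le_zero.mp hb)
    subst hb1
    rw [Ttilde_one cs TT hT, mul_one, repr_Ttilde]
    by_cases hv : v = a
    · refine ⟨1, by intro m; rw [Polynomial.coeff_one]; split_ifs <;> norm_num, ?_⟩
      rw [if_pos hv, map_one, hv, ← LaurentPolynomial.T_add]
      simp
    · exact ⟨0, by simp, by rw [if_neg hv, map_zero, mul_zero]⟩
  | succ n ih =>
    intro b hb a v
    by_cases hb1 : b = 1
    · exact ih b (by simp [hb1, cs.length_one]) a v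
    · obtain ⟨i, hi⟩ := cs.exists_rightDescent_of_ne_one hb1
      have hi' : cs.length (b * cs.simple i) < cs.length b := hi
      have hlen : cs.length (b * cs.simple i) + 1 = cs.length b := by
        rcases cs.length_mul_simple b i with h | h <;> omega
      have hEb : Ttilde cs TT (b * cs.simple i) * Ttilde cs TT (cs.simple i)
          = Ttilde cs TT b := by
        have h := Ttilde_mul cs TT hT (w := b * cs.simple i) (u := cs.simple i)
          (by rw [cs.simple_mul_simple_cancel_right, cs.length_simple]; omega)
        rwa [cs.simple_mul_simple_cancel_right] at h
      obtain ⟨p1, hp1n, hp1e⟩ := ih (b * cs.simple i) (by omega) a (v * cs.simple i)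
      obtain ⟨p2, hp2n, hp2e⟩ := ih (b * cs.simple i) (by omega) a v
      have hkey := repr_mul_simple cs TT hT
        (Ttilde cs TT a * Ttilde cs TT (b * cs.simple i)) v i
      rw [mul_assoc, hEb] at hkey
      by_cases hlt : cs.length (v * cs.simple i) < cs.length v
      · refine ⟨p1 + Polynomial.X * p2, ?_, ?_⟩
        · intro m
          rw [Polynomial.coeff_add]
          have := coeff_X_mul_nonneg hp2n m
          have := hp1n m
          linarith
        · rw [map_add, map_mul, Polynomial.aeval_X, hp1e, hp2e, hkey, if_pos hlt]
      · refine ⟨p1, hp1n, ?_⟩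
        rw [hp1e, hkey, if_neg hlt, add_zero]

/-- Base case: the top coefficient along a reduced `I`-word. -/
theorem coeff_base (hT : IsHeckeBasis cs TT) (I : Set B) (w0 : W)
    (hmem : w0 ∈ Subgroup.closure (cs.simple '' I))
    (hmax : ∀ u ∈ Subgroup.closure (cs.simple '' I), cs.length u ≤ cs.length w0) :
    ∀ L : List B, (∀ i ∈ L, i ∈ I) → cs.IsReduced L →
      ∃ p : Polynomial ℤ, (∀ m, 0 ≤ p.coeff m) ∧ 1 ≤ p.coeff L.length ∧
        Polynomial.aeval heckeXi p
          = LaurentPolynomial.T (cs.length w0 : ℤ)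
              * TT.repr (Ttilde cs TT w0 * Ttilde cs TT (cs.wordProd L)) w0 := by
  intro L
  induction L using List.reverseRecOn with
  | nil =>
    intro _ _
    refine ⟨1, by intro m; rw [Polynomial.coeff_one]; split_ifs <;> norm_num,
      by simp [Polynomial.coeff_one], ?_⟩
    rw [map_one, cs.wordProd_nil, Ttilde_one cs TT hT, mul_one, repr_Ttilde, if_pos rfl,
      ← LaurentPolynomial.T_add]
    simp
  | append_singleton L i ihL =>
    intro hI hred
    have hIL : ∀ j ∈ L, j ∈ I := fun j hj => hI j (List.mem_append_left _ hj)
    have hredL : cs.IsReduced L := by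
      have := hred.take L.length
      rwa [List.take_left] at this
    have hlenL : cs.length (cs.wordProd L) = L.length := hredL
    have hlenLi : cs.length (cs.wordProd (L ++ [i])) = L.length + 1 := by
      have := hred
      rw [CoxeterSystem.IsReduced, List.length_append] at this
      simpa using this
    have hprod : cs.wordProd (L ++ [i]) = cs.wordProd L * cs.simple i := by
      rw [cs.wordProd_append, cs.wordProd_singleton]
    have hmul : Ttilde cs TT (cs.wordProd L) * Ttilde cs TT (cs.simple i)
        = Ttilde cs TT (cs.wordProd (L ++ [i])) := by
      rw [hprod]
      exact Ttilde_mul cs TT hT (by rw [← hprod, hlenLi, hlenL, cs.length_simple])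
    obtain ⟨p1, hp1n, hp1c, hp1e⟩ := ihL hIL hredL
    have hiI : i ∈ I := hI i (List.mem_append_right _ (List.mem_singleton_self i))
    have hsmem : cs.simple i ∈ Subgroup.closure (cs.simple '' I) :=
      Subgroup.subset_closure ⟨i, hiI, rfl⟩
    have hw0s : cs.length (w0 * cs.simple i) < cs.length w0 := by
      have h1 : cs.length (w0 * cs.simple i) ≤ cs.length w0 :=
        hmax _ (mul_mem hmem hsmem)
      have h2 := cs.length_mul_simple_ne w0 i
      omega
    obtain ⟨p2, hp2n, hp2e⟩ := heckeF_nonneg cs TT hT (cs.length (cs.wordProd L))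
      (cs.wordProd L) le_rfl w0 (w0 * cs.simple i)
    have hkey := repr_mul_simple cs TT hT
      (Ttilde cs TT w0 * Ttilde cs TT (cs.wordProd L)) w0 i
    rw [mul_assoc, hmul, if_pos hw0s] at hkey
    refine ⟨p2 + Polynomial.X * p1, ?_, ?_, ?_⟩
    · intro m
      rw [Polynomial.coeff_add]
      have := coeff_X_mul_nonneg hp1n m
      have := hp2n m
      linarith
    · rw [List.length_append, List.length_singleton, Polynomial.coeff_add,
        Polynomial.coeff_X_mul]
      have := hp2n (L.length + 1)
      linarith
    · rw [map_add, map_mul, Polynomial.aeval_X, hp2e, hp1e, hkey]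

/-- Main induction: the top coefficient of `f_{x⁻¹, x, w₀}`. -/
theorem coeff_main (hT : IsHeckeBasis cs TT) (I : Set B) (w0 : W)
    (hmem : w0 ∈ Subgroup.closure (cs.simple '' I))
    (hmax : ∀ u ∈ Subgroup.closure (cs.simple '' I), cs.length u ≤ cs.length w0) :
    ∀ (n : ℕ) (x : W), cs.length x ≤ n →
      cs.length (x * w0) + cs.length w0 = cs.length x →
      ∃ p : Polynomial ℤ, (∀ m, 0 ≤ p.coeff m) ∧ 1 ≤ p.coeff (cs.length w0) ∧
        Polynomial.aeval heckeXi p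
          = LaurentPolynomial.T (cs.length w0 : ℤ)
              * TT.repr (Ttilde cs TT x⁻¹ * Ttilde cs TT x) w0 := by
  have base : ∀ x : W, x * w0 = 1 →
      ∃ p : Polynomial ℤ, (∀ m, 0 ≤ p.coeff m) ∧ 1 ≤ p.coeff (cs.length w0) ∧
        Polynomial.aeval heckeXi p
          = LaurentPolynomial.T (cs.length w0 : ℤ)
              * TT.repr (Ttilde cs TT x⁻¹ * Ttilde cs TT x) w0 := by
    intro x hx1
    have hxw : x = w0⁻¹ := eq_inv_of_mul_eq_one_left hx1
    subst hxw
    rw [inv_inv]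
    obtain ⟨K, hKI, hKred, hKprod⟩ :=
      exists_reduced_I_word_of_mem cs I (inv_mem hmem)
    obtain ⟨p, hpn, hpc, hpe⟩ := coeff_base cs TT hT I w0 hmem hmax K hKI hKred
    have hKlen : K.length = cs.length w0 := by
      have h1 : cs.length (cs.wordProd K) = K.length := hKred
      rw [hKprod, cs.length_inv] at h1
      omega
    rw [hKprod] at hpe
    exact ⟨p, hpn, by rwa [hKlen] at hpc, hpe⟩
  intro n
  induction n with
  | zero =>
    intro x hxlen hx
    have hx0 : cs.length x = 0 := Nat.le_zero.mp hxlen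
    have hxw0 : cs.length (x * w0) = 0 := by omega
    exact base x (cs.length_eq_zero_iff.mp hxw0)
  | succ n ih =>
    intro x hxlen hx
    by_cases hxw1 : x * w0 = 1
    · exact base x hxw1
    · obtain ⟨i, hi⟩ := cs.exists_leftDescent_of_ne_one hxw1
      have hi' : cs.length (cs.simple i * (x * w0)) < cs.length (x * w0) := hi
      have hA : cs.length (cs.simple i * (x * w0)) + 1 = cs.length (x * w0) := by
        rcases cs.length_simple_mul (x * w0) i with h | h <;> omega
      set x' := cs.simple i * x with hx'
      have hxx' : cs.simple i * x' = x := by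
        rw [hx', cs.simple_mul_simple_cancel_left]
      have hx'w0 : x' * w0 = cs.simple i * (x * w0) := by
        rw [hx', mul_assoc]
      have hx'lenle : cs.length x' ≤ cs.length x - 1 := by
        have h1 : cs.length x' ≤ cs.length (x' * w0) + cs.length w0⁻¹ := by
          have := cs.length_mul_le (x' * w0) w0⁻¹
          rwa [mul_assoc, mul_inv_cancel, mul_one] at this
        rw [cs.length_inv, hx'w0] at h1
        omega
      have hx'ge : cs.length x ≤ cs.length x' + 1 := by
        have := cs.length_simple_mul x i
        rcases this with h | h <;> rw [← hx'] at h <;> omega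
      have hx'len : cs.length x' + 1 = cs.length x := by omega
      have hx'cond : cs.length (x' * w0) + cs.length w0 = cs.length x' := by
        rw [hx'w0]
        omega
      obtain ⟨p1, hp1n, hp1c, hp1e⟩ := ih x' (by omega) hx'cond
      obtain ⟨p2, hp2n, hp2e⟩ := heckeF_nonneg cs TT hT (cs.length x') x' le_rfl x⁻¹ w0
      have hEx : Ttilde cs TT (cs.simple i) * Ttilde cs TT x' = Ttilde cs TT x := by
        have h := Ttilde_mul cs TT hT (w := cs.simple i) (u := x')
          (by rw [hxx', cs.length_simple]; omega)
        rwa [hxx'] at h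
      have hExi : Ttilde cs TT x'⁻¹ * Ttilde cs TT (cs.simple i) = Ttilde cs TT x⁻¹ := by
        have hinv : x'⁻¹ * cs.simple i = x⁻¹ := by
          rw [hx', mul_inv_rev, cs.inv_simple, mul_assoc, cs.simple_mul_simple_self,
            mul_one]
        have h := Ttilde_mul cs TT hT (w := x'⁻¹) (u := cs.simple i)
          (by rw [hinv, cs.length_inv, cs.length_inv, cs.length_simple]; omega)
        rwa [hinv] at h
      have hiden : Ttilde cs TT x⁻¹ * Ttilde cs TT x
          = Ttilde cs TT x'⁻¹ * Ttilde cs TT x'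
            + heckeXi • (Ttilde cs TT x⁻¹ * Ttilde cs TT x') := by
        calc Ttilde cs TT x⁻¹ * Ttilde cs TT x
            = (Ttilde cs TT x'⁻¹ * Ttilde cs TT (cs.simple i))
              * (Ttilde cs TT (cs.simple i) * Ttilde cs TT x') := by rw [hExi, hEx]
          _ = Ttilde cs TT x'⁻¹
              * (Ttilde cs TT (cs.simple i) * Ttilde cs TT (cs.simple i))
              * Ttilde cs TT x' := by
                simp only [mul_assoc]
          _ = Ttilde cs TT x'⁻¹ * ((1 : H) + heckeXi • Ttilde cs TT (cs.simple i))
              * Ttilde cs TT x' := by rw [Ttilde_simple_sq cs TT hT]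
          _ = Ttilde cs TT x'⁻¹ * Ttilde cs TT x'
              + heckeXi • (Ttilde cs TT x⁻¹ * Ttilde cs TT x') := by
                rw [mul_add, mul_one, add_mul, mul_smul_comm, smul_mul_assoc, hExi]
      refine ⟨p1 + Polynomial.X * p2, ?_, ?_, ?_⟩
      · intro m
        rw [Polynomial.coeff_add]
        have := coeff_X_mul_nonneg hp2n m
        have := hp1n m
        linarith
      · rw [Polynomial.coeff_add]
        have := coeff_X_mul_nonneg hp2n (cs.length w0)
        linarith
      · rw [map_add, map_mul, Polynomial.aeval_X, hp1e, hp2e, hiden, map_add, map_smul,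
          Finsupp.add_apply, Finsupp.smul_apply, smul_eq_mul]
        ring

end Hecke

section Injectivity

theorem xi_pow_coeff (k : ℕ) :
    (∀ n : ℤ, (k : ℤ) < n → (heckeXi ^ k).coeff n = 0) ∧ (heckeXi ^ k).coeff (k : ℤ) = 1 := by
  induction k with
  | zero =>
    constructor
    · intro n hn
      rw [pow_zero, ← LaurentPolynomial.T_zero, LaurentPolynomial.T_apply, if_neg (by omega)]
    · rw [pow_zero, ← LaurentPolynomial.T_zero, LaurentPolynomial.T_apply]
      norm_num
  | succ k ih =>
    have hmulT : ∀ (f : LaurentPolynomial ℤ) (m n : ℤ),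
        ((f * LaurentPolynomial.T m : LaurentPolynomial ℤ)).coeff n = f.coeff (n - m) := by
      intro f m n
      have hsingle : (LaurentPolynomial.T m : LaurentPolynomial ℤ)
          = AddMonoidAlgebra.single m 1 := rfl
      rw [hsingle, AddMonoidAlgebra.coeff_mul_single_apply, mul_one, sub_eq_add_neg]
    have hstep : ∀ n : ℤ,
        (heckeXi ^ (k + 1)).coeff n = (heckeXi ^ k).coeff (n - 1) - (heckeXi ^ k).coeff (n + 1) := by
      intro n
      rw [pow_succ]
      rw [show (heckeXi : LaurentPolynomial ℤ)
          = LaurentPolynomial.T 1 - LaurentPolynomial.T (-1) from rfl]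
      rw [mul_sub, AddMonoidAlgebra.coeff_sub, Finsupp.sub_apply, hmulT, hmulT, sub_neg_eq_add]
    constructor
    · intro n hn
      rw [hstep]
      rw [ih.1 (n - 1) (by omega), ih.1 (n + 1) (by omega), sub_zero]
    · rw [hstep]
      have h1 : ((k : ℤ) + 1) - 1 = (k : ℤ) := by ring
      have h2 : (((k : ℕ) + 1 : ℕ) : ℤ) = (k : ℤ) + 1 := by push_cast; ring
      rw [h2, h1, ih.2, ih.1 ((k : ℤ) + 1 + 1) (by omega), sub_zero]

theorem aeval_xi_ne_zero {p : Polynomial ℤ} (hp : p ≠ 0) :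
    Polynomial.aeval heckeXi p ≠ 0 := by
  intro h0
  rw [Polynomial.aeval_eq_sum_range] at h0
  have happ := congrArg (fun f : LaurentPolynomial ℤ => f.coeff (p.natDegree : ℤ)) h0
  rw [AddMonoidAlgebra.coeff_sum, Finset.sum_apply'] at happ
  rw [Finset.sum_range_succ] at happ
  have hzero : ∀ i ∈ Finset.range p.natDegree,
      (p.coeff i • heckeXi ^ i).coeff ((p.natDegree : ℤ)) = 0 := by
    intro i hi
    rw [AddMonoidAlgebra.coeff_smul, Finsupp.smul_apply, (xi_pow_coeff i).1 (p.natDegree : ℤ)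
      (by exact_mod_cast Finset.mem_range.mp hi), smul_zero]
  rw [Finset.sum_eq_zero hzero, zero_add, AddMonoidAlgebra.coeff_smul, Finsupp.smul_apply, (xi_pow_coeff p.natDegree).2,
    smul_eq_mul, mul_one] at happ
  exact Polynomial.leadingCoeff_ne_zero.mpr hp happ

theorem aeval_xi_inj {p q : Polynomial ℤ}
    (h : Polynomial.aeval heckeXi p = Polynomial.aeval heckeXi q) : p = q := by
  by_contra hne
  exact aeval_xi_ne_zero (sub_ne_zero.mpr hne) (by rw [map_sub, h, sub_self])

end Injectivity

end Stmt14Aux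

/-- Let `w₀` be the longest element of a finite standard parabolic subgroup
`P = W_I` of `W`, and assume that the degree of `f_{w,u,v}` as a polynomial in `ξ` is at most
`l(w₀)` for all `w, u, v ∈ W`.  Then for every `x ∈ W` with `l(x w₀) = l(x) - l(w₀)`, the
polynomial `f_{x⁻¹, x, w₀}` has degree exactly `l(w₀)` in `ξ`; in particular
`f_{x⁻¹, x, w₀} ≠ 0`. -/
theorem stmt_14 {B W H : Type*} [Group W] [Ring H] [Algebra (LaurentPolynomial ℤ) H]
    {M : CoxeterMatrix B} (cs : CoxeterSystem M W)
    (TT : Module.Basis W (LaurentPolynomial ℤ) H) (hT : IsHeckeBasis cs TT)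
    (I : Set B) (hfin : (Subgroup.closure (cs.simple '' I) : Set W).Finite)
    (w0 : W) (hmem : w0 ∈ Subgroup.closure (cs.simple '' I))
    (hmax : ∀ u ∈ Subgroup.closure (cs.simple '' I), cs.length u ≤ cs.length w0)
    (hbound : ∀ w u v : W, ∃ p : Polynomial ℤ, p.natDegree ≤ cs.length w0 ∧
      Polynomial.aeval heckeXi p = heckeF cs TT w u v)
    (x : W) (hx : cs.length (x * w0) + cs.length w0 = cs.length x) :
    (∃ p : Polynomial ℤ, p.degree = (cs.length w0 : WithBot ℕ) ∧
      Polynomial.aeval heckeXi p = heckeF cs TT x⁻¹ x w0) ∧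
    heckeF cs TT x⁻¹ x w0 ≠ 0 := by
  obtain ⟨q, hqn, hqc, hqe⟩ :=
    Stmt14Aux.coeff_main cs TT hT I w0 hmem hmax (cs.length x) x le_rfl hx
  have hqF : Polynomial.aeval heckeXi q = heckeF cs TT x⁻¹ x w0 := by
    rw [heckeF]; exact hqe
  obtain ⟨p, hpd, hpe⟩ := hbound x⁻¹ x w0
  have hpq : p = q := Stmt14Aux.aeval_xi_inj (by rw [hpe, hqF])
  subst hpq
  have hcoeffne : p.coeff (cs.length w0) ≠ 0 := by
    intro h0
    rw [h0] at hqc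
    omega
  constructor
  · refine ⟨p, ?_, hpe⟩
    apply _root_.le_antisymm
    · exact Polynomial.degree_le_natDegree.trans (by exact_mod_cast hpd)
    · exact Polynomial.le_degree_of_ne_zero hcoeffne
  · rw [← hqF]
    intro h0
    have hq0 : p = (0 : Polynomial ℤ) := Stmt14Aux.aeval_xi_inj (by rw [h0, map_zero])
    rw [hq0] at hcoeffne
    simp at hcoeffne
end
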